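/- arXiv:1105.2183 — 6 statements merged into one kernel-verified Lean document; each statement's English description precedes it below -/
import Mathlib

section
/- For all k ≥ 0, n ≥ 1 and r > 0, P(T_r > k·n) ≤ P(T_{2r} > n)^k. -/
open MeasureTheory ProbabilityTheory Set
open scoped ENNReal NNReal Topology

/-- The first exit time of the random walk with steps `X` from the closed ball of
radius `r` (valued in `ℕ∞`, equal to `⊤` if the walk never exits). -/
noncomputable def exitTime {Ω B : Type*} [NormedAddCommGroup B]
    (X : ℕ → Ω → B) (r : ℝ) (ω : Ω) : ℕ∞ :=
  sInf {n : ℕ∞ | ∃ m : ℕ, n = m ∧ r < ‖∑ k ∈ Finset.range m, X k ω‖}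

lemma exitTime_lt_iff {Ω B : Type*} [NormedAddCommGroup B]
    (X : ℕ → Ω → B) (r : ℝ) (m : ℕ) (ω : Ω) :
    (m : ℕ∞) < exitTime X r ω ↔
      ∀ j ≤ m, ‖∑ l ∈ Finset.range j, X l ω‖ ≤ r := by
  constructor
  · intro h j hj
    by_contra hc
    push_neg at hc
    have h1 : exitTime X r ω ≤ (j : ℕ∞) := csInf_le (OrderBot.bddBelow _) ⟨j, rfl, hc⟩
    exact absurd (lt_of_lt_of_le h (h1.trans (by exact_mod_cast hj))) (lt_irrefl _)
  · intro h
    have h1 : ((m + 1 : ℕ) : ℕ∞) ≤ exitTime X r ω := by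
      apply le_sInf
      rintro b ⟨j, rfl, hjr⟩
      have : m < j := by
        by_contra hc
        push_neg at hc
        exact absurd (h j hc) (not_le.mpr hjr)
      exact_mod_cast this
    exact lt_of_lt_of_le (by exact_mod_cast Nat.lt_succ_self m) h1

lemma mapTuple_eq_pi {Ω B : Type*} [MeasureSpace Ω] [IsProbabilityMeasure (ℙ : Measure Ω)]
    [MeasurableSpace B]
    (X : ℕ → Ω → B) (hmeas : ∀ i, Measurable (X i))
    (hindep : iIndepFun X ℙ)
    (hid : ∀ i, IdentDistrib (X i) (X 0) ℙ ℙ)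
    (m : ℕ) (f : Fin m → ℕ) (hf : Function.Injective f) :
    Measure.map (fun ω (i : Fin m) => X (f i) ω) ℙ
      = Measure.pi (fun _ : Fin m => Measure.map (X 0) ℙ) := by
  classical
  have hJ : Measurable (fun ω (i : Fin m) => X (f i) ω) :=
    measurable_pi_lambda _ fun i => hmeas _
  have : IsProbabilityMeasure (Measure.map (X 0) ℙ) :=
    Measure.isProbabilityMeasure_map (hmeas 0).aemeasurable
  refine (Measure.pi_eq fun s hs => ?_).symm
  rw [Measure.map_apply hJ (MeasurableSet.univ_pi hs)]
  set sets : ℕ → Set B := fun l => if h : ∃ i, f i = l then s h.choose else Set.univ with hsets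
  have hsets_meas : ∀ l, MeasurableSet (sets l) := by
    intro l
    rw [hsets]
    dsimp only
    split_ifs with h
    · exact hs _
    · exact MeasurableSet.univ
  have hsets_f : ∀ i, sets (f i) = s i := by
    intro i
    have h : ∃ i', f i' = f i := ⟨i, rfl⟩
    have h2 := hf h.choose_spec
    rw [hsets]
    dsimp only
    rw [dif_pos h, h2]
  have key := hindep.measure_inter_preimage_eq_mul (Finset.image f Finset.univ)
    (sets := sets) (fun l _ => hsets_meas l)
  have hL : (⋂ l ∈ Finset.image f Finset.univ, X l ⁻¹' sets l)
      = (fun ω (i : Fin m) => X (f i) ω) ⁻¹' Set.pi Set.univ s := by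
    ext ω
    simp only [Set.mem_iInter, Finset.mem_image, Finset.mem_univ, true_and,
      Set.mem_preimage, Set.mem_pi, Set.mem_univ, forall_true_left]
    constructor
    · intro h i
      have := h (f i) ⟨i, rfl⟩
      rwa [hsets_f] at this
    · rintro h l ⟨i, rfl⟩
      rw [hsets_f]; exact h i
  have hR : (∏ l ∈ Finset.image f Finset.univ, ℙ (X l ⁻¹' sets l))
      = ∏ i, (Measure.map (X 0) ℙ) (s i) := by
    rw [Finset.prod_image (fun a _ b _ h => hf h)]
    refine Finset.prod_congr rfl fun i _ => ?_
    rw [hsets_f, (hid (f i)).measure_mem_eq (hs i), Measure.map_apply (hmeas 0) (hs i)]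
  rw [hL, hR] at key
  exact key

lemma sum_ite_shift {B : Type*} [AddCommGroup B] (g : ℕ → B) (a j n : ℕ) (hj : j ≤ n) :
    (∑ l : Fin n, if (l : ℕ) < j then g (a + l) else 0)
      = ∑ l ∈ Finset.range (a + j), g l - ∑ l ∈ Finset.range a, g l := by
  rw [Fin.sum_univ_eq_sum_range (fun l => if l < j then g (a + l) else 0) n,
    ← Finset.sum_filter]
  have h1 : (Finset.range n).filter (· < j) = Finset.range j := by
    ext l
    simp only [Finset.mem_filter, Finset.mem_range]
    omega
  rw [h1]
  have h2 : ∑ l ∈ Finset.range j, g (a + l) = ∑ l ∈ Finset.Ico a (a + j), g l := by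
    rw [Finset.sum_Ico_eq_sum_range]
    simp
  rw [h2, Finset.sum_Ico_eq_sub _ (Nat.le_add_right a j)]

/-- `P(T_r > k n) ≤ P(T_{2r} > n)^k` for all `k ≥ 0`, `n ≥ 1`, `r > 0`. -/
theorem stmt5 {Ω : Type*} [MeasureSpace Ω] [IsProbabilityMeasure (ℙ : Measure Ω)]
    {B : Type*} [NormedAddCommGroup B] [NormedSpace ℝ B] [MeasurableSpace B] [BorelSpace B]
    [SecondCountableTopology B] [CompleteSpace B]
    (X : ℕ → Ω → B) (hmeas : ∀ i, Measurable (X i))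
    (hindep : iIndepFun X ℙ)
    (hid : ∀ i, IdentDistrib (X i) (X 0) ℙ ℙ)
    (r : ℝ) (hr : 0 < r) (k n : ℕ) (hn : 1 ≤ n) :
    ℙ {ω | ((k * n : ℕ) : ℕ∞) < exitTime X r ω}
      ≤ ℙ {ω | (n : ℕ∞) < exitTime X (2 * r) ω} ^ k := by
  classical
  set Dset : Set (Fin n → B) :=
    {v | ∀ j ≤ n, ‖∑ l : Fin n, if (l : ℕ) < j then v l else 0‖ ≤ 2 * r} with hDset
  have hDmeas : MeasurableSet Dset := by
    have hrw : Dset = ⋂ (j : ℕ), ⋂ (_ : j ≤ n),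
        (fun v : Fin n → B => ∑ l : Fin n, if (l : ℕ) < j then v l else 0) ⁻¹'
          {x : B | ‖x‖ ≤ 2 * r} := by
      ext v
      simp only [hDset, Set.mem_setOf_eq, Set.mem_iInter, Set.mem_preimage]
    rw [hrw]
    refine MeasurableSet.iInter fun j => MeasurableSet.iInter fun hj => ?_
    have hgm : Measurable (fun v : Fin n → B =>
        ∑ l : Fin n, if (l : ℕ) < j then v l else 0) := by
      apply Finset.measurable_sum
      intro l _
      by_cases h : (l : ℕ) < j
      · simp only [if_pos h]; exact measurable_pi_apply l
      · simp only [if_neg h]; exact measurable_const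
    exact hgm ((isClosed_le continuous_norm continuous_const).measurableSet)
  set E : ℕ → Set Ω := fun i => (fun ω (l : Fin n) => X (i * n + l) ω) ⁻¹' Dset with hE
  have hE_meas : ∀ i, MeasurableSet (E i) :=
    fun i => (measurable_pi_lambda _ fun l => hmeas _) hDmeas
  have tupEq : ∀ (m : ℕ) (f g : Fin m → ℕ), Function.Injective f → Function.Injective g →
      ∀ (D : Set (Fin m → B)), MeasurableSet D →
        ℙ ((fun ω i => X (f i) ω) ⁻¹' D) = ℙ ((fun ω i => X (g i) ω) ⁻¹' D) := by
    intro m f g hf hg D hD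
    rw [← Measure.map_apply (measurable_pi_lambda _ fun i => hmeas _) hD,
      ← Measure.map_apply (measurable_pi_lambda _ fun i => hmeas _) hD,
      mapTuple_eq_pi X hmeas hindep hid m f hf, mapTuple_eq_pi X hmeas hindep hid m g hg]
  have hinj : ∀ i : ℕ, Function.Injective (fun l : Fin n => i * n + (l : ℕ)) := by
    intro i a b h
    simp only at h
    exact Fin.ext (by omega)
  have hEi : ∀ i, ℙ (E i) = ℙ (E 0) := by
    intro i
    exact tupEq n (fun l => i * n + (l : ℕ)) (fun l => 0 * n + (l : ℕ))
      (hinj i) (hinj 0) Dset hDmeas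
  -- product formula
  have prodEq : ∀ K : ℕ, ℙ (⋂ i ∈ Finset.range K, E i) = ℙ (E 0) ^ K := by
    intro K
    induction K with
    | zero => simp
    | succ K ih =>
      have hsplit : (⋂ i ∈ Finset.range (K + 1), E i)
          = (⋂ i ∈ Finset.range K, E i) ∩ E K := by
        rw [Finset.range_add_one, Finset.set_biInter_insert, Set.inter_comm]
      rw [hsplit]
      set S : Finset ℕ := Finset.range (K * n) with hS
      set T : Finset ℕ := Finset.Ico (K * n) (K * n + n) with hT
      have hST : Disjoint S T := by
        rw [Finset.disjoint_left]
        intro a haS haT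
        rw [hS, Finset.mem_range] at haS
        rw [hT, Finset.mem_Ico] at haT
        omega
      have hIndep2 := hindep.indepFun_finset S T hST hmeas
      have hmemS : ∀ (i : ℕ), i ∈ Finset.range K → ∀ l : Fin n, i * n + (l : ℕ) ∈ S := by
        intro i hi l
        rw [Finset.mem_range] at hi
        rw [hS, Finset.mem_range]
        have h1 : i * n + (l : ℕ) < (i + 1) * n := by
          have := l.2; rw [add_mul, one_mul]; omega
        exact lt_of_lt_of_le h1 (Nat.mul_le_mul_right n hi)
      have hmemT : ∀ l : Fin n, K * n + (l : ℕ) ∈ T := by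
        intro l
        rw [hT, Finset.mem_Ico]
        have := l.2
        omega
      set C : Set ((i : S) → B) :=
        {u | ∀ i, ∀ hi : i ∈ Finset.range K,
          (fun l : Fin n => u ⟨i * n + (l : ℕ), hmemS i hi l⟩) ∈ Dset} with hC
      set A : Set ((i : T) → B) :=
        {u | (fun l : Fin n => u ⟨K * n + (l : ℕ), hmemT l⟩) ∈ Dset} with hA
      have hC_meas : MeasurableSet C := by
        have hrw : C = ⋂ (i : ℕ), ⋂ (hi : i ∈ Finset.range K),
            (fun (u : (i : S) → B) (l : Fin n) => u ⟨i * n + (l : ℕ), hmemS i hi l⟩) ⁻¹'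
              Dset := by
          ext u
          simp only [hC, Set.mem_setOf_eq, Set.mem_iInter, Set.mem_preimage]
        rw [hrw]
        exact MeasurableSet.iInter fun i => MeasurableSet.iInter fun hi =>
          (measurable_pi_lambda _ fun l => measurable_pi_apply _) hDmeas
      have hA_meas : MeasurableSet A :=
        (measurable_pi_lambda _ fun l => measurable_pi_apply _) hDmeas
      have hC_eq : (⋂ i ∈ Finset.range K, E i)
          = (fun a (i : S) => X (i : ℕ) a) ⁻¹' C := by
        ext ω
        simp only [Set.mem_iInter, Set.mem_preimage, hC, Set.mem_setOf_eq, hE]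
      have hA_eq : E K = (fun a (i : T) => X (i : ℕ) a) ⁻¹' A := by
        ext ω
        simp only [Set.mem_preimage, hA, Set.mem_setOf_eq, hE]
      have hmul := (indepFun_iff_measure_inter_preimage_eq_mul.mp hIndep2) C A hC_meas hA_meas
      rw [hC_eq, hA_eq, hmul, ← hC_eq, ← hA_eq, ih, hEi K, pow_succ]
  -- inclusion
  have hsub : {ω | ((k * n : ℕ) : ℕ∞) < exitTime X r ω} ⊆ ⋂ i ∈ Finset.range k, E i := by
    intro ω hω
    rw [Set.mem_setOf_eq, exitTime_lt_iff] at hω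
    simp only [Set.mem_iInter]
    intro i hi
    rw [Finset.mem_range] at hi
    simp only [hE, Set.mem_preimage, hDset, Set.mem_setOf_eq]
    intro j hj
    rw [sum_ite_shift (fun l => X l ω) (i * n) j n hj]
    have hb1 : i * n + j ≤ k * n := by
      have h1 : i * n + j ≤ (i + 1) * n := by rw [add_mul, one_mul]; omega
      exact h1.trans (Nat.mul_le_mul_right n hi)
    have hb2 : i * n ≤ k * n := Nat.mul_le_mul_right n hi.le
    have h1 := hω _ hb1
    have h2 := hω _ hb2
    calc ‖∑ l ∈ Finset.range (i * n + j), X l ω - ∑ l ∈ Finset.range (i * n), X l ω‖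
        ≤ ‖∑ l ∈ Finset.range (i * n + j), X l ω‖ + ‖∑ l ∈ Finset.range (i * n), X l ω‖ :=
          norm_sub_le _ _
      _ ≤ 2 * r := by linarith
  -- identification of E 0
  have hE0 : E 0 = {ω | (n : ℕ∞) < exitTime X (2 * r) ω} := by
    ext ω
    simp only [hE, Set.mem_preimage, hDset, Set.mem_setOf_eq, exitTime_lt_iff]
    constructor
    · intro h j hj
      have := h j hj
      rw [sum_ite_shift (fun l => X l ω) (0 * n) j n hj] at this
      simpa using this
    · intro h j hj
      rw [sum_ite_shift (fun l => X l ω) (0 * n) j n hj]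
      simpa using h j hj
  calc ℙ {ω | ((k * n : ℕ) : ℕ∞) < exitTime X r ω}
      ≤ ℙ (⋂ i ∈ Finset.range k, E i) := measure_mono hsub
    _ = ℙ (E 0) ^ k := prodEq k
    _ = ℙ {ω | (n : ℕ∞) < exitTime X (2 * r) ω} ^ k := by rw [hE0]
end

section
/- For any B-valued random variable X with E‖X‖² < ∞ and S_n the sum of n i.i.d. copies of X, Var(‖S_n‖) ≤ 4 n E‖X‖². -/
open MeasureTheory ProbabilityTheory Set
open scoped ENNReal NNReal Topology

set_option linter.unusedSectionVars false


section aux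
variable {B : Type*} [NormedAddCommGroup B] [NormedSpace ℝ B] [MeasurableSpace B] [BorelSpace B]
  [SecondCountableTopology B]


/-- coordinatewise-Lipschitz functions are continuous -/
lemma cont_of_lip {n : ℕ} (f : (Fin n → B) → ℝ)
    (hf : ∀ x y, |f x - f y| ≤ ∑ i, ‖x i - y i‖) : Continuous f := by
  have : LipschitzWith n f := by
    apply LipschitzWith.of_dist_le_mul
    intro x y
    rw [Real.dist_eq]
    refine (hf x y).trans ?_
    have : ∀ i : Fin n, ‖x i - y i‖ ≤ dist x y := fun i => by
      rw [← dist_eq_norm]; exact dist_le_pi_dist x y i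
    calc ∑ i, ‖x i - y i‖ ≤ ∑ _i : Fin n, dist x y := Finset.sum_le_sum fun i _ => this i
      _ = n * dist x y := by simp [Finset.sum_const, nsmul_eq_mul]
  simpa using this.continuous

lemma mp_eval {n : ℕ} (μ : Measure B) [IsProbabilityMeasure μ] (i : Fin n) :
    MeasurePreserving (Function.eval i) (Measure.pi fun _ : Fin n => μ) μ := by
  refine ⟨measurable_pi_apply i, ?_⟩
  ext s hs
  rw [Measure.map_apply (measurable_pi_apply i) hs]
  have hpre : Function.eval i ⁻¹' s
      = Set.pi Set.univ (Function.update (fun _ : Fin n => (Set.univ : Set B)) i s) := by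
    ext x
    simp only [Set.mem_preimage, Set.mem_pi, Set.mem_univ, true_implies, Function.update_apply]
    constructor
    · intro hx j
      by_cases h : j = i
      · subst h; simp [hx]
      · simp [h]
    · intro hx
      have := hx i
      simpa using this
  rw [hpre, Measure.pi_pi]
  rw [Fintype.prod_eq_single i (fun j hj => by simp [Function.update_apply, hj])]
  simp


lemma memL2_base (μ : Measure B) [IsProbabilityMeasure μ]
    (hμ : MemLp (fun b : B => ‖b‖) 2 μ) (h : B → ℝ)
    (hh : ∀ a b, |h a - h b| ≤ ‖a - b‖) : MemLp h 2 μ := by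
  have hc : Continuous h := by
    have : LipschitzWith 1 h := by
      apply LipschitzWith.of_dist_le_mul
      intro a b
      rw [Real.dist_eq, dist_eq_norm]
      simpa using hh a b
    exact this.continuous
  refine MemLp.of_le ((memLp_const (|h 0|)).add hμ) hc.aestronglyMeasurable ?_
  filter_upwards with b
  have h1 : |h b| ≤ |h 0| + ‖b‖ := by
    have := hh b 0
    simp only [sub_zero] at this
    calc |h b| ≤ |h b - h 0| + |h 0| := by
          simpa using abs_add_le (h b - h 0) (h 0)
      _ ≤ ‖b‖ + |h 0| := by linarith
      _ = |h 0| + ‖b‖ := by ring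
  have h2 : (0:ℝ) ≤ |h 0| + ‖b‖ := by positivity
  simpa [Real.norm_eq_abs, abs_of_nonneg h2] using h1

lemma memL2_pi {n : ℕ} (μ : Measure B) [IsProbabilityMeasure μ]
    (hμ : MemLp (fun b : B => ‖b‖) 2 μ) (f : (Fin n → B) → ℝ)
    (hf : ∀ x y, |f x - f y| ≤ ∑ i, ‖x i - y i‖) :
    MemLp f 2 (Measure.pi fun _ : Fin n => μ) := by
  have hc : Continuous f := cont_of_lip f hf
  have hcoord : ∀ i : Fin n,
      MemLp (fun x : Fin n → B => ‖x i‖) 2 (Measure.pi fun _ : Fin n => μ) :=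
    fun i => hμ.comp_measurePreserving (mp_eval μ i)
  have hsum : MemLp (fun x : Fin n → B => |f 0| + ∑ i, ‖x i‖) 2
      (Measure.pi fun _ : Fin n => μ) := by
    have := memLp_finset_sum' (μ := Measure.pi fun _ : Fin n => μ) (p := 2) Finset.univ
      (f := fun (i : Fin n) (x : Fin n → B) => ‖x i‖) (fun i _ => hcoord i)
    have e : (∑ i : Fin n, fun y : Fin n → B => ‖y i‖) = fun y : Fin n → B => ∑ i, ‖y i‖ := by
      funext y; simp
    rw [e] at this
    exact (memLp_const (|f 0|)).add this
  refine MemLp.of_le hsum hc.aestronglyMeasurable ?_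
  filter_upwards with x
  have h1 : |f x| ≤ |f 0| + ∑ i, ‖x i‖ := by
    have := hf x 0
    simp only [Pi.zero_apply, sub_zero] at this
    calc |f x| ≤ |f x - f 0| + |f 0| := by simpa using abs_add_le (f x - f 0) (f 0)
      _ ≤ (∑ i, ‖x i‖) + |f 0| := by linarith
      _ = |f 0| + ∑ i, ‖x i‖ := by ring
  have h2 : (0:ℝ) ≤ |f 0| + ∑ i, ‖x i‖ := by positivity
  simpa [Real.norm_eq_abs, abs_of_nonneg h2] using h1

lemma var_le_c {α : Type*} [MeasurableSpace α] (μ : Measure α) [IsProbabilityMeasure μ]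
    (h : α → ℝ) (hh : MemLp h 2 μ) (c : ℝ) :
    ∫ a, h a ^ 2 ∂μ - (∫ a, h a ∂μ) ^ 2 ≤ ∫ a, (h a - c) ^ 2 ∂μ := by
  have hint : Integrable h μ := hh.integrable one_le_two
  have hsq : Integrable (fun a => h a ^ 2) μ := hh.integrable_sq
  have hexp : ∫ a, (h a - c) ^ 2 ∂μ
      = ∫ a, h a ^ 2 ∂μ - 2 * c * ∫ a, h a ∂μ + c ^ 2 := by
    have e1 : ∀ a, (h a - c) ^ 2 = h a ^ 2 - 2 * c * h a + c ^ 2 := fun a => by ring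
    simp_rw [e1]
    have hsub : Integrable (fun a => h a ^ 2 - 2 * c * h a) μ := hsq.sub (hint.const_mul (2 * c))
    rw [integral_add hsub (integrable_const _),
      integral_sub hsq (hint.const_mul (2 * c)), integral_const_mul, integral_const]
    simp
  rw [hexp]
  nlinarith [sq_nonneg ((∫ a, h a ∂μ) - c)]


lemma key (μ : Measure B) [IsProbabilityMeasure μ]
    (hμ : MemLp (fun b : B => ‖b‖) 2 μ) :
    ∀ (n : ℕ) (f : (Fin n → B) → ℝ),
      (∀ x y, |f x - f y| ≤ ∑ i, ‖x i - y i‖) →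
      ∫ x, f x ^ 2 ∂(Measure.pi fun _ : Fin n => μ)
          - (∫ x, f x ∂(Measure.pi fun _ : Fin n => μ)) ^ 2
        ≤ n * ∫ b, ‖b‖ ^ 2 ∂μ := by
  intro n
  induction n with
  | zero =>
    intro f hf
    have hconst : ∀ x : Fin 0 → B, f x = f (fun i => i.elim0) := fun x => by
      congr 1; funext i; exact i.elim0
    simp_rw [hconst, integral_const]
    simp
  | succ n ih =>
    intro f hf
    set ν : Measure (Fin n → B) := Measure.pi fun _ : Fin n => μ with hν
    set ν' : Measure (Fin (n+1) → B) := Measure.pi fun _ : Fin (n+1) => μ with hν'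
    set e := MeasurableEquiv.piFinSuccAbove (fun _ : Fin (n+1) => B) 0 with he
    have hpm : MeasurePreserving e ν' (μ.prod ν) :=
      measurePreserving_piFinSuccAbove (fun _ : Fin (n+1) => μ) 0
    set F : B × (Fin n → B) → ℝ := fun p => f (Fin.cons p.1 p.2) with hF
    have hsymm : ∀ p : B × (Fin n → B), e.symm p = Fin.cons p.1 p.2 := by
      intro p
      simp [he, MeasurableEquiv.piFinSuccAbove_symm_apply, Fin.insertNthEquiv,
        Fin.insertNth_zero]
    have heF : ∀ x, F (e x) = f x := by
      intro x
      show f (Fin.cons (e x).1 (e x).2) = f x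
      rw [← hsymm (e x), MeasurableEquiv.symm_apply_apply]
    -- Lipschitz in the first coordinate
    have hlipb : ∀ (x : Fin n → B) (a b : B), |F (a, x) - F (b, x)| ≤ ‖a - b‖ := by
      intro x a b
      have h := hf (Fin.cons a x) (Fin.cons b x)
      rw [Fin.sum_univ_succ] at h
      simpa [Fin.cons_zero, Fin.cons_succ] using h
    have hxL2 : ∀ x : Fin n → B, MemLp (fun b => F (b, x)) 2 μ :=
      fun x => memL2_base μ hμ _ (hlipb x)
    have hxint : ∀ x : Fin n → B, Integrable (fun b => F (b, x)) μ :=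
      fun x => (hxL2 x).integrable one_le_two
    set g : (Fin n → B) → ℝ := fun x => ∫ b, F (b, x) ∂μ with hg
    have hglip : ∀ x y, |g x - g y| ≤ ∑ i, ‖x i - y i‖ := by
      intro x y
      have hsub : ∀ b, |F (b, x) - F (b, y)| ≤ ∑ i, ‖x i - y i‖ := by
        intro b
        have h := hf (Fin.cons b x) (Fin.cons b y)
        rw [Fin.sum_univ_succ] at h
        simpa [Fin.cons_zero, Fin.cons_succ] using h
      calc |g x - g y| = |∫ b, (F (b, x) - F (b, y)) ∂μ| := by
            rw [hg]; rw [integral_sub (hxint x) (hxint y)]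
        _ ≤ ∫ b, |F (b, x) - F (b, y)| ∂μ := by
            simpa [Real.norm_eq_abs] using
              norm_integral_le_integral_norm (fun b => F (b, x) - F (b, y))
        _ ≤ ∫ _b, (∑ i, ‖x i - y i‖) ∂μ :=
            integral_mono ((hxint x).sub (hxint y)).abs (integrable_const _) hsub
        _ = ∑ i, ‖x i - y i‖ := by simp
    -- MemLp facts
    have hfL2 : MemLp f 2 ν' := memL2_pi μ hμ f hf
    have hFL2 : MemLp F 2 (μ.prod ν) := by
      have h1 := hfL2.comp_measurePreserving (MeasurePreserving.symm e hpm)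
      have h2 : (f ∘ e.symm) = F := by funext p; simp [Function.comp, hsymm p, hF]
      rwa [h2] at h1
    have hgL2 : MemLp g 2 ν := memL2_pi μ hμ g hglip
    have hFint : Integrable F (μ.prod ν) := hFL2.integrable one_le_two
    have hFsq : Integrable (fun p => F p ^ 2) (μ.prod ν) := hFL2.integrable_sq
    -- transfer of integrals
    have hI1 : ∫ x, f x ^ 2 ∂ν' = ∫ p, F p ^ 2 ∂(μ.prod ν) := by
      have h := hpm.integral_comp e.measurableEmbedding (fun p => F p ^ 2)
      simp_rw [heF] at h
      exact h
    have hI2 : ∫ x, f x ∂ν' = ∫ p, F p ∂(μ.prod ν) := by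
      have h := hpm.integral_comp e.measurableEmbedding F
      simp_rw [heF] at h
      exact h
    have hJ1 : ∫ p, F p ^ 2 ∂(μ.prod ν) = ∫ x, (∫ b, F (b, x) ^ 2 ∂μ) ∂ν :=
      integral_prod_symm _ hFsq
    have hJ2 : ∫ p, F p ∂(μ.prod ν) = ∫ x, g x ∂ν := integral_prod_symm F hFint
    have hIx : Integrable (fun x => ∫ b, F (b, x) ^ 2 ∂μ) ν := hFsq.integral_prod_right
    have hgsq : Integrable (fun x => g x ^ 2) ν := hgL2.integrable_sq
    -- pointwise conditional variance bound
    have hpt : ∀ x : Fin n → B, (∫ b, F (b, x) ^ 2 ∂μ) - g x ^ 2 ≤ ∫ b, ‖b‖ ^ 2 ∂μ := by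
      intro x
      refine (var_le_c μ (fun b => F (b, x)) (hxL2 x) (F (0, x))).trans ?_
      have hsubL2 : MemLp (fun b => F (b, x) - F (0, x)) 2 μ :=
        (hxL2 x).sub (memLp_const _)
      refine integral_mono hsubL2.integrable_sq hμ.integrable_sq ?_
      intro b
      have h2 := hlipb x b 0
      simp only [sub_zero] at h2
      calc (F (b, x) - F (0, x)) ^ 2 = |F (b, x) - F (0, x)| ^ 2 := (sq_abs _).symm
        _ ≤ ‖b‖ ^ 2 := by
            have := pow_le_pow_left₀ (abs_nonneg (F (b, x) - F (0, x))) h2 2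
            simpa using this
    have hfirst : ∫ x, (∫ b, F (b, x) ^ 2 ∂μ) ∂ν - ∫ x, g x ^ 2 ∂ν ≤ ∫ b, ‖b‖ ^ 2 ∂μ := by
      rw [← integral_sub hIx hgsq]
      calc ∫ x, ((∫ b, F (b, x) ^ 2 ∂μ) - g x ^ 2) ∂ν
          ≤ ∫ _x, (∫ b, ‖b‖ ^ 2 ∂μ) ∂ν :=
            integral_mono (hIx.sub hgsq) (integrable_const _) hpt
        _ = ∫ b, ‖b‖ ^ 2 ∂μ := by simp
    have hsecond : ∫ x, g x ^ 2 ∂ν - (∫ x, g x ∂ν) ^ 2 ≤ n * ∫ b, ‖b‖ ^ 2 ∂μ := ih g hglip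
    rw [hI1, hI2, hJ1, hJ2]
    push_cast
    linarith

end aux

/-- de Acosta's inequality: for i.i.d. `B`-valued `X` with
`E‖X‖² < ∞` and `Sₙ` the sum of `n` i.i.d. copies, `Var(‖Sₙ‖) ≤ 4 n E‖X‖²`. -/
theorem stmt8 {Ω : Type*} [MeasureSpace Ω] [IsProbabilityMeasure (ℙ : Measure Ω)]
    {B : Type*} [NormedAddCommGroup B] [NormedSpace ℝ B] [MeasurableSpace B] [BorelSpace B]
    [SecondCountableTopology B] [CompleteSpace B]
    (X : ℕ → Ω → B) (hmeas : ∀ i, Measurable (X i))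
    (hindep : iIndepFun X ℙ)
    (hid : ∀ i, IdentDistrib (X i) (X 0) ℙ ℙ)
    (hL2 : MemLp (X 0) 2 ℙ) (n : ℕ) :
    variance (fun ω => ‖∑ k ∈ Finset.range n, X k ω‖) ℙ
      ≤ 4 * n * ∫ ω, ‖X 0 ω‖ ^ 2 := by
  classical
  set μ : Measure B := Measure.map (X 0) ℙ with hμdef
  haveI : IsProbabilityMeasure μ := Measure.isProbabilityMeasure_map (hmeas 0).aemeasurable
  have hμnorm : MemLp (fun b : B => ‖b‖) 2 μ := by
    rw [hμdef, memLp_map_measure_iff measurable_norm.aestronglyMeasurable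
      (hmeas 0).aemeasurable]
    exact hL2.norm
  have hE2 : ∫ b, ‖b‖ ^ 2 ∂μ = ∫ ω, ‖X 0 ω‖ ^ 2 := by
    rw [hμdef, integral_map (hmeas 0).aemeasurable
      (measurable_norm.pow_const 2).aestronglyMeasurable]
  have hE2nn : 0 ≤ ∫ ω, ‖X 0 ω‖ ^ 2 := integral_nonneg fun ω => sq_nonneg _
  set T : Ω → (Fin n → B) := fun ω i => X i ω with hT
  have hTm : Measurable T := measurable_pi_iff.mpr fun i => hmeas i
  have hmap : Measure.map T ℙ = Measure.pi (fun _ : Fin n => μ) := by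
    refine (Measure.pi_eq fun s hs => ?_).symm
    rw [Measure.map_apply hTm (MeasurableSet.univ_pi hs)]
    set sets : ℕ → Set B := fun k => if h : k < n then s ⟨k, h⟩ else Set.univ with hsets
    have hsm : ∀ k ∈ Finset.range n, MeasurableSet (sets k) := by
      intro k hk
      rw [Finset.mem_range] at hk
      simp only [hsets, dif_pos hk]
      exact hs _
    have hpre : T ⁻¹' Set.pi Set.univ s = ⋂ k ∈ Finset.range n, X k ⁻¹' sets k := by
      ext ω
      simp only [Set.mem_preimage, Set.mem_pi, Set.mem_univ, true_implies, Set.mem_iInter,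
        Finset.mem_range]
      constructor
      · intro h k hk
        simp only [hsets, dif_pos hk]
        exact h ⟨k, hk⟩
      · intro h i
        have := h i i.isLt
        simpa only [hsets, dif_pos i.isLt] using this
    rw [hpre, hindep.measure_inter_preimage_eq_mul (Finset.range n) hsm]
    rw [← Fin.prod_univ_eq_prod_range (fun k => ℙ (X k ⁻¹' sets k)) n]
    refine Finset.prod_congr rfl fun i _ => ?_
    have h1 : sets ↑i = s i := by
      simp only [hsets, dif_pos i.isLt]
    rw [h1, hμdef, ← (hid i).map_eq, Measure.map_apply (hmeas i) (hs i)]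
  set f : (Fin n → B) → ℝ := fun x => ‖∑ i, x i‖ with hf
  have hfH : ∀ x y : Fin n → B, |f x - f y| ≤ ∑ i, ‖x i - y i‖ := by
    intro x y
    calc |‖∑ i, x i‖ - ‖∑ i, y i‖| ≤ ‖(∑ i, x i) - ∑ i, y i‖ := abs_norm_sub_norm_le _ _
      _ = ‖∑ i, (x i - y i)‖ := by rw [Finset.sum_sub_distrib]
      _ ≤ ∑ i, ‖x i - y i‖ := norm_sum_le _ _
  have hcomp : (fun ω => ‖∑ k ∈ Finset.range n, X k ω‖) = f ∘ T := by
    funext ω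
    simp only [hf, Function.comp, hT]
    rw [Fin.sum_univ_eq_sum_range (fun k => X k ω) n]
  have hfL2 : MemLp f 2 (Measure.pi fun _ : Fin n => μ) := memL2_pi μ hμnorm f hfH
  have hfcont : Continuous f := cont_of_lip f hfH
  have hZL2 : MemLp (fun ω => ‖∑ k ∈ Finset.range n, X k ω‖) 2 ℙ := by
    rw [hcomp, ← memLp_map_measure_iff hfcont.aestronglyMeasurable hTm.aemeasurable, hmap]
    exact hfL2
  have hm1 : ∫ ω, f (T ω) = ∫ x, f x ∂(Measure.pi fun _ : Fin n => μ) := by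
    rw [← hmap, integral_map hTm.aemeasurable hfcont.aestronglyMeasurable]
  have hm2 : ∫ ω, f (T ω) ^ 2 = ∫ x, f x ^ 2 ∂(Measure.pi fun _ : Fin n => μ) := by
    rw [← hmap, integral_map (f := fun x => f x ^ 2) hTm.aemeasurable
      ((hfcont.pow 2).aestronglyMeasurable)]
  have hvar : variance (fun ω => ‖∑ k ∈ Finset.range n, X k ω‖) ℙ
      = ∫ x, f x ^ 2 ∂(Measure.pi fun _ : Fin n => μ)
        - (∫ x, f x ∂(Measure.pi fun _ : Fin n => μ)) ^ 2 := by
    rw [variance_eq_sub hZL2, hcomp]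
    simp only [Pi.pow_apply, Function.comp_apply, Function.comp_def]
    rw [hm1, hm2]
  rw [hvar]
  have hkey := key μ hμnorm n f hfH
  rw [hE2] at hkey
  refine hkey.trans ?_
  have hn : (0:ℝ) ≤ (n:ℝ) := Nat.cast_nonneg n
  nlinarith
end

section
/- For an i.i.d. random walk in a separable Banach space, the first exit time from the ball of radius r equals the first exit time of the walk built from the steps radially truncated at 3r: T_r = T̂_r almost surely, where T̂_r = min{n : ‖Ŝ_n‖ > r} and Ŝ_n is the sum of the truncated steps X̂_k. -/
open MeasureTheory ProbabilityTheory Set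
open scoped ENNReal NNReal Topology

private lemma sInf_aux {P : ℕ → Prop} {N : ℕ} (hN : P N) (hmin : ∀ j, P j → N ≤ j) :
    sInf {n : ℕ∞ | ∃ m : ℕ, n = m ∧ P m} = (N : ℕ∞) := by
  apply le_antisymm
  · exact sInf_le ⟨N, rfl, hN⟩
  · refine le_sInf ?_
    rintro x ⟨m, rfl, hm⟩
    exact_mod_cast hmin m hm

/-- the exit time of the walk from the ball of radius `r` coincides
almost surely with the exit time of the walk whose steps are radially truncated
at level `3r`. -/
theorem stmt13 {Ω : Type*} [MeasureSpace Ω] [IsProbabilityMeasure (ℙ : Measure Ω)]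
    {B : Type*} [NormedAddCommGroup B] [NormedSpace ℝ B] [MeasurableSpace B] [BorelSpace B]
    [SecondCountableTopology B] [CompleteSpace B]
    (X : ℕ → Ω → B) (hmeas : ∀ i, Measurable (X i))
    (hindep : iIndepFun X ℙ)
    (hid : ∀ i, IdentDistrib (X i) (X 0) ℙ ℙ)
    (r : ℝ) (hr : 0 < r)
    (Xhat : ℕ → Ω → B)
    (hXhat : ∀ k ω, Xhat k ω =
      if ‖X k ω‖ ≤ 3 * r then X k ω else (3 * r / ‖X k ω‖) • X k ω) :
    ∀ᵐ ω ∂ℙ, exitTime X r ω = exitTime Xhat r ω := by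
  filter_upwards with ω
  set S : ℕ → B := fun n => ∑ k ∈ Finset.range n, X k ω with hSdef
  set T : ℕ → B := fun n => ∑ k ∈ Finset.range n, Xhat k ω with hTdef
  have hSsucc : ∀ n, S (n + 1) = S n + X n ω := fun n => Finset.sum_range_succ _ n
  have hTsucc : ∀ n, T (n + 1) = T n + Xhat n ω := fun n => Finset.sum_range_succ _ n
  have h3r : (0:ℝ) < 3 * r := by linarith
  -- norm of the truncated big step
  have hbig : ∀ k, ¬ ‖X k ω‖ ≤ 3 * r → ‖Xhat k ω‖ = 3 * r := by
    intro k hk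
    have hx : (0:ℝ) < ‖X k ω‖ := lt_trans h3r (lt_of_not_ge hk)
    rw [hXhat, if_neg hk, norm_smul, Real.norm_eq_abs, abs_of_pos (div_pos h3r hx),
      div_mul_cancel₀ _ (ne_of_gt hx)]
  -- key induction: while the original walk stays in the ball, the walks coincide
  have key : ∀ m, (∀ j, j ≤ m → ‖S j‖ ≤ r) → ∀ j, j ≤ m → T j = S j := by
    intro m
    induction m with
    | zero =>
      intro _ j hj
      interval_cases j
      simp [hSdef, hTdef]
    | succ m ih =>
      intro h j hj
      have ih' := ih (fun j hj => h j (hj.trans (Nat.le_succ m)))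
      rcases Nat.lt_succ_iff_lt_or_eq.mp (Nat.lt_succ_of_le hj) with hj' | rfl
      · exact ih' j (Nat.lt_succ_iff.mp hj')
      · rw [hTsucc, hSsucc, ih' m le_rfl]
        by_cases hk : ‖X m ω‖ ≤ 3 * r
        · rw [hXhat, if_pos hk]
        · exfalso
          have h1 : ‖S m‖ ≤ r := h m (Nat.le_succ m)
          have h2 : ‖S (m + 1)‖ ≤ r := h (m + 1) le_rfl
          have h3 : ‖X m ω‖ ≤ ‖S (m+1)‖ + ‖S m‖ := by
            calc ‖X m ω‖ = ‖S (m+1) - S m‖ := by rw [hSsucc, add_sub_cancel_left]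
            _ ≤ ‖S (m+1)‖ + ‖S m‖ := norm_sub_le _ _
          push_neg at hk
          linarith
  by_cases hex : ∃ n, r < ‖S n‖
  · -- both exit at time N
    classical
    set N := Nat.find hex with hN
    have hNex : r < ‖S N‖ := Nat.find_spec hex
    have hNmin : ∀ j, j < N → ‖S j‖ ≤ r := fun j hj =>
      le_of_not_gt (Nat.find_min hex hj)
    have hN0 : N ≠ 0 := by
      intro h0
      rw [h0] at hNex
      simp [hSdef] at hNex
      linarith
    obtain ⟨M, hNM⟩ := Nat.exists_eq_succ_of_ne_zero hN0
    rw [hNM] at hNex hNmin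
    have heqS : ∀ j, j ≤ M → T j = S j :=
      key M (fun j hj => hNmin j (Nat.lt_succ_of_le hj))
    have hTex : r < ‖T (M + 1)‖ := by
      rw [hTsucc, heqS M le_rfl]
      by_cases hk : ‖X M ω‖ ≤ 3 * r
      · rw [hXhat, if_pos hk, ← hSsucc]; exact hNex
      · have h1 : ‖S M‖ ≤ r := hNmin M (Nat.lt_succ_self M)
        have h2 : ‖Xhat M ω‖ = 3 * r := hbig M hk
        have h3 : ‖Xhat M ω‖ ≤ ‖S M + Xhat M ω‖ + ‖S M‖ := by
          calc ‖Xhat M ω‖ = ‖(S M + Xhat M ω) - S M‖ := by rw [add_sub_cancel_left]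
          _ ≤ ‖S M + Xhat M ω‖ + ‖S M‖ := norm_sub_le _ _
        linarith
    have hTmin : ∀ j, r < ‖T j‖ → M + 1 ≤ j := by
      intro j hj
      by_contra hjc
      push_neg at hjc
      rw [heqS j (Nat.lt_succ_iff.mp hjc)] at hj
      exact absurd (hNmin j hjc) (not_le.mpr hj)
    have hSmin : ∀ j, r < ‖S j‖ → M + 1 ≤ j := fun j hj =>
      le_of_not_gt (fun hjc => absurd (hNmin j hjc) (not_le.mpr hj))
    unfold exitTime
    rw [sInf_aux hNex hSmin, sInf_aux hTex hTmin]
  · -- never exits: the walks coincide forever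
    push_neg at hex
    have heq : ∀ j, T j = S j := fun j =>
      key j (fun i _ => hex i) j le_rfl
    unfold exitTime
    congr 1
    ext n
    constructor <;> rintro ⟨m, rfl, hm⟩
    · exact ⟨m, rfl, by change r < ‖T m‖; rw [heq]; exact hm⟩
    · exact ⟨m, rfl, by change r < ‖S m‖; rw [← heq]; exact hm⟩
end

section
/- Suppose there is a constant c such that for every mean-zero square-integrable B-valued X, limsup_{r→∞} sup_{n≥1} r² P(T_r ≤ n)/n ≤ c E‖X‖². Then for every such X, limsup_{n→∞} E‖S_n‖²/n ≤ (4 + 9c) E‖X‖²; in particular B is type 2. -/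
open MeasureTheory ProbabilityTheory Set Filter
open scoped ENNReal NNReal Topology

section Helpers

variable {Ω : Type} [MeasureSpace Ω] [IsProbabilityMeasure (ℙ : Measure Ω)]

lemma myIntegrableMul {f g : Ω → ℝ} (hf : MemLp f 2 ℙ) (hg : MemLp g 2 ℙ) :
    Integrable (fun ω => f ω * g ω) ℙ := by
  have h := hg.smul (φ := f) hf (r := 1)
  rw [memLp_one_iff_integrable] at h
  exact h

lemma mySqInt {f : Ω → ℝ} (hf : MemLp f 2 ℙ) :
    Integrable (fun ω => f ω ^ 2) ℙ := by
  simpa [pow_two] using myIntegrableMul hf hf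

variable {B : Type*} [NormedAddCommGroup B] [MeasurableSpace B] [BorelSpace B]
  [SecondCountableTopology B]

lemma myCompLip {f : Ω → B} (hf : MemLp f 2 ℙ) {φ : B → ℝ} (hφ : LipschitzWith 1 φ) :
    MemLp (fun ω => φ (f ω)) 2 ℙ := by
  have hmeas : AEStronglyMeasurable (fun ω => φ (f ω)) ℙ :=
    hφ.continuous.comp_aestronglyMeasurable hf.1
  have hbd : MemLp (fun ω => |φ 0| + ‖f ω‖) 2 ℙ := (memLp_const (|φ 0|)).add hf.norm
  refine hbd.of_le hmeas (Filter.Eventually.of_forall fun ω => ?_)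
  have h1 : dist (φ (f ω)) (φ 0) ≤ 1 * dist (f ω) 0 := hφ.dist_le_mul _ _
  rw [one_mul, Real.dist_eq, dist_zero_right] at h1
  have : |φ (f ω)| ≤ |φ 0| + ‖f ω‖ := by
    have := abs_sub_abs_le_abs_sub (φ (f ω)) (φ 0)
    linarith
  calc ‖φ (f ω)‖ = |φ (f ω)| := rfl
    _ ≤ |φ 0| + ‖f ω‖ := this
    _ ≤ ‖|φ 0| + ‖f ω‖‖ := le_abs_self _

lemma myShiftInt (μ : Measure B) [IsProbabilityMeasure μ]
    (hInt : Integrable (fun y => ‖y‖) μ) {φ : B → ℝ} (hφ : LipschitzWith 1 φ) (s : B) :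
    Integrable (fun y => φ (s + y)) μ := by
  have hmeas : AEStronglyMeasurable (fun y => φ (s + y)) μ :=
    (hφ.continuous.comp (continuous_const.add continuous_id)).aestronglyMeasurable
  refine ((integrable_const |φ s|).add hInt).mono' hmeas
    (Filter.Eventually.of_forall fun y => ?_)
  have h1 : dist (φ (s + y)) (φ s) ≤ 1 * dist (s + y) s := hφ.dist_le_mul _ _
  have h2 : dist (s + y) s = ‖y‖ := by simp [dist_eq_norm]
  rw [one_mul, Real.dist_eq, h2] at h1
  have : |φ (s + y)| ≤ |φ s| + ‖y‖ := by
    have := abs_sub_abs_le_abs_sub (φ (s + y)) (φ s)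
    linarith
  simpa [Real.norm_eq_abs, abs_of_nonneg (norm_nonneg y)] using this

end Helpers

set_option linter.unusedSectionVars false

section Main

variable {Ω : Type} [MeasureSpace Ω] [IsProbabilityMeasure (ℙ : Measure Ω)]
variable {B : Type*} [NormedAddCommGroup B] [MeasurableSpace B] [BorelSpace B]
  [SecondCountableTopology B]

lemma myPsiLip (μ : Measure B) [IsProbabilityMeasure μ]
    (hInt : Integrable (fun y => ‖y‖) μ) {φ : B → ℝ} (hφ : LipschitzWith 1 φ) :
    LipschitzWith 1 (fun s => ∫ y, φ (s + y) ∂μ) := by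
  refine LipschitzWith.of_dist_le_mul fun s t => ?_
  simp only [NNReal.coe_one, one_mul]
  rw [Real.dist_eq]
  have hsub : (∫ y, φ (s + y) ∂μ) - (∫ y, φ (t + y) ∂μ)
      = ∫ y, (φ (s + y) - φ (t + y)) ∂μ :=
    (integral_sub (myShiftInt μ hInt hφ s) (myShiftInt μ hInt hφ t)).symm
  rw [hsub]
  have hpt : ∀ y, ‖φ (s + y) - φ (t + y)‖ ≤ dist s t := by
    intro y
    have h1 := hφ.dist_le_mul (s + y) (t + y)
    have h2 : dist (s + y) (t + y) = dist s t := by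
      simp [dist_eq_norm, add_sub_add_right_eq_sub]
    simp only [NNReal.coe_one, one_mul] at h1
    rw [h2, Real.dist_eq] at h1
    simpa using h1
  calc |∫ y, (φ (s + y) - φ (t + y)) ∂μ|
      ≤ dist s t * (μ Set.univ).toReal :=
        norm_integral_le_of_norm_le_const (Filter.Eventually.of_forall hpt)
    _ = dist s t := by simp

lemma myStep (U V : Ω → B) (hU : Measurable U) (hV : Measurable V)
    (hUV : IndepFun U V ℙ) (hU2 : MemLp U 2 ℙ) (hV2 : MemLp V 2 ℙ)
    (φ : B → ℝ) (hφ : LipschitzWith 1 φ)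
    (ψ : B → ℝ) (hψdef : ψ = fun s => ∫ y, φ (s + y) ∂(Measure.map V ℙ)) :
    ∫ ω, (φ (U ω + V ω) - ∫ ω', φ (U ω' + V ω')) ^ 2
      ≤ (∫ ω, (ψ (U ω) - ∫ ω', ψ (U ω')) ^ 2) + ∫ ω, ‖V ω‖ ^ 2 := by
  have hV1 : Integrable V ℙ := hV2.integrable one_le_two
  haveI : IsProbabilityMeasure (Measure.map V ℙ) := Measure.isProbabilityMeasure_map hV.aemeasurable
  haveI : IsProbabilityMeasure (Measure.map U ℙ) := Measure.isProbabilityMeasure_map hU.aemeasurable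
  have hIntμ : Integrable (fun y => ‖y‖) (Measure.map V ℙ) := by
    rw [integrable_map_measure measurable_norm.aestronglyMeasurable hV.aemeasurable]
    exact hV1.norm
  have hψlip : LipschitzWith 1 ψ := hψdef ▸ myPsiLip _ hIntμ hφ
  have hψmeas : Measurable ψ := hψlip.continuous.measurable
  have hψval : ∀ s, ψ s = ∫ y, φ (s + y) ∂(Measure.map V ℙ) := fun s => by rw [hψdef]
  have hIφs : ∀ s, Integrable (fun y => φ (s + y)) (Measure.map V ℙ) :=
    myShiftInt _ hIntμ hφ
  have hφc : Continuous φ := hφ.continuous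
  have hUV2 : MemLp (fun ω => U ω + V ω) 2 ℙ := hU2.add hV2
  have hφUV : MemLp (fun ω => φ (U ω + V ω)) 2 ℙ := myCompLip hUV2 hφ
  have hφU : MemLp (fun ω => φ (U ω)) 2 ℙ := myCompLip hU2 hφ
  have hψU : MemLp (fun ω => ψ (U ω)) 2 ℙ := myCompLip hU2 hψlip
  have hφUVi : Integrable (fun ω => φ (U ω + V ω)) ℙ := hφUV.integrable one_le_two
  have hψUi : Integrable (fun ω => ψ (U ω)) ℙ := hψU.integrable one_le_two
  set m' : ℝ := ∫ ω, ψ (U ω) with hm'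
  have hprod : Measure.map (fun ω => (U ω, V ω)) ℙ = (Measure.map U ℙ).prod (Measure.map V ℙ) :=
    (indepFun_iff_map_prod_eq_prod_map_map hU.aemeasurable hV.aemeasurable).mp hUV
  have key : ∀ F : B × B → ℝ, Measurable F →
      Integrable (fun ω => F (U ω, V ω)) ℙ →
      (∀ s, ∫ y, F (s, y) ∂(Measure.map V ℙ) ≤ 0) → ∫ ω, F (U ω, V ω) ≤ 0 := by
    intro F hFm hFi hFle
    have hpair : AEMeasurable (fun ω => (U ω, V ω)) ℙ := (hU.prodMk hV).aemeasurable
    have h1 : ∫ ω, F (U ω, V ω) = ∫ p, F p ∂((Measure.map U ℙ).prod (Measure.map V ℙ)) := by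
      rw [← hprod, integral_map hpair hFm.aestronglyMeasurable]
    have h2 : Integrable F ((Measure.map U ℙ).prod (Measure.map V ℙ)) := by
      rw [← hprod]
      exact (integrable_map_measure hFm.aestronglyMeasurable hpair).mpr hFi
    rw [h1, MeasureTheory.integral_prod F h2]
    exact integral_nonpos fun s => hFle s
  have keyEq : ∀ F : B × B → ℝ, Measurable F →
      Integrable (fun ω => F (U ω, V ω)) ℙ →
      (∀ s, ∫ y, F (s, y) ∂(Measure.map V ℙ) = 0) → ∫ ω, F (U ω, V ω) = 0 := by
    intro F hFm hFi hF0
    refine le_antisymm (key F hFm hFi fun s => (hF0 s).le) ?_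
    have h := key (fun p => -F p) hFm.neg hFi.neg
      (fun s => by simp only [integral_neg, hF0 s, neg_zero]; exact le_refl 0)
    simp only [integral_neg] at h
    linarith
  -- (2) the mean of φ(U+V) equals the mean of ψ(U)
  have hF2m : Measurable fun p : B × B => φ (p.1 + p.2) - ψ p.1 :=
    ((hφc.comp (continuous_fst.add continuous_snd)).measurable).sub (hψmeas.comp measurable_fst)
  have hF2inner : ∀ s : B, ∫ y, (φ (s + y) - ψ s) ∂(Measure.map V ℙ) = 0 := by
    intro s
    rw [integral_sub (hIφs s) (integrable_const _), integral_const]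
    simp [hψval s]
  have hA : (∫ ω, φ (U ω + V ω)) = m' := by
    have h0 : ∫ ω, (φ (U ω + V ω) - ψ (U ω)) = 0 :=
      keyEq (fun p => φ (p.1 + p.2) - ψ p.1) hF2m (hφUVi.sub hψUi) hF2inner
    rw [integral_sub hφUVi hψUi] at h0
    linarith
  -- integrability package
  have hsq1 : Integrable (fun ω => (φ (U ω + V ω) - ψ (U ω)) ^ 2) ℙ :=
    mySqInt (hφUV.sub hψU)
  have hsq2 : Integrable (fun ω => (φ (U ω + V ω) - φ (U ω)) ^ 2) ℙ :=
    mySqInt (hφUV.sub hφU)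
  have hsqb : Integrable (fun ω => (ψ (U ω) - m') ^ 2) ℙ :=
    mySqInt (hψU.sub (memLp_const m'))
  have hcrossInt : Integrable (fun ω => (φ (U ω + V ω) - ψ (U ω)) * (ψ (U ω) - m')) ℙ :=
    myIntegrableMul (hφUV.sub hψU) (hψU.sub (memLp_const m'))
  -- (3) cross term vanishes
  have hF3m : Measurable fun p : B × B => (φ (p.1 + p.2) - ψ p.1) * (ψ p.1 - m') :=
    hF2m.mul ((hψmeas.comp measurable_fst).sub measurable_const)
  have hcrossInner : ∀ s : B,
      ∫ y, ((φ (s + y) - ψ s) * (ψ s - m')) ∂(Measure.map V ℙ) = 0 := by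
    intro s
    rw [integral_mul_const, hF2inner s, zero_mul]
  have hcross : ∫ ω, ((φ (U ω + V ω) - ψ (U ω)) * (ψ (U ω) - m')) = 0 :=
    keyEq (fun p => (φ (p.1 + p.2) - ψ p.1) * (ψ p.1 - m')) hF3m hcrossInt hcrossInner
  -- (4) conditional variance bound
  have hF4m : Measurable fun p : B × B =>
      (φ (p.1 + p.2) - ψ p.1) ^ 2 - (φ (p.1 + p.2) - φ p.1) ^ 2 :=
    (hF2m.pow_const 2).sub
      ((((hφc.comp (continuous_fst.add continuous_snd)).measurable).sub
        (hφc.measurable.comp measurable_fst)).pow_const 2)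
  have hquadInner : ∀ s : B,
      ∫ y, ((φ (s + y) - ψ s) ^ 2 - (φ (s + y) - φ s) ^ 2) ∂(Measure.map V ℙ) ≤ 0 := by
    intro s
    have hrw : (fun y => (φ (s + y) - ψ s) ^ 2 - (φ (s + y) - φ s) ^ 2)
        = fun y => (2 * (φ s - ψ s)) * φ (s + y) + (ψ s ^ 2 - φ s ^ 2) := by
      funext y; ring
    rw [hrw, integral_add ((hIφs s).const_mul _) (integrable_const _),
      integral_const_mul, integral_const]
    have h1 : ∫ y, φ (s + y) ∂(Measure.map V ℙ) = ψ s := (hψval s).symm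
    rw [h1]
    simp only [probReal_univ, smul_eq_mul, one_mul]
    nlinarith [sq_nonneg (φ s - ψ s)]
  have hquad : ∫ ω, (φ (U ω + V ω) - ψ (U ω)) ^ 2
      ≤ ∫ ω, (φ (U ω + V ω) - φ (U ω)) ^ 2 := by
    have h : ∫ ω, ((φ (U ω + V ω) - ψ (U ω)) ^ 2 - (φ (U ω + V ω) - φ (U ω)) ^ 2) ≤ 0 :=
      key (fun p => (φ (p.1 + p.2) - ψ p.1) ^ 2 - (φ (p.1 + p.2) - φ p.1) ^ 2)
        hF4m (hsq1.sub hsq2) hquadInner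
    rw [integral_sub hsq1 hsq2] at h
    linarith
  -- pointwise Lipschitz bound
  have hptw : ∀ ω, (φ (U ω + V ω) - φ (U ω)) ^ 2 ≤ ‖V ω‖ ^ 2 := by
    intro ω
    have h1 := hφ.dist_le_mul (U ω + V ω) (U ω)
    have h2 : dist (U ω + V ω) (U ω) = ‖V ω‖ := by simp [dist_eq_norm]
    simp only [NNReal.coe_one, one_mul] at h1
    rw [h2, Real.dist_eq] at h1
    have h3 := abs_le.mp h1
    nlinarith [h3.1, h3.2]
  have hVsq : Integrable (fun ω => ‖V ω‖ ^ 2) ℙ := mySqInt hV2.norm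
  have h4 : ∫ ω, (φ (U ω + V ω) - φ (U ω)) ^ 2 ≤ ∫ ω, ‖V ω‖ ^ 2 :=
    integral_mono hsq2 hVsq hptw
  -- assemble
  rw [hA]
  have hsum2 : Integrable (fun ω => 2 * ((φ (U ω + V ω) - ψ (U ω)) * (ψ (U ω) - m'))
      + (ψ (U ω) - m') ^ 2) ℙ := (hcrossInt.const_mul 2).add hsqb
  have e0 : ∫ ω, (φ (U ω + V ω) - m') ^ 2
      = ∫ ω, ((φ (U ω + V ω) - ψ (U ω)) ^ 2
        + (2 * ((φ (U ω + V ω) - ψ (U ω)) * (ψ (U ω) - m')) + (ψ (U ω) - m') ^ 2)) := by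
    apply integral_congr_ae
    filter_upwards with ω
    ring
  have e1 : ∫ ω, ((φ (U ω + V ω) - ψ (U ω)) ^ 2
        + (2 * ((φ (U ω + V ω) - ψ (U ω)) * (ψ (U ω) - m')) + (ψ (U ω) - m') ^ 2))
      = (∫ ω, (φ (U ω + V ω) - ψ (U ω)) ^ 2)
        + ∫ ω, (2 * ((φ (U ω + V ω) - ψ (U ω)) * (ψ (U ω) - m')) + (ψ (U ω) - m') ^ 2) :=
    integral_add hsq1 hsum2
  have e2 : ∫ ω, (2 * ((φ (U ω + V ω) - ψ (U ω)) * (ψ (U ω) - m')) + (ψ (U ω) - m') ^ 2)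
      = (∫ ω, 2 * ((φ (U ω + V ω) - ψ (U ω)) * (ψ (U ω) - m'))) + ∫ ω, (ψ (U ω) - m') ^ 2 :=
    integral_add (hcrossInt.const_mul 2) hsqb
  have hzero : ∫ ω, 2 * ((φ (U ω + V ω) - ψ (U ω)) * (ψ (U ω) - m')) = 0 := by
    rw [integral_const_mul, hcross, mul_zero]
  rw [e0, e1, e2, hzero]
  linarith [hquad, h4]


lemma myVar (X : ℕ → Ω → B) (hm : ∀ i, Measurable (X i))
    (hind : iIndepFun X ℙ)
    (hid : ∀ i, IdentDistrib (X i) (X 0) ℙ ℙ) (h2 : MemLp (X 0) 2 ℙ) :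
    ∀ (n : ℕ) (φ : B → ℝ), LipschitzWith 1 φ →
      ∫ ω, (φ (∑ k ∈ Finset.range n, X k ω) - ∫ ω', φ (∑ k ∈ Finset.range n, X k ω')) ^ 2
        ≤ n * ∫ ω, ‖X 0 ω‖ ^ 2 := by
  have hXi2 : ∀ i, MemLp (X i) 2 ℙ := fun i => (hid i).symm.memLp_snd h2
  have hXnormsq : ∀ i, (∫ ω, ‖X i ω‖ ^ 2) = ∫ ω, ‖X 0 ω‖ ^ 2 := fun i =>
    ((hid i).comp (measurable_norm.pow_const 2)).integral_eq
  intro n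
  induction n with
  | zero =>
    intro φ hφ
    simp
  | succ n ih =>
    intro φ hφ
    have hS2 : MemLp (fun ω => ∑ k ∈ Finset.range n, X k ω) 2 ℙ :=
      memLp_finset_sum (Finset.range n) fun i _ => hXi2 i
    have hSmeas : Measurable (fun ω => ∑ k ∈ Finset.range n, X k ω) :=
      Finset.measurable_sum _ fun i _ => hm i
    have hsum_eq : (∑ j ∈ Finset.range n, X j) = fun ω => ∑ k ∈ Finset.range n, X k ω := by
      funext ω; simp
    have hIndep : IndepFun (fun ω => ∑ k ∈ Finset.range n, X k ω) (X n) ℙ := by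
      have h := hind.indepFun_finset_sum_of_notMem hm (Finset.notMem_range_self (n := n))
      rwa [hsum_eq] at h
    set ψ : B → ℝ := fun s => ∫ y, φ (s + y) ∂(Measure.map (X n) ℙ) with hψdef
    haveI : IsProbabilityMeasure (Measure.map (X n) ℙ) :=
      Measure.isProbabilityMeasure_map (hm n).aemeasurable
    have hIntμ : Integrable (fun y => ‖y‖) (Measure.map (X n) ℙ) := by
      rw [integrable_map_measure measurable_norm.aestronglyMeasurable (hm n).aemeasurable]
      exact ((hXi2 n).integrable one_le_two).norm
    have hψlip : LipschitzWith 1 ψ := myPsiLip _ hIntμ hφ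
    simp only [Finset.sum_range_succ]
    calc ∫ ω, (φ ((∑ k ∈ Finset.range n, X k ω) + X n ω)
          - ∫ ω', φ ((∑ k ∈ Finset.range n, X k ω') + X n ω')) ^ 2
        ≤ (∫ ω, (ψ (∑ k ∈ Finset.range n, X k ω)
            - ∫ ω', ψ (∑ k ∈ Finset.range n, X k ω')) ^ 2) + ∫ ω, ‖X n ω‖ ^ 2 :=
          myStep _ _ hSmeas (hm n) hIndep hS2 (hXi2 n) φ hφ ψ hψdef
      _ ≤ n * (∫ ω, ‖X 0 ω‖ ^ 2) + ∫ ω, ‖X 0 ω‖ ^ 2 :=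
          add_le_add (ih ψ hψlip) (le_of_eq (hXnormsq n))
      _ = ((n + 1 : ℕ) : ℝ) * ∫ ω, ‖X 0 ω‖ ^ 2 := by push_cast; ring

end Main

set_option maxHeartbeats 1000000 in
/-- if there is a constant `c` such that for every mean-zero
square-integrable `B`-valued `X`,
`limsup_{r→∞} sup_{n ≥ 1} r² P(T_r ≤ n)/n ≤ c E‖X‖²`
(expressed via: every `b` above the bound is an eventual upper bound), then for
every such `X`, `limsup_{n→∞} E‖Sₙ‖²/n ≤ (4 + 9c) E‖X‖²`; in particular `B`
is type 2. -/
theorem stmt16 {B : Type*} [NormedAddCommGroup B] [NormedSpace ℝ B] [MeasurableSpace B]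
    [BorelSpace B] [SecondCountableTopology B] [CompleteSpace B]
    (c : ℝ) (hc : 0 < c)
    (H : ∀ (Ω : Type) [MeasureSpace Ω] [IsProbabilityMeasure (ℙ : Measure Ω)]
      (X : ℕ → Ω → B), (∀ i, Measurable (X i)) →
      iIndepFun X ℙ →
      (∀ i, IdentDistrib (X i) (X 0) ℙ ℙ) →
      MemLp (X 0) 2 ℙ → (∫ ω, X 0 ω) = 0 →
      ∀ b : ℝ, c * (∫ ω, ‖X 0 ω‖ ^ 2) < b →
        ∀ᶠ r : ℝ in atTop, ∀ n : ℕ, 1 ≤ n →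
          r ^ 2 * (ℙ {ω | exitTime X r ω ≤ (n : ℕ∞)}).toReal / n ≤ b) :
    ∀ (Ω : Type) [MeasureSpace Ω] [IsProbabilityMeasure (ℙ : Measure Ω)]
      (X : ℕ → Ω → B), (∀ i, Measurable (X i)) →
      iIndepFun X ℙ →
      (∀ i, IdentDistrib (X i) (X 0) ℙ ℙ) →
      MemLp (X 0) 2 ℙ → (∫ ω, X 0 ω) = 0 →
      ∀ b : ℝ, (4 + 9 * c) * (∫ ω, ‖X 0 ω‖ ^ 2) < b →
        ∀ᶠ n : ℕ in atTop,
          (∫ ω, ‖∑ k ∈ Finset.range n, X k ω‖ ^ 2) / n ≤ b := by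
  intro Ω _ _ X hm hind hid h2 hmean b hb
  have hI0 : 0 ≤ ∫ ω, ‖X 0 ω‖ ^ 2 := integral_nonneg fun ω => by positivity
  set I : ℝ := ∫ ω, ‖X 0 ω‖ ^ 2 with hIdef
  set b' : ℝ := (c * I + (b - I) / 4) / 2 with hb'def
  have hd : c * I < (b - I) / 4 := by nlinarith [mul_nonneg hc.le hI0]
  have hcb' : c * I < b' := by rw [hb'def]; linarith
  have hb'pos : 0 < b' := lt_of_le_of_lt (mul_nonneg hc.le hI0) hcb'
  have hb'b : I + 4 * b' < b := by rw [hb'def]; linarith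
  have Hb := H Ω X hm hind hid h2 hmean b' hcb'
  rw [eventually_atTop] at Hb
  obtain ⟨r₁, hr₁⟩ := Hb
  set r₀ : ℝ := max r₁ 1 with hr₀def
  have hr₀1 : (1:ℝ) ≤ r₀ := le_max_right _ _
  have hr₀pos : 0 < r₀ := lt_of_lt_of_le one_pos hr₀1
  have htail : ∀ r : ℝ, r₀ ≤ r → ∀ n : ℕ, 1 ≤ n →
      (ℙ {ω | r < ‖∑ k ∈ Finset.range n, X k ω‖}).toReal ≤ b' * n / r ^ 2 := by
    intro r hr n hn
    have h1 := hr₁ r (le_trans (le_max_left _ _) hr) n hn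
    have hrpos : 0 < r := lt_of_lt_of_le hr₀pos hr
    have hnpos : (0:ℝ) < n := by exact_mod_cast hn
    have hsub : {ω | r < ‖∑ k ∈ Finset.range n, X k ω‖}
        ⊆ {ω | exitTime X r ω ≤ (n : ℕ∞)} := by
      intro ω hω
      have hmem : (n : ℕ∞) ∈ {n' : ℕ∞ | ∃ m : ℕ, n' = (m : ℕ∞)
          ∧ r < ‖∑ k ∈ Finset.range m, X k ω‖} := ⟨n, rfl, hω⟩
      exact sInf_le hmem
    have hmono : (ℙ {ω | r < ‖∑ k ∈ Finset.range n, X k ω‖}).toReal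
        ≤ (ℙ {ω | exitTime X r ω ≤ (n : ℕ∞)}).toReal :=
      ENNReal.toReal_mono (measure_ne_top _ _) (measure_mono hsub)
    have h2' : r ^ 2 * (ℙ {ω | exitTime X r ω ≤ (n : ℕ∞)}).toReal ≤ b' * n := by
      rw [div_le_iff₀ hnpos] at h1; linarith
    have hr2 : (0:ℝ) < r ^ 2 := by positivity
    rw [le_div_iff₀ hr2]
    nlinarith [mul_le_mul_of_nonneg_right hmono (sq_nonneg r)]
  have hXi2 : ∀ i, MemLp (X i) 2 ℙ := fun i => (hid i).symm.memLp_snd h2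
  have hvar := myVar X hm hind hid h2
  rw [eventually_atTop]
  refine ⟨max 1 (⌈r₀ ^ 2 / b'⌉₊ + 1), fun n hn => ?_⟩
  have hn1 : 1 ≤ n := le_trans (le_max_left _ _) hn
  have hnpos : (0:ℝ) < n := by exact_mod_cast hn1
  have hnr : r₀ ^ 2 / b' ≤ (n : ℝ) := by
    have h1 : (⌈r₀ ^ 2 / b'⌉₊ + 1 : ℕ) ≤ n := le_trans (le_max_right _ _) hn
    have h2' : r₀ ^ 2 / b' ≤ (⌈r₀ ^ 2 / b'⌉₊ : ℝ) := Nat.le_ceil _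
    have h3 : ((⌈r₀ ^ 2 / b'⌉₊ + 1 : ℕ) : ℝ) ≤ n := by exact_mod_cast h1
    push_cast at h3
    linarith
  set R : ℝ := Real.sqrt (b' * n) with hRdef
  have hbn : (0:ℝ) < b' * n := mul_pos hb'pos hnpos
  have hRpos : 0 < R := Real.sqrt_pos.mpr hbn
  have hRsq : R ^ 2 = b' * n := Real.sq_sqrt hbn.le
  have hr₀R : r₀ ≤ R := by
    rw [hRdef, Real.le_sqrt hr₀pos.le hbn.le]
    rw [div_le_iff₀ hb'pos] at hnr
    linarith
  have hS2 : MemLp (fun ω => ∑ k ∈ Finset.range n, X k ω) 2 ℙ :=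
    memLp_finset_sum (Finset.range n) fun i _ => hXi2 i
  have hf2 : MemLp (fun ω => ‖∑ k ∈ Finset.range n, X k ω‖) 2 ℙ := hS2.norm
  have hfint : Integrable (fun ω => ‖∑ k ∈ Finset.range n, X k ω‖) ℙ :=
    hf2.integrable one_le_two
  have hfsq : Integrable (fun ω => ‖∑ k ∈ Finset.range n, X k ω‖ ^ 2) ℙ := mySqInt hf2
  set M : ℝ := ∫ ω, ‖∑ k ∈ Finset.range n, X k ω‖ with hMdef
  have hM0 : 0 ≤ M := by
    rw [hMdef]; exact integral_nonneg fun ω => norm_nonneg _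
  have hg : Integrable (fun ω => max (‖∑ k ∈ Finset.range n, X k ω‖ - R) 0) ℙ :=
    (hfint.sub (integrable_const R)).pos_part
  have hup : ∀ ω : Ω, ‖∑ k ∈ Finset.range n, X k ω‖
      ≤ R + max (‖∑ k ∈ Finset.range n, X k ω‖ - R) 0 := fun ω => by
    have := le_max_left (‖∑ k ∈ Finset.range n, X k ω‖ - R) 0
    linarith
  have hMle : M ≤ R + ∫ ω, max (‖∑ k ∈ Finset.range n, X k ω‖ - R) 0 := by
    have h1 : M ≤ ∫ ω, (R + max (‖∑ k ∈ Finset.range n, X k ω‖ - R) 0) :=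
      integral_mono hfint ((integrable_const R).add hg) hup
    rwa [integral_add (integrable_const R) hg, integral_const, probReal_univ,
      one_smul] at h1
  have hlayer : ∫ ω, max (‖∑ k ∈ Finset.range n, X k ω‖ - R) 0
      = ∫ t in Ioi (0:ℝ),
          (ℙ {ω | t < max (‖∑ k ∈ Finset.range n, X k ω‖ - R) 0}).toReal :=
    hg.integral_eq_integral_meas_lt (Filter.Eventually.of_forall fun ω => le_max_right _ _)
  have hderiv : ∀ t ∈ Ici (0:ℝ), HasDerivAt (fun t : ℝ => -(b' * n) * (R + t)⁻¹)
      (b' * n * ((R + t) ^ 2)⁻¹) t := by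
    intro t ht
    have htt : (0:ℝ) ≤ t := ht
    have hRt : R + t ≠ 0 := by positivity
    have h1 : HasDerivAt (fun t : ℝ => R + t) 1 t := (hasDerivAt_id t).const_add R
    have h2 : HasDerivAt (fun t : ℝ => (R + t)⁻¹) (-1 / (R + t) ^ 2) t := h1.inv hRt
    have h3 := h2.const_mul (-(b' * n))
    exact h3.congr_deriv (by ring)
  have htend : Tendsto (fun t : ℝ => -(b' * n) * (R + t)⁻¹) atTop (𝓝 0) := by
    have h1 : Tendsto (fun t : ℝ => R + t) atTop atTop :=
      tendsto_atTop_add_const_left _ _ tendsto_id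
    have h2 := h1.inv_tendsto_atTop
    have h3 := h2.const_mul (-(b' * n))
    simpa using h3
  have hcont : ContinuousWithinAt (fun t : ℝ => -(b' * n) * (R + t)⁻¹) (Ici 0) 0 :=
    ((hderiv 0 self_mem_Ici).continuousAt).continuousWithinAt
  have hpos' : ∀ t ∈ Ioi (0:ℝ), 0 ≤ b' * n * ((R + t) ^ 2)⁻¹ := fun t ht => by positivity
  have hderiv' : ∀ t ∈ Ioi (0:ℝ), HasDerivAt (fun t : ℝ => -(b' * n) * (R + t)⁻¹)
      (b' * n * ((R + t) ^ 2)⁻¹) t := fun t ht => hderiv t (mem_Ici.mpr (le_of_lt (mem_Ioi.mp ht)))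
  have hDint : IntegrableOn (fun t : ℝ => b' * n * ((R + t) ^ 2)⁻¹) (Ioi (0:ℝ)) :=
    integrableOn_Ioi_deriv_of_nonneg hcont hderiv' hpos' htend
  have hDval : ∫ t in Ioi (0:ℝ), b' * n * ((R + t) ^ 2)⁻¹
      = 0 - (-(b' * n) * (R + 0)⁻¹) :=
    integral_Ioi_of_hasDerivAt_of_nonneg hcont hderiv' hpos' htend
  have hptt : ∀ t ∈ Ioi (0:ℝ),
      (ℙ {ω | t < max (‖∑ k ∈ Finset.range n, X k ω‖ - R) 0}).toReal
        ≤ b' * n * ((R + t) ^ 2)⁻¹ := by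
    intro t ht
    rw [mem_Ioi] at ht
    have hset : {ω | t < max (‖∑ k ∈ Finset.range n, X k ω‖ - R) 0}
        = {ω | R + t < ‖∑ k ∈ Finset.range n, X k ω‖} := by
      ext ω
      simp only [mem_setOf_eq, lt_max_iff]
      constructor
      · rintro (h | h)
        · linarith
        · linarith
      · intro h; left; linarith
    rw [hset]
    have h5 := htail (R + t) (by linarith [hr₀R]) n hn1
    calc (ℙ {ω | R + t < ‖∑ k ∈ Finset.range n, X k ω‖}).toReal
        ≤ b' * n / (R + t) ^ 2 := h5
      _ = b' * n * ((R + t) ^ 2)⁻¹ := div_eq_mul_inv _ _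
  have hmeasb : ∫ t in Ioi (0:ℝ),
      (ℙ {ω | t < max (‖∑ k ∈ Finset.range n, X k ω‖ - R) 0}).toReal ≤ b' * n / R := by
    have h1 : ∫ t in Ioi (0:ℝ),
        (ℙ {ω | t < max (‖∑ k ∈ Finset.range n, X k ω‖ - R) 0}).toReal
          ≤ ∫ t in Ioi (0:ℝ), b' * n * ((R + t) ^ 2)⁻¹ := by
      refine integral_mono_of_nonneg ?_ hDint ?_
      · exact Filter.Eventually.of_forall fun t => ENNReal.toReal_nonneg
      · rw [EventuallyLE, ae_restrict_iff' measurableSet_Ioi]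
        exact Filter.Eventually.of_forall hptt
    have h2' : (0:ℝ) - (-(b' * n) * (R + 0)⁻¹) = b' * n / R := by
      rw [add_zero]
      field_simp
      ring
    rw [hDval, h2'] at h1
    exact h1
  have hM2R : M ≤ 2 * R := by
    have hbR : b' * n / R = R := by
      rw [← hRsq, sq, mul_div_assoc, div_self hRpos.ne', mul_one]
    rw [hlayer] at hMle
    linarith [hMle, hmeasb]
  have hvb := hvar n (fun x : B => ‖x‖) lipschitzWith_one_norm
  rw [← hMdef, ← hIdef] at hvb
  have hdecomp : ∫ ω, ‖∑ k ∈ Finset.range n, X k ω‖ ^ 2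
      = (∫ ω, (‖∑ k ∈ Finset.range n, X k ω‖ - M) ^ 2) + M ^ 2 := by
    have e0 : ∫ ω, (‖∑ k ∈ Finset.range n, X k ω‖ - M) ^ 2
        = ∫ ω, (‖∑ k ∈ Finset.range n, X k ω‖ ^ 2
            - 2 * M * ‖∑ k ∈ Finset.range n, X k ω‖ + M ^ 2) := by
      apply integral_congr_ae
      filter_upwards with ω
      ring
    have hint1 : Integrable (fun ω => ‖∑ k ∈ Finset.range n, X k ω‖ ^ 2
        - 2 * M * ‖∑ k ∈ Finset.range n, X k ω‖) ℙ := hfsq.sub (hfint.const_mul (2 * M))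
    rw [e0, integral_add hint1 (integrable_const _),
      integral_sub hfsq (hfint.const_mul (2 * M)), integral_const_mul, integral_const,
      probReal_univ, one_smul, ← hMdef]
    ring
  rw [div_le_iff₀ hnpos]
  have hM2 : M ^ 2 ≤ 4 * (b' * n) := by
    nlinarith [hM0, hM2R, hRsq]
  have hmul : (n : ℝ) * I + 4 * (b' * n) ≤ b * n := by
    nlinarith [hb'b, hnpos.le]
  linarith [hvb, hdecomp, hM2, hmul]
end

section
/- Suppose there is a constant c such that for every mean-zero square-integrable B-valued X, limsup_{r→∞} sup_{n≥1} n P(T_r > n)/r² ≤ c / E‖X‖². Then for every such X, liminf_{n→∞} E‖S_n‖²/n ≥ E‖X‖²/(32 c); in particular B is cotype 2. -/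
open MeasureTheory ProbabilityTheory Set Filter
open scoped ENNReal NNReal Topology

section Aux1

variable {B : Type*} [NormedAddCommGroup B] [NormedSpace ℝ B] [MeasurableSpace B]
    [BorelSpace B] [SecondCountableTopology B] [CompleteSpace B]
variable {Ω : Type} [MeasureSpace Ω] [IsProbabilityMeasure (ℙ : Measure Ω)]

/-- clamp to [0,1] -/
noncomputable def clamp01 (x : ℝ) : ℝ := max 0 (min x 1)

lemma clamp01_continuous : Continuous clamp01 :=
  continuous_const.max (continuous_id.min continuous_const)

lemma clamp01_nonneg (x : ℝ) : 0 ≤ clamp01 x := le_max_left _ _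

lemma clamp01_le_one (x : ℝ) : clamp01 x ≤ 1 := by
  simp only [clamp01]
  exact max_le zero_le_one (min_le_right _ _)

lemma clamp01_indicator (s : Set Ω) (ω : Ω) :
    clamp01 (s.indicator (fun _ => (1:ℝ)) ω) = s.indicator (fun _ => (1:ℝ)) ω := by
  by_cases h : ω ∈ s <;> simp [clamp01, Set.indicator_apply, h]

/-- Key Jensen-type lemma via independence. -/
lemma key_setIntegral_norm_le {W Z : Ω → B} {s : Set Ω}
    (hW : Measurable W) (hZ : Measurable Z) (hs : MeasurableSet s)
    (hWi : Integrable W ℙ) (hZi : Integrable Z ℙ) (hZ0 : (∫ ω, Z ω) = 0)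
    (hind : IndepFun (fun ω => (s.indicator (fun _ => (1:ℝ)) ω, W ω)) Z ℙ) :
    ∫ ω in s, ‖W ω‖ ≤ ∫ ω in s, ‖W ω + Z ω‖ := by
  set T : Ω → ℝ × B := fun ω => (s.indicator (fun _ => (1:ℝ)) ω, W ω) with hT
  have hTm : Measurable T := (measurable_const.indicator hs).prodMk hW
  set μT : Measure (ℝ × B) := Measure.map T ℙ with hμT
  set μZ : Measure B := Measure.map Z ℙ with hμZ
  have : IsProbabilityMeasure μT := Measure.isProbabilityMeasure_map hTm.aemeasurable
  have : IsProbabilityMeasure μZ := Measure.isProbabilityMeasure_map hZ.aemeasurable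
  set G : (ℝ × B) × B → ℝ := fun p => clamp01 p.1.1 * ‖p.1.2 + p.2‖ with hG
  have hGc : Continuous G := by
    exact ((clamp01_continuous.comp (continuous_fst.fst)).mul
      ((continuous_fst.snd.add continuous_snd).norm))
  -- integrability of the two dominating pieces
  have hWn : Integrable (fun t : ℝ × B => ‖t.2‖) μT := by
    rw [hμT, integrable_map_measure continuous_snd.norm.aestronglyMeasurable hTm.aemeasurable]
    exact hWi.norm
  have hZn : Integrable (fun z : B => ‖z‖) μZ := by
    rw [hμZ, integrable_map_measure continuous_norm.aestronglyMeasurable hZ.aemeasurable]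
    exact hZi.norm
  have h1 : Integrable (fun p : (ℝ × B) × B => ‖p.1.2‖) (μT.prod μZ) := by
    have := hWn.mul_prod (integrable_const (1:ℝ) (μ := μZ))
    simpa using this
  have h2 : Integrable (fun p : (ℝ × B) × B => ‖p.2‖) (μT.prod μZ) := by
    have := (integrable_const (1:ℝ) (μ := μT)).mul_prod hZn
    simpa using this
  have hGi : Integrable G (μT.prod μZ) := by
    refine Integrable.mono' (h1.add h2) hGc.aestronglyMeasurable ?_
    refine Filter.Eventually.of_forall fun p => ?_
    have h01 : |clamp01 p.1.1| ≤ 1 := by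
      rw [abs_of_nonneg (clamp01_nonneg _)]; exact clamp01_le_one _
    calc ‖G p‖ = |clamp01 p.1.1| * ‖p.1.2 + p.2‖ := by
          simp [hG, abs_mul, abs_of_nonneg (norm_nonneg _)]
      _ ≤ 1 * (‖p.1.2‖ + ‖p.2‖) := by
          exact mul_le_mul h01 (norm_add_le _ _) (norm_nonneg _) zero_le_one
      _ = ‖p.1.2‖ + ‖p.2‖ := one_mul _
  -- law of the pair is the product
  have hmap : Measure.map (fun ω => (T ω, Z ω)) ℙ = μT.prod μZ :=
    (indepFun_iff_map_prod_eq_prod_map_map hTm.aemeasurable hZ.aemeasurable).mp hind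
  -- Z has mean zero under μZ
  have hZint : Integrable (fun z : B => z) μZ := by
    rw [hμZ]
    exact (integrable_map_measure (g := fun z : B => z)
      continuous_id.aestronglyMeasurable hZ.aemeasurable).mpr hZi
  have hEz : (∫ z, z ∂μZ) = 0 := by
    rw [hμZ, integral_map (f := fun z : B => z) hZ.aemeasurable
      continuous_id.aestronglyMeasurable]
    exact hZ0
  -- rewrite RHS
  have hRHS : ∫ ω in s, ‖W ω + Z ω‖ = ∫ t, ∫ z, G (t, z) ∂μZ ∂μT := by
    have e1 : ∫ ω in s, ‖W ω + Z ω‖ = ∫ ω, G (T ω, Z ω) := by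
      rw [← integral_indicator hs]
      refine integral_congr_ae (Filter.Eventually.of_forall fun ω => ?_)
      by_cases h : ω ∈ s <;> simp [hG, hT, Set.indicator_apply, h, clamp01, clamp01_indicator]
    rw [e1, ← integral_map (hTm.aemeasurable.prodMk hZ.aemeasurable) hGc.aestronglyMeasurable,
      hmap, integral_prod _ hGi]
  -- rewrite LHS
  have hLHS : ∫ ω in s, ‖W ω‖ = ∫ t, clamp01 t.1 * ‖t.2‖ ∂μT := by
    have e1 : ∫ ω in s, ‖W ω‖ = ∫ ω, clamp01 ((T ω).1) * ‖(T ω).2‖ := by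
      rw [← integral_indicator hs]
      refine integral_congr_ae (Filter.Eventually.of_forall fun ω => ?_)
      by_cases h : ω ∈ s <;> simp [hT, Set.indicator_apply, h, clamp01]
    rw [e1, ← integral_map (f := fun t : ℝ × B => clamp01 t.1 * ‖t.2‖) hTm.aemeasurable
      ((clamp01_continuous.comp continuous_fst).mul continuous_snd.norm).aestronglyMeasurable]
  rw [hLHS, hRHS]
  have hinner : ∀ t : ℝ × B, clamp01 t.1 * ‖t.2‖ ≤ ∫ z, G (t, z) ∂μZ := by
    intro t
    have : ∫ z, G (t, z) ∂μZ = clamp01 t.1 * ∫ z, ‖t.2 + z‖ ∂μZ := by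
      simp only [hG]
      exact integral_const_mul _ _
    rw [this]
    refine mul_le_mul_of_nonneg_left ?_ (clamp01_nonneg _)
    have : ‖t.2‖ = ‖∫ z, (t.2 + z) ∂μZ‖ := by
      rw [integral_add (integrable_const _) hZint, integral_const, hEz]
      simp
    rw [this]
    exact norm_integral_le_integral_norm _
  refine integral_mono ?_ hGi.integral_prod_left hinner
  refine Integrable.mono' hWn
    ((clamp01_continuous.comp continuous_fst).mul continuous_snd.norm).aestronglyMeasurable
    (Filter.Eventually.of_forall fun t => ?_)
  rw [Real.norm_eq_abs, abs_mul, abs_of_nonneg (clamp01_nonneg _), abs_of_nonneg (norm_nonneg _)]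
  nlinarith [clamp01_le_one t.1, clamp01_nonneg t.1, norm_nonneg t.2]

end Aux1


section Aux2

variable {B : Type*} [NormedAddCommGroup B] [NormedSpace ℝ B] [MeasurableSpace B]
    [BorelSpace B] [SecondCountableTopology B] [CompleteSpace B]
variable {Ω : Type} [MeasureSpace Ω] [IsProbabilityMeasure (ℙ : Measure Ω)]

omit [IsProbabilityMeasure (ℙ : Measure Ω)] in
lemma exit_gt_iff {X : ℕ → Ω → B} {r : ℝ} {n : ℕ} {ω : Ω} :
    (n : ℕ∞) < exitTime X r ω ↔ ∀ m ≤ n, ‖∑ k ∈ Finset.range m, X k ω‖ ≤ r := by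
  constructor
  · intro h m hm
    by_contra hlt
    push_neg at hlt
    have hmem : (m : ℕ∞) ∈ {n : ℕ∞ | ∃ m' : ℕ, n = m' ∧ r < ‖∑ k ∈ Finset.range m', X k ω‖} :=
      ⟨m, rfl, hlt⟩
    have : (n : ℕ∞) < (m : ℕ∞) := lt_of_lt_of_le h (sInf_le hmem)
    exact absurd hm (not_le.mpr (Nat.cast_lt.mp this))
  · intro h
    have h1 : ((n : ℕ∞) + 1) ≤ exitTime X r ω := by
      refine le_sInf fun x hx => ?_
      obtain ⟨m, rfl, hrm⟩ := hx
      have hmn : n < m := by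
        by_contra hmn
        push_neg at hmn
        exact absurd (h m hmn) (not_le.mpr hrm)
      calc (n : ℕ∞) + 1 = ((n + 1 : ℕ) : ℕ∞) := by push_cast; ring
        _ ≤ (m : ℕ∞) := Nat.cast_le.mpr hmn
    refine lt_of_lt_of_le ?_ h1
    have : ((n : ℕ∞) + 1) = ((n + 1 : ℕ) : ℕ∞) := by push_cast; ring
    rw [this]
    exact_mod_cast Nat.lt_succ_self n

/-- The norm of the partial-sum process (shifted by one) is a submartingale with respect to
the natural filtration. -/
lemma norm_partialSum_submartingale (X : ℕ → Ω → B) (hX : ∀ i, Measurable (X i))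
    (hind : iIndepFun X ℙ)
    (hint : ∀ i, Integrable (X i) ℙ) (h0 : ∀ i, (∫ ω, X i ω) = 0) :
    Submartingale (fun i ω => ‖∑ k ∈ Finset.range (i + 1), X k ω‖)
      (Filtration.natural X fun i => (hX i).stronglyMeasurable) ℙ := by
  set ℱ := Filtration.natural X fun i => (hX i).stronglyMeasurable with hℱ
  have hSmeas : ∀ i : ℕ, Measurable[ℱ i] (fun ω => ∑ k ∈ Finset.range (i + 1), X k ω) := by
    intro i
    refine Finset.measurable_sum _ fun k hk => ?_
    have hki : k ≤ i := Nat.lt_succ_iff.mp (Finset.mem_range.mp hk)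
    have hle : MeasurableSpace.comap (X k) inferInstance ≤ ℱ i := by
      refine le_trans ?_ (le_refl (ℱ i))
      exact le_iSup₂ (f := fun j (_ : j ≤ i) => MeasurableSpace.comap (X j) inferInstance) k hki
    exact (comap_measurable (X k)).mono hle le_rfl
  refine submartingale_of_setIntegral_le ?_ ?_ ?_
  · intro i
    exact ((hSmeas i).stronglyMeasurable).norm
  · intro i
    exact (integrable_finset_sum _ fun k _ => hint k).norm
  · intro i j hij s hs
    set W : Ω → B := fun ω => ∑ k ∈ Finset.range (i + 1), X k ω with hW
    set Z : Ω → B := fun ω => ∑ k ∈ Finset.Ico (i + 1) (j + 1), X k ω with hZ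
    have hWZ : ∀ ω, ∑ k ∈ Finset.range (j + 1), X k ω = W ω + Z ω := by
      intro ω
      rw [hW, hZ]
      simp only [Finset.range_eq_Ico]
      rw [Finset.sum_Ico_consecutive _ (Nat.zero_le _) (Nat.succ_le_succ hij)]
    have hZmeas : Measurable Z := Finset.measurable_sum _ fun k _ => hX k
    -- independence
    have hIndep : Indep (⨆ k ∈ {k : ℕ | k ≤ i}, MeasurableSpace.comap (X k) inferInstance)
        (⨆ k ∈ {k : ℕ | i < k}, MeasurableSpace.comap (X k) inferInstance) ℙ := by
      refine indep_iSup_of_disjoint (fun k => (hX k).comap_le) hind ?_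
      refine Set.disjoint_left.mpr fun k hk1 hk2 => ?_
      simp only [Set.mem_setOf_eq] at hk1 hk2
      exact absurd hk2 (not_lt.mpr hk1)
    have hTmeas : Measurable[ℱ i] (fun ω => (s.indicator (fun _ => (1:ℝ)) ω, W ω)) :=
      (measurable_const.indicator hs).prodMk (hSmeas i)
    have hℱi : (ℱ i : MeasurableSpace Ω) =
        ⨆ k ∈ {k : ℕ | k ≤ i}, MeasurableSpace.comap (X k) inferInstance := rfl
    have hZmeas' : Measurable[⨆ k ∈ {k : ℕ | i < k}, MeasurableSpace.comap (X k) inferInstance] Z := by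
      refine Finset.measurable_sum _ fun k hk => ?_
      have hik : i < k := Nat.lt_of_succ_le (Finset.mem_Ico.mp hk).1
      have hle : MeasurableSpace.comap (X k) inferInstance ≤
          ⨆ k ∈ {k : ℕ | i < k}, MeasurableSpace.comap (X k) inferInstance :=
        le_iSup₂ (f := fun j (_ : j ∈ {k : ℕ | i < k}) => MeasurableSpace.comap (X j) inferInstance) k hik
      exact (comap_measurable (X k)).mono hle le_rfl
    have hindWZ : IndepFun (fun ω => (s.indicator (fun _ => (1:ℝ)) ω, W ω)) Z ℙ := by
      have h1 := indep_of_indep_of_le_left hIndep (hℱi ▸ hTmeas.comap_le)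
      exact indep_of_indep_of_le_right h1 hZmeas'.comap_le
    have hZ0 : (∫ ω, Z ω) = 0 := by
      rw [hZ]
      rw [integral_finset_sum _ fun k _ => hint k]
      simp [h0]
    have hWmeas : Measurable W := Finset.measurable_sum _ fun k _ => hX k
    have hres := key_setIntegral_norm_le hWmeas hZmeas (ℱ.le i s hs)
      (integrable_finset_sum _ fun k _ => hint k)
      (integrable_finset_sum _ fun k _ => hint k) hZ0 hindWZ
    calc ∫ ω in s, ‖W ω‖ ≤ ∫ ω in s, ‖W ω + Z ω‖ := hres
      _ = ∫ ω in s, ‖∑ k ∈ Finset.range (j + 1), X k ω‖ := by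
        refine setIntegral_congr_ae (ℱ.le i s hs) (Filter.Eventually.of_forall fun ω _ => ?_)
        rw [hWZ ω]

end Aux2


set_option maxHeartbeats 1000000 in
/-- if there is a constant `c` such that for every mean-zero
square-integrable `B`-valued `X` (with `E‖X‖² > 0`, so that the bound `c/E‖X‖²`
is meaningful), `limsup_{r→∞} sup_{n ≥ 1} n P(T_r > n)/r² ≤ c/E‖X‖²`
(expressed via: every `b` above the bound is an eventual upper bound), then for
every mean-zero square-integrable `X`,
`liminf_{n→∞} E‖Sₙ‖²/n ≥ E‖X‖²/(32c)`; in particular `B` is cotype 2. -/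
theorem stmt17 {B : Type*} [NormedAddCommGroup B] [NormedSpace ℝ B] [MeasurableSpace B]
    [BorelSpace B] [SecondCountableTopology B] [CompleteSpace B]
    (c : ℝ) (hc : 0 < c)
    (H : ∀ (Ω : Type) [MeasureSpace Ω] [IsProbabilityMeasure (ℙ : Measure Ω)]
      (X : ℕ → Ω → B), (∀ i, Measurable (X i)) →
      iIndepFun X ℙ →
      (∀ i, IdentDistrib (X i) (X 0) ℙ ℙ) →
      MemLp (X 0) 2 ℙ → (∫ ω, X 0 ω) = 0 →
      0 < (∫ ω, ‖X 0 ω‖ ^ 2) →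
      ∀ b : ℝ, c / (∫ ω, ‖X 0 ω‖ ^ 2) < b →
        ∀ᶠ r : ℝ in atTop, ∀ n : ℕ, 1 ≤ n →
          n * (ℙ {ω | (n : ℕ∞) < exitTime X r ω}).toReal / r ^ 2 ≤ b) :
    ∀ (Ω : Type) [MeasureSpace Ω] [IsProbabilityMeasure (ℙ : Measure Ω)]
      (X : ℕ → Ω → B), (∀ i, Measurable (X i)) →
      iIndepFun X ℙ →
      (∀ i, IdentDistrib (X i) (X 0) ℙ ℙ) →
      MemLp (X 0) 2 ℙ → (∫ ω, X 0 ω) = 0 →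
      ∀ b : ℝ, b < (∫ ω, ‖X 0 ω‖ ^ 2) / (32 * c) →
        ∀ᶠ n : ℕ in atTop,
          b ≤ (∫ ω, ‖∑ k ∈ Finset.range n, X k ω‖ ^ 2) / n := by
  intro Ω _ _ X hX hind hid hℒ hmean b hb
  by_cases hbpos : b ≤ 0
  · refine Filter.Eventually.of_forall fun n => le_trans hbpos ?_
    exact div_nonneg (integral_nonneg fun ω => by positivity) (Nat.cast_nonneg n)
  push_neg at hbpos
  set σ2 := ∫ ω, ‖X 0 ω‖ ^ 2 with hσ2
  have h32 : (0:ℝ) < 32 * c := by linarith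
  have hσpos : 0 < σ2 := by
    have h := lt_trans hbpos hb
    rcases div_pos_iff.mp h with ⟨h1, _⟩ | ⟨_, h2⟩
    · exact h1
    · linarith
  set b' : ℝ := 1 / (32 * b) with hb'def
  have hb' : 0 < b' := by positivity
  have hcb' : c / σ2 < b' := by
    rw [hb'def, div_lt_div_iff₀ hσpos (by positivity)]
    have := (lt_div_iff₀ h32).mp hb
    nlinarith
  have hH := H Ω X hX hind hid hℒ hmean hσpos b' hcb'
  obtain ⟨r₀, hr₀⟩ := eventually_atTop.mp hH
  -- integrability facts
  have hXmem : ∀ i, MemLp (X i) 2 ℙ := fun i => (hid i).symm.memLp_snd hℒ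
  have hXint : ∀ i, Integrable (X i) ℙ := fun i => (hXmem i).integrable (by norm_num)
  have hX0 : ∀ i, (∫ ω, X i ω) = 0 := fun i => ((hid i).integral_eq).trans hmean
  have hSmem : ∀ n : ℕ, MemLp (fun ω => ∑ k ∈ Finset.range n, X k ω) 2 ℙ :=
    fun n => memLp_finset_sum _ fun i _ => hXmem i
  have hsub := norm_partialSum_submartingale X hX hind hXint hX0
  set R : ℝ := max r₀ 1 with hRdef
  have hev : ∀ᶠ (n:ℕ) in atTop, (2*b')*R^2 ≤ (n:ℝ) :=
    tendsto_natCast_atTop_atTop.eventually_ge_atTop _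
  filter_upwards [hev, eventually_ge_atTop 1] with n hn hn1
  have hn0 : (0:ℝ) < n := by exact_mod_cast Nat.lt_of_lt_of_le Nat.zero_lt_one hn1
  set r : ℝ := Real.sqrt ((n:ℝ)/(2*b')) with hrdef
  have hr2 : r^2 = (n:ℝ)/(2*b') := Real.sq_sqrt (by positivity)
  have hrR : R ≤ r := by
    have hR0 : 0 ≤ R := le_trans zero_le_one (le_max_right _ _)
    rw [hrdef, show R = Real.sqrt (R^2) from (Real.sqrt_sq hR0).symm]
    refine Real.sqrt_le_sqrt ?_
    rw [le_div_iff₀ (by positivity)]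
    nlinarith
  have hr1 : 1 ≤ r := le_trans (le_max_right _ _) hrR
  have hr0 : (0:ℝ) < r := lt_of_lt_of_le one_pos hr1
  have hbound := hr₀ r (le_trans (le_max_left _ _) hrR) n hn1
  set A := {ω : Ω | (n : ℕ∞) < exitTime X r ω} with hAdef
  have hAeq : A = ⋂ m, ⋂ (_ : m ≤ n), {ω : Ω | ‖∑ k ∈ Finset.range m, X k ω‖ ≤ r} := by
    ext ω
    simp only [hAdef, Set.mem_setOf_eq, Set.mem_iInter, exit_gt_iff]
  have hSm : ∀ m : ℕ, Measurable fun ω => ∑ k ∈ Finset.range m, X k ω :=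
    fun m => Finset.measurable_sum _ fun k _ => hX k
  have hAmeas : MeasurableSet A := by
    rw [hAeq]
    exact MeasurableSet.iInter fun m => MeasurableSet.iInter fun _ =>
      measurableSet_le (hSm m).norm measurable_const
  have hPA : (ℙ A).toReal ≤ 1/2 := by
    rw [hr2] at hbound
    have h3 := (div_le_iff₀ (by positivity : (0:ℝ) < (n:ℝ)/(2*b'))).mp hbound
    have h4 : b' * ((n:ℝ)/(2*b')) = (n:ℝ)/2 := by field_simp
    nlinarith [ENNReal.toReal_nonneg (a := ℙ A)]
  have hPAc : 1/2 ≤ (ℙ Aᶜ).toReal := by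
    rw [prob_compl_eq_one_sub hAmeas,
      ENNReal.toReal_sub_of_le prob_le_one ENNReal.one_ne_top]
    simp only [ENNReal.toReal_one]
    linarith
  -- maximal inequality
  have hn' : n - 1 + 1 = n := Nat.succ_pred_eq_of_pos hn1
  set ε : ℝ≥0 := r.toNNReal with hεdef
  have hcoeε : (ε:ℝ) = r := Real.coe_toNNReal r hr0.le
  have hfnonneg : (0 : ℕ → Ω → ℝ) ≤ fun i ω => ‖∑ k ∈ Finset.range (i+1), X k ω‖ :=
    fun i ω => norm_nonneg _
  have hmax := maximal_ineq hsub hfnonneg (ε := ε) (n - 1)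
  set Emax := {ω : Ω | (ε:ℝ) ≤ (Finset.range (n-1+1)).sup' Finset.nonempty_range_add_one
    fun k => ‖∑ j ∈ Finset.range (k+1), X j ω‖} with hEdef
  have hEmeas : MeasurableSet Emax :=
    measurableSet_le measurable_const
      (Finset.measurable_range_sup'' fun k _ => (hSm (k+1)).norm)
  have hsubset : Aᶜ ⊆ Emax := by
    intro ω hω
    simp only [hAdef, Set.mem_compl_iff, Set.mem_setOf_eq, not_lt] at hω
    have : ¬ ((n : ℕ∞) < exitTime X r ω) := not_lt.mpr hω
    rw [exit_gt_iff] at this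
    push_neg at this
    obtain ⟨m, hmn, hrm⟩ := this
    have hm0 : m ≠ 0 := by
      intro h0
      rw [h0] at hrm
      simp at hrm
      linarith
    have hk : m - 1 ∈ Finset.range (n-1+1) := by
      rw [Finset.mem_range]
      omega
    have hkm : m - 1 + 1 = m := Nat.succ_pred_eq_of_pos (Nat.pos_of_ne_zero hm0)
    rw [hEdef, Set.mem_setOf_eq, hcoeε]
    refine le_trans hrm.le ?_
    have := Finset.le_sup' (f := fun k => ‖∑ j ∈ Finset.range (k+1), X j ω‖) hk
    rwa [hkm] at this
  have hPE : 1/2 ≤ (ℙ Emax).toReal :=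
    le_trans hPAc (ENNReal.toReal_mono (measure_ne_top _ _) (measure_mono hsubset))
  -- convert maximal inequality to reals
  have hSint : Integrable (fun ω => ‖∑ k ∈ Finset.range n, X k ω‖) ℙ :=
    ((hSmem n).integrable one_le_two).norm
  have hmaxR : r * (ℙ Emax).toReal ≤ ∫ ω in Emax, ‖∑ k ∈ Finset.range n, X k ω‖ := by
    rw [hn'] at hmax
    have hne : (ε • ℙ Emax) ≠ ⊤ :=
      ENNReal.mul_ne_top ENNReal.coe_ne_top (measure_ne_top _ _)
    have hnn : 0 ≤ ∫ ω in Emax, ‖∑ k ∈ Finset.range n, X k ω‖ :=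
      setIntegral_nonneg hEmeas fun ω _ => norm_nonneg _
    have := (ENNReal.le_ofReal_iff_toReal_le hne hnn).mp hmax
    rwa [ENNReal.toReal_smul, NNReal.smul_def, smul_eq_mul, hcoeε] at this
  have hES : r/2 ≤ ∫ ω, ‖∑ k ∈ Finset.range n, X k ω‖ := by
    have h5 : ∫ ω in Emax, ‖∑ k ∈ Finset.range n, X k ω‖ ≤
        ∫ ω, ‖∑ k ∈ Finset.range n, X k ω‖ :=
      setIntegral_le_integral hSint (Filter.Eventually.of_forall fun ω => norm_nonneg _)
    nlinarith
  -- Cauchy-Schwarz via variance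
  have hvar := variance_nonneg (fun ω => ‖∑ k ∈ Finset.range n, X k ω‖) ℙ
  rw [variance_eq_sub ((hSmem n).norm)] at hvar
  simp only [Pi.pow_apply] at hvar
  have hrn : r^2 = 32 * b * (n:ℝ) / 2 := by
    rw [hr2, hb'def]
    field_simp
  have hIn : 0 ≤ ∫ ω, ‖∑ k ∈ Finset.range n, X k ω‖ := le_trans (by positivity) hES
  rw [le_div_iff₀ hn0]
  have h6 : (r/2)^2 ≤ (∫ ω, ‖∑ k ∈ Finset.range n, X k ω‖)^2 :=
    pow_le_pow_left₀ (by positivity) hES 2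
  nlinarith [hvar, hrn, mul_pos hbpos hn0]
end

section
/- Let B = ℓ^p with 2 ≤ p < ∞ and let X₁, …, Xₙ be i.i.d. symmetric ℓ^p-valued random variables with coordinates X_{i,j}. Then there are constants depending only on p such that E‖Sₙ‖^p is comparable to ∑_{j=1}^∞ E(∑_{i=1}^n X_{i,j}²)^{p/2}, and hence (by Rosenthal's inequality) comparable to n^{p/2} ∑_j (E X_{1,j}²)^{p/2} + n ∑_j E|X_{1,j}|^p. -/
open MeasureTheory ProbabilityTheory Set
open scoped ENNReal NNReal Topology

section St19Dev
open Finset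

namespace St19

def sg (b : Bool) : ℝ := if b then 1 else -1

lemma sg_sq (b : Bool) : sg b ^ 2 = 1 := by cases b <;> simp [sg]

def df : ℕ → ℕ
  | 0 => 1
  | l + 1 => df l * (2 * l + 1)

lemma df_pos (l : ℕ) : 0 < df l := by
  induction l with
  | zero => simp [df]
  | succ l ih => exact Nat.mul_pos ih (by omega)

lemma one_le_df (l : ℕ) : 1 ≤ df l := df_pos l

lemma df_mul_fact (l : ℕ) : df l * (2 ^ l * l.factorial) = (2 * l).factorial := by
  induction l with
  | zero => simp [df]
  | succ l ih =>
      have h2 : 2 * (l + 1) = 2 * l + 1 + 1 := by ring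
      rw [h2, Nat.factorial_succ, Nat.factorial_succ, df, pow_succ, Nat.factorial_succ]
      calc df l * (2 * l + 1) * (2 ^ l * 2 * ((l + 1) * l.factorial))
          = (2 * l + 1 + 1) * ((2 * l + 1) * (df l * (2 ^ l * l.factorial))) := by ring
        _ = (2 * l + 1 + 1) * ((2 * l + 1) * (2 * l).factorial) := by rw [ih]

lemma two_pow_mul_fact_le (j : ℕ) : 2 ^ j * j.factorial ≤ (2 * j).factorial := by
  induction j with
  | zero => simp
  | succ j ih =>
      have h2 : 2 * (j + 1) = 2 * j + 1 + 1 := by ring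
      rw [h2, Nat.factorial_succ, Nat.factorial_succ, pow_succ, Nat.factorial_succ]
      calc 2 ^ j * 2 * ((j + 1) * j.factorial)
          = (2 * (j + 1)) * (2 ^ j * j.factorial) := by ring
        _ ≤ (2 * (j + 1)) * (2 * j).factorial := Nat.mul_le_mul_left _ ih
        _ ≤ (2 * j + 1 + 1) * ((2 * j + 1) * (2 * j).factorial) := by
            have h1 : (2 * (j + 1)) * (2 * j).factorial
                = (2 * j + 1 + 1) * (1 * (2 * j).factorial) := by ring
            rw [h1]
            exact Nat.mul_le_mul_left _ (Nat.mul_le_mul_right _ (by omega))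

lemma key_choose (l j : ℕ) (hj : j ≤ l) :
    (2 * l).choose (2 * j) * df (l - j) ≤ df l * l.choose j := by
  have hK : 0 < 2 ^ l * (j.factorial * (l - j).factorial) :=
    Nat.mul_pos (Nat.pow_pos (by norm_num))
      (Nat.mul_pos (Nat.factorial_pos _) (Nat.factorial_pos _))
  refine Nat.le_of_mul_le_mul_right ?_ hK
  have h2j : 2 * j ≤ 2 * l := by omega
  have hsub : 2 * l - 2 * j = 2 * (l - j) := by omega
  have hch : (2 * l).choose (2 * j) * (2 * j).factorial * (2 * (l - j)).factorial
      = (2 * l).factorial := by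
    rw [← hsub]; exact Nat.choose_mul_factorial_mul_factorial h2j
  have hch' : l.choose j * j.factorial * (l - j).factorial = l.factorial :=
    Nat.choose_mul_factorial_mul_factorial hj
  have hpowsplit : (2:ℕ) ^ l = 2 ^ (l - j) * 2 ^ j := by
    rw [← pow_add]; congr 1; omega
  calc (2 * l).choose (2 * j) * df (l - j) * (2 ^ l * (j.factorial * (l - j).factorial))
      = (2 * l).choose (2 * j) * (df (l - j) * (2 ^ (l - j) * (l - j).factorial))
          * (2 ^ j * j.factorial) := by rw [hpowsplit]; ring
    _ = (2 * l).choose (2 * j) * (2 * (l - j)).factorial * (2 ^ j * j.factorial) := by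
          rw [df_mul_fact]
    _ ≤ (2 * l).choose (2 * j) * (2 * (l - j)).factorial * (2 * j).factorial :=
          Nat.mul_le_mul_left _ (two_pow_mul_fact_le j)
    _ = (2 * l).choose (2 * j) * (2 * j).factorial * (2 * (l - j)).factorial := by ring
    _ = (2 * l).factorial := hch
    _ = df l * (2 ^ l * l.factorial) := (df_mul_fact l).symm
    _ = df l * (2 ^ l * (l.choose j * j.factorial * (l - j).factorial)) := by rw [hch']
    _ = df l * l.choose j * (2 ^ l * (j.factorial * (l - j).factorial)) := by ring

lemma sum_even_split (F : ℕ → ℝ) (l : ℕ) :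
    ∑ k ∈ range (2 * l + 1), (if Even k then F k else 0) = ∑ j ∈ range (l + 1), F (2 * j) := by
  induction l with
  | zero => simp
  | succ l ih =>
      have h2 : 2 * (l + 1) + 1 = (2 * l + 1) + 1 + 1 := by ring
      rw [h2, sum_range_succ, sum_range_succ, ih, sum_range_succ]
      have ho : ¬ Even (2 * l + 1) := by simp [Nat.even_add_one, parity_simps]
      rw [if_neg ho, sum_range_succ]
      have h4 : Even (2 * l + 1 + 1) := ⟨l + 1, by ring⟩
      rw [if_pos h4]
      have h5 : 2 * l + 1 + 1 = 2 * (l + 1) := by ring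
      rw [h5, add_zero, ← sum_range_succ]

lemma even_binom (x y : ℝ) (l : ℕ) :
    (y + x) ^ (2 * l) + (y - x) ^ (2 * l)
      = ∑ j ∈ range (l + 1), 2 * ((2 * l).choose (2 * j) : ℝ) * x ^ (2 * j) * y ^ (2 * l - 2 * j) := by
  have h1 : (y + x) ^ (2 * l) = ∑ k ∈ range (2 * l + 1),
      x ^ k * y ^ (2 * l - k) * ((2 * l).choose k : ℝ) := by
    rw [add_comm y x]; exact add_pow x y (2 * l)
  have h2 : (y - x) ^ (2 * l) = ∑ k ∈ range (2 * l + 1),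
      (-x) ^ k * y ^ (2 * l - k) * ((2 * l).choose k : ℝ) := by
    have : y - x = -x + y := by ring
    rw [this]; exact add_pow (-x) y (2 * l)
  rw [h1, h2, ← Finset.sum_add_distrib]
  have heq : ∀ k ∈ range (2 * l + 1),
      x ^ k * y ^ (2 * l - k) * ((2 * l).choose k : ℝ)
        + (-x) ^ k * y ^ (2 * l - k) * ((2 * l).choose k : ℝ)
      = (if Even k then (fun k => 2 * ((2 * l).choose k : ℝ) * x ^ k * y ^ (2 * l - k)) k else 0) := by
    intro k _
    by_cases hk : Even k
    · rw [if_pos hk, hk.neg_pow]; ring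
    · rw [if_neg hk, (Nat.not_even_iff_odd.1 hk).neg_pow]; ring
  rw [Finset.sum_congr rfl heq, sum_even_split]

end St19

namespace St19
open Finset

def Zs {n : ℕ} (a : Fin n → ℝ) (σ : Fin n → Bool) : ℝ := ∑ i, sg (σ i) * a i

lemma sum_pi_succ {n : ℕ} (g : (Fin (n + 1) → Bool) → ℝ) :
    ∑ σ : Fin (n + 1) → Bool, g σ = ∑ b : Bool, ∑ τ : Fin n → Bool, g (Fin.cons b τ) := by
  rw [← Equiv.sum_comp (Fin.consEquiv fun _ => Bool) g, Fintype.sum_prod_type]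
  rfl

lemma Zs_cons {n : ℕ} (a : Fin (n + 1) → ℝ) (b : Bool) (τ : Fin n → Bool) :
    Zs a (Fin.cons b τ) = sg b * a 0 + Zs (fun i => a i.succ) τ := by
  unfold Zs
  rw [Fin.sum_univ_succ]
  simp

lemma card_pi_bool (n : ℕ) : (Finset.univ : Finset (Fin n → Bool)).card = 2 ^ n := by
  simp [Finset.card_univ]

lemma sum_sq_eq {n : ℕ} (a : Fin n → ℝ) :
    ∑ σ : Fin n → Bool, (Zs a σ) ^ 2 = 2 ^ n * ∑ i, (a i) ^ 2 := by
  induction n with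
  | zero => simp [Zs]
  | succ n ih =>
      rw [sum_pi_succ (fun σ => (Zs a σ) ^ 2), Fintype.sum_bool, ← Finset.sum_add_distrib]
      have key : ∀ τ, (Zs a (Fin.cons true τ)) ^ 2 + (Zs a (Fin.cons false τ)) ^ 2
          = 2 * (a 0) ^ 2 + 2 * (Zs (fun i => a i.succ) τ) ^ 2 := by
        intro τ; rw [Zs_cons, Zs_cons]; simp only [sg, Bool.false_eq_true, if_true, if_false]; ring
      rw [Finset.sum_congr rfl (fun τ _ => key τ), Finset.sum_add_distrib,
        Finset.sum_const, card_pi_bool, ← Finset.mul_sum, ih, Fin.sum_univ_succ]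
      push_cast
      ring

lemma sum_pow_le {n : ℕ} (a : Fin n → ℝ) (l : ℕ) :
    ∑ σ : Fin n → Bool, (Zs a σ) ^ (2 * l)
      ≤ 2 ^ n * df l * (∑ i, (a i) ^ 2) ^ l := by
  induction n generalizing l with
  | zero =>
      rcases Nat.eq_zero_or_pos l with hl | hl
      · subst hl; simp [Zs, df]
      · have h0 : ∀ σ : Fin 0 → Bool, (Zs a σ) ^ (2 * l) = 0 := by
          intro σ
          have hz : Zs a σ = 0 := by simp [Zs]
          rw [hz]; exact zero_pow (by omega)
        rw [Finset.sum_eq_zero (fun σ _ => h0 σ)]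
        positivity
  | succ n ih =>
      set a' : Fin n → ℝ := fun i => a i.succ with ha'
      set s : ℝ := ∑ i, (a' i) ^ 2 with hs
      have hs0 : 0 ≤ s := Finset.sum_nonneg fun i _ => sq_nonneg _
      rw [sum_pi_succ (fun σ => (Zs a σ) ^ (2 * l)), Fintype.sum_bool, ← Finset.sum_add_distrib]
      have key : ∀ τ, (Zs a (Fin.cons true τ)) ^ (2 * l) + (Zs a (Fin.cons false τ)) ^ (2 * l)
          = ∑ j ∈ Finset.range (l + 1),
              2 * ((2 * l).choose (2 * j) : ℝ) * (a 0) ^ (2 * j) * (Zs a' τ) ^ (2 * l - 2 * j) := by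
        intro τ
        rw [Zs_cons, Zs_cons]
        simp only [sg, Bool.false_eq_true, if_true, if_false]
        have h1 : (1 : ℝ) * a 0 + Zs a' τ = Zs a' τ + a 0 := by ring
        have h2 : (-1 : ℝ) * a 0 + Zs a' τ = Zs a' τ - a 0 := by ring
        rw [h1, h2]
        exact even_binom (a 0) (Zs a' τ) l
      rw [Finset.sum_congr rfl (fun τ _ => key τ), Finset.sum_comm]
      have hstep : ∀ j ∈ Finset.range (l + 1),
          (∑ τ : Fin n → Bool,
            2 * ((2 * l).choose (2 * j) : ℝ) * (a 0) ^ (2 * j) * (Zs a' τ) ^ (2 * l - 2 * j))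
          ≤ 2 * (2:ℝ) ^ n * (df l) * (l.choose j) * (a 0) ^ (2 * j) * s ^ (l - j) := by
        intro j hj
        have hjl : j ≤ l := by simpa using Nat.lt_succ_iff.1 (Finset.mem_range.1 hj)
        have hsub : 2 * l - 2 * j = 2 * (l - j) := by omega
        have ha0 : (0:ℝ) ≤ (a 0) ^ (2 * j) := by rw [pow_mul]; positivity
        rw [← Finset.mul_sum, hsub]
        have hW := ih a' (l - j)
        have hnn : (0:ℝ) ≤ 2 * ((2 * l).choose (2 * j) : ℝ) * (a 0) ^ (2 * j) :=
          mul_nonneg (by positivity) ha0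
        have hk : (((2 * l).choose (2 * j)) : ℝ) * (df (l - j) : ℝ)
            ≤ (df l : ℝ) * (l.choose j : ℝ) := by exact_mod_cast key_choose l j hjl
        have hmul := mul_le_mul_of_nonneg_right
          (mul_le_mul_of_nonneg_left hk (by positivity : (0:ℝ) ≤ 2 * (2:ℝ) ^ n))
          (mul_nonneg ha0 (pow_nonneg hs0 (l - j)))
        calc 2 * ((2 * l).choose (2 * j) : ℝ) * (a 0) ^ (2 * j)
              * ∑ τ : Fin n → Bool, (Zs a' τ) ^ (2 * (l - j))
            ≤ 2 * ((2 * l).choose (2 * j) : ℝ) * (a 0) ^ (2 * j)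
              * (2 ^ n * df (l - j) * s ^ (l - j)) := mul_le_mul_of_nonneg_left hW hnn
          _ = 2 * (2:ℝ) ^ n * (((2 * l).choose (2 * j) : ℝ) * (df (l - j) : ℝ))
                * ((a 0) ^ (2 * j) * s ^ (l - j)) := by ring
          _ ≤ 2 * (2:ℝ) ^ n * ((df l : ℝ) * (l.choose j : ℝ))
                * ((a 0) ^ (2 * j) * s ^ (l - j)) := hmul
          _ = 2 * (2:ℝ) ^ n * (df l) * (l.choose j) * (a 0) ^ (2 * j) * s ^ (l - j) := by ring
      calc (∑ j ∈ Finset.range (l + 1), ∑ τ : Fin n → Bool,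
              2 * ((2 * l).choose (2 * j) : ℝ) * (a 0) ^ (2 * j) * (Zs a' τ) ^ (2 * l - 2 * j))
          ≤ ∑ j ∈ Finset.range (l + 1),
              2 * (2:ℝ) ^ n * (df l) * (l.choose j) * (a 0) ^ (2 * j) * s ^ (l - j) :=
            Finset.sum_le_sum hstep
        _ = 2 ^ (n + 1) * (df l) * ∑ j ∈ Finset.range (l + 1),
              ((a 0) ^ 2) ^ j * s ^ (l - j) * (l.choose j) := by
            rw [Finset.mul_sum]
            refine Finset.sum_congr rfl fun j hj => ?_
            rw [pow_mul]
            ring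
        _ = 2 ^ (n + 1) * (df l) * ((a 0) ^ 2 + s) ^ l := by rw [add_pow]
        _ = 2 ^ (n + 1) * df l * (∑ i, (a i) ^ 2) ^ l := by
            rw [Fin.sum_univ_succ]

/-- The Khintchine constant for exponent `p`. -/
noncomputable def Bconst (p : ℝ) : ℝ := (df ⌈p / 2⌉₊ : ℝ)

lemma one_le_Bconst (p : ℝ) : 1 ≤ Bconst p := by
  have h := one_le_df ⌈p / 2⌉₊
  unfold Bconst
  exact_mod_cast h

section Khintchine
variable {p : ℝ} (hp : 2 ≤ p) {n : ℕ}

lemma w_sum : ∑ _σ : Fin n → Bool, ((2:ℝ) ^ n)⁻¹ = 1 := by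
  rw [Finset.sum_const, card_pi_bool, nsmul_eq_mul]
  push_cast
  field_simp

lemma sq_rpow_half (p : ℝ) (hp : 0 ≤ p) (z : ℝ) : (z ^ 2 : ℝ) ^ (p / 2) = |z| ^ p := by
  rw [← sq_abs z]
  rw [← Real.rpow_natCast |z| 2, ← Real.rpow_mul (abs_nonneg z)]
  norm_num
  rw [mul_div_cancel₀]
  norm_num

include hp in
lemma khintchine_lower (a : Fin n → ℝ) :
    (2:ℝ) ^ n * (∑ i, (a i) ^ 2) ^ (p / 2) ≤ ∑ σ : Fin n → Bool, |Zs a σ| ^ p := by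
  have hp0 : (0:ℝ) ≤ p := by linarith
  have hp2 : (1:ℝ) ≤ p / 2 := by linarith
  set w : (Fin n → Bool) → ℝ := fun _ => ((2:ℝ) ^ n)⁻¹ with hw
  have hm := Real.rpow_arith_mean_le_arith_mean_rpow Finset.univ w (fun σ => (Zs a σ) ^ 2)
    (fun i _ => by positivity) w_sum (fun i _ => sq_nonneg _) hp2
  have h1 : ∑ σ : Fin n → Bool, w σ * (Zs a σ) ^ 2 = ∑ i, (a i) ^ 2 := by
    rw [← Finset.mul_sum, sum_sq_eq]
    field_simp
  have h2 : ∑ σ : Fin n → Bool, w σ * ((Zs a σ) ^ 2) ^ (p / 2)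
      = ((2:ℝ) ^ n)⁻¹ * ∑ σ : Fin n → Bool, |Zs a σ| ^ p := by
    rw [← Finset.mul_sum]
    congr 1
    exact Finset.sum_congr rfl fun σ _ => sq_rpow_half p hp0 _
  rw [h1, h2] at hm
  have h2n : (0:ℝ) < 2 ^ n := by positivity
  calc (2:ℝ) ^ n * (∑ i, (a i) ^ 2) ^ (p / 2)
      ≤ (2:ℝ) ^ n * (((2:ℝ) ^ n)⁻¹ * ∑ σ : Fin n → Bool, |Zs a σ| ^ p) :=
        mul_le_mul_of_nonneg_left hm h2n.le
    _ = ∑ σ : Fin n → Bool, |Zs a σ| ^ p := by field_simp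

include hp in
lemma khintchine_upper (a : Fin n → ℝ) :
    ∑ σ : Fin n → Bool, |Zs a σ| ^ p ≤ (2:ℝ) ^ n * Bconst p * (∑ i, (a i) ^ 2) ^ (p / 2) := by
  have hp0 : (0:ℝ) < p := by linarith
  set m : ℕ := ⌈p / 2⌉₊ with hmdef
  have hm1 : 1 ≤ m := by
    rw [hmdef]
    exact Nat.one_le_ceil_iff.2 (by linarith)
  have hpm : p ≤ 2 * m := by
    have := Nat.le_ceil (p / 2)
    have : p / 2 ≤ (m : ℝ) := this
    linarith
  set r : ℝ := 2 * m / p with hrdef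
  have hr1 : 1 ≤ r := by
    rw [hrdef, le_div_iff₀ hp0]
    linarith
  have hr0 : 0 < r := by linarith
  set s : ℝ := ∑ i, (a i) ^ 2 with hs
  have hs0 : 0 ≤ s := Finset.sum_nonneg fun i _ => sq_nonneg _
  set w : (Fin n → Bool) → ℝ := fun _ => ((2:ℝ) ^ n)⁻¹ with hw
  have h2n : (0:ℝ) < 2 ^ n := by positivity
  have hmean := Real.arith_mean_le_rpow_mean Finset.univ w (fun σ => |Zs a σ| ^ p)
    (fun i _ => by positivity) w_sum (fun i _ => by positivity) hr1
  -- rewrite the RHS of hmean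
  have hZr : ∀ z : ℝ, (|z| ^ p) ^ r = z ^ (2 * m) := by
    intro z
    rw [← Real.rpow_mul (abs_nonneg z)]
    have : p * r = (2 * m : ℕ) := by
      rw [hrdef]
      push_cast
      field_simp
    rw [this, Real.rpow_natCast]
    exact Even.pow_abs ⟨m, by ring⟩ z
  have hsum : ∑ σ : Fin n → Bool, w σ * (|Zs a σ| ^ p) ^ r
      = ((2:ℝ) ^ n)⁻¹ * ∑ σ : Fin n → Bool, (Zs a σ) ^ (2 * m) := by
    rw [← Finset.mul_sum]
    congr 1
    exact Finset.sum_congr rfl fun σ _ => by rw [hZr]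
  have hbound : ((2:ℝ) ^ n)⁻¹ * ∑ σ : Fin n → Bool, (Zs a σ) ^ (2 * m)
      ≤ (df m : ℝ) * s ^ m := by
    have := sum_pow_le a m
    calc ((2:ℝ) ^ n)⁻¹ * ∑ σ : Fin n → Bool, (Zs a σ) ^ (2 * m)
        ≤ ((2:ℝ) ^ n)⁻¹ * ((2:ℝ) ^ n * df m * s ^ m) :=
          mul_le_mul_of_nonneg_left this (by positivity)
      _ = (df m : ℝ) * s ^ m := by field_simp
  have hrw : ∑ σ : Fin n → Bool, w σ * |Zs a σ| ^ p
      = ((2:ℝ) ^ n)⁻¹ * ∑ σ : Fin n → Bool, |Zs a σ| ^ p := by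
    rw [← Finset.mul_sum]
  have hfinal : ((2:ℝ) ^ n)⁻¹ * ∑ σ : Fin n → Bool, |Zs a σ| ^ p
      ≤ ((df m : ℝ) * s ^ m) ^ (1 / r) := by
    rw [← hrw]
    refine hmean.trans ?_
    refine Real.rpow_le_rpow ?_ ?_ (by positivity)
    · exact Finset.sum_nonneg fun i _ => by positivity
    · rw [hsum]; exact hbound
  have hsplit : ((df m : ℝ) * s ^ m) ^ (1 / r) ≤ (df m : ℝ) * s ^ (p / 2) := by
    have hdf1 : (1:ℝ) ≤ (df m : ℝ) := by exact_mod_cast one_le_df m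
    rw [Real.mul_rpow (by positivity) (by positivity)]
    have h1 : ((df m : ℝ)) ^ (1 / r) ≤ (df m : ℝ) := by
      calc ((df m : ℝ)) ^ (1 / r) ≤ ((df m : ℝ)) ^ (1:ℝ) :=
            Real.rpow_le_rpow_of_exponent_le hdf1 (by
              rw [div_le_one hr0]; linarith)
        _ = (df m : ℝ) := Real.rpow_one _
    have h2 : (s ^ m) ^ (1 / r) = s ^ (p / 2) := by
      rw [← Real.rpow_natCast s m, ← Real.rpow_mul hs0]
      congr 1
      rw [hrdef]
      have hm0 : (m:ℝ) ≠ 0 := by positivity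
      field_simp
    rw [h2]
    exact mul_le_mul_of_nonneg_right h1 (by positivity)
  have := hfinal.trans hsplit
  calc ∑ σ : Fin n → Bool, |Zs a σ| ^ p
      = (2:ℝ) ^ n * (((2:ℝ) ^ n)⁻¹ * ∑ σ : Fin n → Bool, |Zs a σ| ^ p) := by field_simp
    _ ≤ (2:ℝ) ^ n * ((df m : ℝ) * s ^ (p / 2)) := mul_le_mul_of_nonneg_left this h2n.le
    _ = (2:ℝ) ^ n * Bconst p * s ^ (p / 2) := by rw [Bconst]; ring

end Khintchine
end St19


namespace St19

variable {Ω : Type} [MeasurableSpace Ω] {μ : Measure Ω} [IsProbabilityMeasure μ]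

/-- Symmetrization: flipping signs of independent symmetric summands does not change
the law of the sum. -/
lemma map_signed_sum_eq (Y : ℕ → Ω → ℝ) (hY : ∀ i, Measurable (Y i))
    (hind : iIndepFun Y μ)
    (hsym : ∀ i, IdentDistrib (Y i) (fun ω => -(Y i ω)) μ μ)
    (ε : ℕ → ℝ) (hε : ∀ i, ε i = 1 ∨ ε i = -1) (n : ℕ) :
    Measure.map (fun ω => ∑ i ∈ range n, ε i * Y i ω) μ
      = Measure.map (fun ω => ∑ i ∈ range n, Y i ω) μ := by
  induction n with
  | zero => simp
  | succ n ih =>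
      set A : Ω → ℝ := fun ω => ∑ i ∈ range n, ε i * Y i ω with hA
      set B : Ω → ℝ := fun ω => ε n * Y n ω with hB
      set A' : Ω → ℝ := fun ω => ∑ i ∈ range n, Y i ω with hA'
      set B' : Ω → ℝ := fun ω => Y n ω with hB'
      have hZmeas : ∀ i, Measurable fun ω => ε i * Y i ω := fun i => (hY i).const_mul _
      have hZind : iIndepFun (fun i ω => ε i * Y i ω) μ :=
        hind.comp (fun i x => ε i * x) fun i => measurable_const_mul _
      have hAmeas : Measurable A := by
        apply Finset.measurable_sum
        exact fun i _ => hZmeas i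
      have hA'meas : Measurable A' := by
        apply Finset.measurable_sum
        exact fun i _ => hY i
      have hBmeas : Measurable B := hZmeas n
      have hB'meas : Measurable B' := hY n
      have hnr : n ∉ range n := by simp
      have hAB : IndepFun A B μ := by
        have h := hZind.indepFun_finset_sum_of_notMem hZmeas hnr
        have hfun : (∑ j ∈ range n, fun ω => ε j * Y j ω) = A := by
          funext ω; simp [hA, Finset.sum_apply]
        rwa [hfun] at h
      have hA'B' : IndepFun A' B' μ := by
        have h := hind.indepFun_finset_sum_of_notMem hY hnr
        have hfun : (∑ j ∈ range n, Y j) = A' := by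
          funext ω; simp [hA', Finset.sum_apply]
        rwa [hfun] at h
      have hmapB : Measure.map B μ = Measure.map B' μ := by
        rcases hε n with h1 | h1
        · have : B = B' := by funext ω; simp [hB, hB', h1]
          rw [this]
        · have hBneg : B = fun ω => -(Y n ω) := by funext ω; simp [hB, h1]
          rw [hBneg]
          exact ((hsym n).symm.map_eq)
      have hsum : (fun ω => ∑ i ∈ range (n + 1), ε i * Y i ω) = fun ω => A ω + B ω := by
        funext ω; rw [Finset.sum_range_succ]
      have hsum' : (fun ω => ∑ i ∈ range (n + 1), Y i ω) = fun ω => A' ω + B' ω := by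
        funext ω; rw [Finset.sum_range_succ]
      rw [hsum, hsum']
      have hcomp : (fun ω => A ω + B ω)
          = (fun z : ℝ × ℝ => z.1 + z.2) ∘ (fun ω => (A ω, B ω)) := rfl
      have hcomp' : (fun ω => A' ω + B' ω)
          = (fun z : ℝ × ℝ => z.1 + z.2) ∘ (fun ω => (A' ω, B' ω)) := rfl
      rw [hcomp, hcomp']
      rw [← Measure.map_map measurable_add (hAmeas.prodMk hBmeas),
        ← Measure.map_map measurable_add (hA'meas.prodMk hB'meas)]
      congr 1
      rw [(indepFun_iff_map_prod_eq_prod_map_map hAmeas.aemeasurable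
            hBmeas.aemeasurable).1 hAB,
        (indepFun_iff_map_prod_eq_prod_map_map hA'meas.aemeasurable
            hB'meas.aemeasurable).1 hA'B',
        ih, hmapB]

lemma lintegral_signed_sum_eq (Y : ℕ → Ω → ℝ) (hY : ∀ i, Measurable (Y i))
    (hind : iIndepFun Y μ)
    (hsym : ∀ i, IdentDistrib (Y i) (fun ω => -(Y i ω)) μ μ)
    (ε : ℕ → ℝ) (hε : ∀ i, ε i = 1 ∨ ε i = -1) (n : ℕ)
    (F : ℝ → ℝ≥0∞) (hF : Measurable F) :
    ∫⁻ ω, F (∑ i ∈ range n, ε i * Y i ω) ∂μ = ∫⁻ ω, F (∑ i ∈ range n, Y i ω) ∂μ := by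
  have h1 : Measurable fun ω => ∑ i ∈ range n, ε i * Y i ω :=
    Finset.measurable_sum _ fun i _ => (hY i).const_mul _
  have h2 : Measurable fun ω => ∑ i ∈ range n, Y i ω :=
    Finset.measurable_sum _ fun i _ => hY i
  rw [← lintegral_map hF h1, ← lintegral_map hF h2,
    map_signed_sum_eq Y hY hind hsym ε hε n]

/-! ### ENNReal helpers -/

lemma rpow_add_of_pos (x : ℝ≥0∞) (a b : ℝ) (ha : 0 < a) (hb : 0 < b) :
    x ^ (a + b) = x ^ a * x ^ b := by
  rcases eq_or_ne x 0 with rfl | hx0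
  · rw [ENNReal.zero_rpow_of_pos ha, ENNReal.zero_rpow_of_pos hb,
      ENNReal.zero_rpow_of_pos (by linarith), zero_mul]
  rcases eq_or_ne x ⊤ with rfl | hxt
  · rw [ENNReal.top_rpow_of_pos ha, ENNReal.top_rpow_of_pos hb,
      ENNReal.top_rpow_of_pos (by linarith), ENNReal.top_mul_top]
  · exact ENNReal.rpow_add a b hx0 hxt

lemma self_mul_rpow (x : ℝ≥0∞) (r : ℝ) (hr : 0 < r) : x * x ^ r = x ^ (1 + r) := by
  rw [rpow_add_of_pos x 1 r one_pos hr, ENNReal.rpow_one]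

lemma add_rpow_le (x y : ℝ≥0∞) (r : ℝ) (hr : 0 ≤ r) :
    (x + y) ^ r ≤ 2 ^ r * (x ^ r + y ^ r) := by
  have h1 : x + y ≤ 2 * max x y := by
    rw [two_mul]
    exact add_le_add (le_max_left x y) (le_max_right x y)
  calc (x + y) ^ r ≤ (2 * max x y) ^ r := ENNReal.rpow_le_rpow h1 hr
    _ = 2 ^ r * (max x y) ^ r := ENNReal.mul_rpow_of_nonneg _ _ hr
    _ ≤ 2 ^ r * (x ^ r + y ^ r) := by
        gcongr
        rcases max_cases x y with ⟨hm, _⟩ | ⟨hm, _⟩ <;> rw [hm]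
        · exact le_add_right le_rfl
        · exact le_add_left le_rfl

lemma geom_le_add (x y : ℝ≥0∞) (α β : ℝ) (hα : 0 ≤ α) (hβ : 0 ≤ β) (hαβ : α + β = 1) :
    x ^ α * y ^ β ≤ x + y := by
  have hx : x ^ α ≤ (x + y) ^ α := ENNReal.rpow_le_rpow (le_add_right le_rfl) hα
  have hy : y ^ β ≤ (x + y) ^ β := ENNReal.rpow_le_rpow (le_add_left le_rfl) hβ
  calc x ^ α * y ^ β ≤ (x + y) ^ α * (x + y) ^ β := mul_le_mul' hx hy
    _ ≤ x + y := by
        rcases eq_or_lt_of_le hα with hα0 | hα0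
        · rw [← hα0, ENNReal.rpow_zero, one_mul]
          have : β = 1 := by linarith
          rw [this, ENNReal.rpow_one]
        rcases eq_or_lt_of_le hβ with hβ0 | hβ0
        · rw [← hβ0, ENNReal.rpow_zero, mul_one]
          have : α = 1 := by linarith
          rw [this, ENNReal.rpow_one]
        rw [← rpow_add_of_pos _ _ _ hα0 hβ0, hαβ, ENNReal.rpow_one]

/-- Jensen for concave power functions on a probability space. -/
lemma lintegral_rpow_le (f : Ω → ℝ≥0∞) (hf : Measurable f) (r : ℝ) (hr0 : 0 ≤ r)
    (hr1 : r ≤ 1) : ∫⁻ ω, (f ω) ^ r ∂μ ≤ (∫⁻ ω, f ω ∂μ) ^ r := by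
  rcases eq_or_lt_of_le hr0 with h0 | h0
  · simp [← h0]
  rcases eq_or_lt_of_le hr1 with h1 | h1
  · simp [h1]
  have hr : r ≠ 0 := h0.ne'
  have hr' : (1:ℝ) - r ≠ 0 := by intro h; apply absurd h1; linarith [h]
  have hconj : Real.HolderConjugate (1 / r) (1 / (1 - r)) := by
    rw [Real.holderConjugate_iff]
    refine ⟨by rw [lt_div_iff₀ h0]; linarith, ?_⟩
    rw [one_div, inv_inv, one_div, inv_inv]
    ring
  have hH := ENNReal.lintegral_mul_le_Lp_mul_Lq μ hconj
    (f := fun ω => (f ω) ^ r) (g := fun _ => 1)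
    ((hf.pow_const r).aemeasurable) aemeasurable_const
  have hid : ∀ ω : Ω, ((f ω) ^ r) ^ (1 / r) = f ω := by
    intro ω
    rw [← ENNReal.rpow_mul, mul_one_div, div_self hr, ENNReal.rpow_one]
  simp only [Pi.mul_apply, mul_one, hid, ENNReal.one_rpow, lintegral_one, measure_univ,
    one_div_one_div] at hH
  simpa using hH

/-- Jensen for convex power functions on a probability space. -/
lemma le_lintegral_rpow (f : Ω → ℝ≥0∞) (hf : Measurable f) (q : ℝ) (hq : 1 ≤ q) :
    (∫⁻ ω, f ω ∂μ) ^ q ≤ ∫⁻ ω, (f ω) ^ q ∂μ := by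
  have hq0 : 0 < q := by linarith
  have h := lintegral_rpow_le (μ := μ) (fun ω => (f ω) ^ q) (hf.pow_const q) (1 / q)
    (by positivity) (by rw [div_le_one hq0]; linarith)
  have hid : ∀ ω, ((f ω) ^ q) ^ (1 / q) = f ω := by
    intro ω
    rw [← ENNReal.rpow_mul, mul_one_div, div_self hq0.ne', ENNReal.rpow_one]
  simp only [hid] at h
  calc (∫⁻ ω, f ω ∂μ) ^ q ≤ ((∫⁻ ω, (f ω) ^ q ∂μ) ^ (1 / q)) ^ q :=
        ENNReal.rpow_le_rpow h hq0.le
    _ = ∫⁻ ω, (f ω) ^ q ∂μ := by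
        rw [← ENNReal.rpow_mul, one_div, inv_mul_cancel₀ hq0.ne', ENNReal.rpow_one]

/-- Lyapunov interpolation: `E f^(q-1) ≤ (E f)^θ (E f^q)^(1-θ)` with `θ = 1/(q-1)`. -/
lemma lintegral_rpow_interp (f : Ω → ℝ≥0∞) (hf : Measurable f) (q : ℝ) (hq : 2 < q) :
    ∫⁻ ω, (f ω) ^ (q - 1) ∂μ
      ≤ (∫⁻ ω, f ω ∂μ) ^ (1 / (q - 1)) * (∫⁻ ω, (f ω) ^ q ∂μ) ^ (1 - 1 / (q - 1)) := by
  set θ : ℝ := 1 / (q - 1) with hθ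
  have hq1 : (1:ℝ) < q - 1 := by linarith
  have hθ0 : 0 < θ := by positivity
  have hθ1 : θ < 1 := by rw [hθ, div_lt_one (by linarith)]; linarith
  have hconj : Real.HolderConjugate (1 / θ) (1 / (1 - θ)) := by
    have h1θ : (1:ℝ) - θ ≠ 0 := by intro h; apply absurd hθ1; linarith [h]
    rw [Real.holderConjugate_iff]
    refine ⟨by rw [lt_div_iff₀ hθ0]; linarith, ?_⟩
    rw [one_div, inv_inv, one_div, inv_inv]
    ring
  have hexp : θ + (1 - θ) * q = q - 1 := by
    rw [hθ]; field_simp; ring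
  have hsplit : ∀ ω, (f ω) ^ (q - 1) = (f ω) ^ θ * (f ω) ^ ((1 - θ) * q) := by
    intro ω
    rw [← rpow_add_of_pos _ _ _ hθ0 (by nlinarith), hexp]
  have hH := ENNReal.lintegral_mul_le_Lp_mul_Lq μ hconj
    (f := fun ω => (f ω) ^ θ) (g := fun ω => (f ω) ^ ((1 - θ) * q))
    ((hf.pow_const θ).aemeasurable) ((hf.pow_const _).aemeasurable)
  simp only [Pi.mul_apply] at hH
  calc ∫⁻ ω, (f ω) ^ (q - 1) ∂μ
      = ∫⁻ ω, (f ω) ^ θ * (f ω) ^ ((1 - θ) * q) ∂μ := by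
        exact lintegral_congr fun ω => hsplit ω
    _ ≤ (∫⁻ ω, ((f ω) ^ θ) ^ (1 / θ) ∂μ) ^ (1 / (1 / θ))
        * (∫⁻ ω, ((f ω) ^ ((1 - θ) * q)) ^ (1 / (1 - θ)) ∂μ) ^ (1 / (1 / (1 - θ))) := hH
    _ = (∫⁻ ω, f ω ∂μ) ^ θ * (∫⁻ ω, (f ω) ^ q ∂μ) ^ (1 - θ) := by
        have h1 : ∀ ω, ((f ω) ^ θ) ^ (1 / θ) = f ω := by
          intro ω
          rw [← ENNReal.rpow_mul, mul_one_div, div_self hθ0.ne', ENNReal.rpow_one]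
        have h2 : ∀ ω, ((f ω) ^ ((1 - θ) * q)) ^ (1 / (1 - θ)) = (f ω) ^ q := by
          intro ω
          rw [← ENNReal.rpow_mul]
          congr 1
          have h1θ : (1:ℝ) - θ ≠ 0 := by intro h; apply absurd hθ1; linarith [h]
          rw [mul_one_div, mul_comm (1 - θ) q, mul_div_assoc, div_self h1θ, mul_one]
        simp only [h1, h2, one_div_one_div]

lemma sum_rpow_le_rpow_sum {ι : Type*} (s : Finset ι) (f : ι → ℝ≥0∞) (q : ℝ) (hq : 1 ≤ q) :
    ∑ i ∈ s, (f i) ^ q ≤ (∑ i ∈ s, f i) ^ q := by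
  classical
  induction s using Finset.induction_on with
  | empty => simp [ENNReal.zero_rpow_of_pos (by linarith : (0:ℝ) < q)]
  | @insert a s hnotmem ih =>
      rw [Finset.sum_insert hnotmem, Finset.sum_insert hnotmem]
      calc (f a) ^ q + ∑ i ∈ s, (f i) ^ q ≤ (f a) ^ q + (∑ i ∈ s, f i) ^ q := by gcongr
        _ ≤ _ := ENNReal.add_rpow_le_rpow_add _ _ hq

end St19

namespace St19
open MeasureTheory ProbabilityTheory Finset
open scoped ENNReal

section Rosenthal
variable {Ω : Type} [MeasurableSpace Ω] {μ : Measure Ω} [IsProbabilityMeasure μ]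

lemma rosenthal_step (V : ℕ → Ω → ℝ≥0∞) (hV : ∀ i, Measurable (V i))
    (hind : iIndepFun V μ)
    (hid : ∀ i, IdentDistrib (V i) (V 0) μ μ)
    (n : ℕ) (q : ℝ) (hq : 1 < q) :
    ∫⁻ ω, (∑ i ∈ range n, V i ω) ^ q ∂μ
      ≤ 2 ^ (q - 1) * ((n : ℝ≥0∞) * (∫⁻ ω, V 0 ω ∂μ)
            * ∫⁻ ω, (∑ i ∈ range n, V i ω) ^ (q - 1) ∂μ
          + (n : ℝ≥0∞) * ∫⁻ ω, (V 0 ω) ^ q ∂μ) := by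
  set S : Ω → ℝ≥0∞ := fun ω => ∑ i ∈ range n, V i ω with hS
  have hSmeas : Measurable S := Finset.measurable_sum _ fun i _ => hV i
  have hq0 : (0:ℝ) < q - 1 := by linarith
  set m : ℝ≥0∞ := ∫⁻ ω, V 0 ω ∂μ with hm
  set vq : ℝ≥0∞ := ∫⁻ ω, (V 0 ω) ^ q ∂μ with hvq
  -- pointwise decomposition
  have hdecomp : ∀ ω, S ω ^ q = ∑ i ∈ range n, V i ω * S ω ^ (q - 1) := by
    intro ω
    rw [← Finset.sum_mul]
    have h1 : (∑ i ∈ range n, V i ω) = S ω := rfl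
    rw [h1, self_mul_rpow _ _ hq0]
    norm_num
  have hmain : ∀ i ∈ range n,
      ∫⁻ ω, V i ω * S ω ^ (q - 1) ∂μ
        ≤ 2 ^ (q - 1) * (m * ∫⁻ ω, S ω ^ (q - 1) ∂μ + vq) := by
    intro i hi
    set T : Ω → ℝ≥0∞ := fun ω => ∑ k ∈ (range n).erase i, V k ω with hT
    have hTmeas : Measurable T := Finset.measurable_sum _ fun k _ => hV k
    have hSi : ∀ ω, S ω = T ω + V i ω := by
      intro ω
      rw [hT, hS]
      exact (Finset.sum_erase_add _ _ hi).symm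
    have hpt : ∀ ω, V i ω * S ω ^ (q - 1)
        ≤ 2 ^ (q - 1) * (V i ω * T ω ^ (q - 1) + V i ω ^ q) := by
      intro ω
      rw [hSi ω]
      calc V i ω * (T ω + V i ω) ^ (q - 1)
          ≤ V i ω * (2 ^ (q - 1) * (T ω ^ (q - 1) + V i ω ^ (q - 1))) :=
            mul_le_mul' le_rfl (add_rpow_le _ _ _ hq0.le)
        _ = 2 ^ (q - 1) * (V i ω * T ω ^ (q - 1) + V i ω * V i ω ^ (q - 1)) := by ring
        _ = 2 ^ (q - 1) * (V i ω * T ω ^ (q - 1) + V i ω ^ q) := by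
            rw [self_mul_rpow _ _ hq0]
            norm_num
    have hTq : Measurable fun ω => T ω ^ (q - 1) := hTmeas.pow_const _
    have hindep : IndepFun (V i) (fun ω => T ω ^ (q - 1)) μ := by
      have h := (hind.indepFun_finset_sum_of_notMem hV
        (Finset.notMem_erase i (range n))).symm
      have hfun : (∑ j ∈ (range n).erase i, V j) = T := by
        funext ω; simp [hT, Finset.sum_apply]
      rw [hfun] at h
      exact h.comp measurable_id (measurable_id'.pow_const _)
    have hprod : ∫⁻ ω, V i ω * T ω ^ (q - 1) ∂μ
        = (∫⁻ ω, V i ω ∂μ) * ∫⁻ ω, T ω ^ (q - 1) ∂μ :=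
      lintegral_mul_eq_lintegral_mul_lintegral_of_indepFun (hV i) hTq hindep
    have hVi : ∫⁻ ω, V i ω ∂μ = m := (hid i).lintegral_eq
    have hViq : ∫⁻ ω, (V i ω) ^ q ∂μ = vq := by
      have := (hid i).comp (u := fun x : ℝ≥0∞ => x ^ q) (measurable_id'.pow_const _)
      exact this.lintegral_eq
    have hTS : ∫⁻ ω, T ω ^ (q - 1) ∂μ ≤ ∫⁻ ω, S ω ^ (q - 1) ∂μ := by
      refine lintegral_mono fun ω => ?_
      refine ENNReal.rpow_le_rpow ?_ hq0.le
      rw [hT, hS]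
      exact Finset.sum_le_sum_of_subset (Finset.erase_subset _ _)
    calc ∫⁻ ω, V i ω * S ω ^ (q - 1) ∂μ
        ≤ ∫⁻ ω, 2 ^ (q - 1) * (V i ω * T ω ^ (q - 1) + V i ω ^ q) ∂μ :=
          lintegral_mono hpt
      _ = 2 ^ (q - 1) * (∫⁻ ω, V i ω * T ω ^ (q - 1) ∂μ + ∫⁻ ω, (V i ω) ^ q ∂μ) := by
          rw [lintegral_const_mul _ (f := fun ω => V i ω * T ω ^ (q - 1) + V i ω ^ q)
              (((hV i).mul hTq).add ((hV i).pow_const _)),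
            lintegral_add_left (f := fun ω => V i ω * T ω ^ (q - 1)) ((hV i).mul hTq)]
      _ = 2 ^ (q - 1) * (m * ∫⁻ ω, T ω ^ (q - 1) ∂μ + vq) := by
          rw [hprod, hVi, hViq]
      _ ≤ 2 ^ (q - 1) * (m * ∫⁻ ω, S ω ^ (q - 1) ∂μ + vq) := by gcongr
  calc ∫⁻ ω, S ω ^ q ∂μ
      = ∑ i ∈ range n, ∫⁻ ω, V i ω * S ω ^ (q - 1) ∂μ := by
        rw [← lintegral_finset_sum _ (f := fun i ω => V i ω * S ω ^ (q - 1))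
          fun i _ => (hV i).mul (hSmeas.pow_const _)]
        exact lintegral_congr hdecomp
    _ ≤ ∑ _i ∈ range n, 2 ^ (q - 1) * (m * ∫⁻ ω, S ω ^ (q - 1) ∂μ + vq) :=
        Finset.sum_le_sum hmain
    _ = (n : ℝ≥0∞) * (2 ^ (q - 1) * (m * ∫⁻ ω, S ω ^ (q - 1) ∂μ + vq)) := by
        rw [Finset.sum_const, Finset.card_range, nsmul_eq_mul]
    _ = 2 ^ (q - 1) * ((n : ℝ≥0∞) * m * ∫⁻ ω, S ω ^ (q - 1) ∂μ + (n : ℝ≥0∞) * vq) := by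
        ring

end Rosenthal
end St19

namespace St19
open MeasureTheory ProbabilityTheory Finset
open scoped ENNReal

section Rosenthal2
variable {Ω : Type} [MeasurableSpace Ω] {μ : Measure Ω} [IsProbabilityMeasure μ]

lemma rpow_fuse {x : ℝ≥0∞} (hx0 : x ≠ 0) (hxt : x ≠ ⊤) (a b : ℝ) :
    x ^ a * x ^ b = x ^ (a + b) := (ENNReal.rpow_add a b hx0 hxt).symm

lemma two_rpow_ne_top {r : ℝ} (hr : 0 ≤ r) : (2:ℝ≥0∞) ^ r ≠ ⊤ :=
  ENNReal.rpow_ne_top_of_nonneg hr (by norm_num)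

lemma one_le_two_rpow {r : ℝ} (hr : 0 ≤ r) : (1:ℝ≥0∞) ≤ (2:ℝ≥0∞) ^ r := by
  calc (1:ℝ≥0∞) = (2:ℝ≥0∞) ^ (0:ℝ) := by simp
    _ ≤ (2:ℝ≥0∞) ^ r := ENNReal.rpow_le_rpow_of_exponent_le one_le_two hr

lemma two_rpow_le {r s : ℝ} (h : r ≤ s) : (2:ℝ≥0∞) ^ r ≤ (2:ℝ≥0∞) ^ s :=
  ENNReal.rpow_le_rpow_of_exponent_le one_le_two h

/-- If `n = 0` or `E V₀ = 0` then `E Sₙ^q = 0`. -/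
lemma lint_S_zero (V : ℕ → Ω → ℝ≥0∞) (hV : ∀ i, Measurable (V i))
    (hid : ∀ i, IdentDistrib (V i) (V 0) μ μ) (n : ℕ) (q : ℝ) (hq : 0 < q)
    (h : n = 0 ∨ (∫⁻ ω, V 0 ω ∂μ) = 0) :
    ∫⁻ ω, (∑ i ∈ range n, V i ω) ^ q ∂μ = 0 := by
  have hSmeas : Measurable fun ω => ∑ i ∈ range n, V i ω :=
    Finset.measurable_sum _ fun i _ => hV i
  rcases h with h | h
  · subst h
    simp [ENNReal.zero_rpow_of_pos hq]
  · have hzero : ∫⁻ ω, (∑ i ∈ range n, V i ω) ∂μ = 0 := by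
      rw [lintegral_finset_sum _ fun i _ => hV i]
      refine Finset.sum_eq_zero fun i _ => ?_
      rw [(hid i).lintegral_eq, h]
    have hae : (fun ω => ∑ i ∈ range n, V i ω) =ᵐ[μ] 0 :=
      (lintegral_eq_zero_iff hSmeas).1 hzero
    have : (fun ω => (∑ i ∈ range n, V i ω) ^ q) =ᵐ[μ] 0 := by
      filter_upwards [hae] with ω hω
      simp only [Pi.zero_apply] at hω ⊢
      rw [hω, ENNReal.zero_rpow_of_pos hq]
    rw [lintegral_congr_ae this]
    simp

/-- Rosenthal upper bound, base case `1 ≤ q ≤ 2`. -/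
lemma rosenthal_base (V : ℕ → Ω → ℝ≥0∞) (hV : ∀ i, Measurable (V i))
    (hind : iIndepFun V μ)
    (hid : ∀ i, IdentDistrib (V i) (V 0) μ μ)
    (n : ℕ) (q : ℝ) (hq1 : 1 ≤ q) (hq2 : q ≤ 2) :
    ∫⁻ ω, (∑ i ∈ range n, V i ω) ^ q ∂μ
      ≤ 2 ^ q * (((n:ℝ≥0∞) * ∫⁻ ω, V 0 ω ∂μ) ^ q
          + (n:ℝ≥0∞) * ∫⁻ ω, (V 0 ω) ^ q ∂μ) := by
  set m : ℝ≥0∞ := ∫⁻ ω, V 0 ω ∂μ with hm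
  set S : Ω → ℝ≥0∞ := fun ω => ∑ i ∈ range n, V i ω with hS
  have hSmeas : Measurable S := Finset.measurable_sum _ fun i _ => hV i
  have hES : ∫⁻ ω, S ω ∂μ = (n:ℝ≥0∞) * m := by
    rw [hS]
    rw [lintegral_finset_sum _ fun i _ => hV i]
    rw [Finset.sum_congr rfl fun i _ => (hid i).lintegral_eq]
    rw [Finset.sum_const, Finset.card_range, nsmul_eq_mul]
  rcases eq_or_lt_of_le hq1 with hq1' | hq1'
  · -- q = 1
    rw [← hq1']
    simp only [ENNReal.rpow_one]
    rw [hES]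
    calc (n:ℝ≥0∞) * m ≤ (n:ℝ≥0∞) * m + (n:ℝ≥0∞) * ∫⁻ ω, V 0 ω ∂μ :=
          le_add_right le_rfl
      _ ≤ 2 * ((n:ℝ≥0∞) * m + (n:ℝ≥0∞) * ∫⁻ ω, V 0 ω ∂μ) := by
          nth_rewrite 1 [← one_mul ((n:ℝ≥0∞) * m + _)]
          exact mul_le_mul_left one_le_two _
  · -- 1 < q
    have hstep := rosenthal_step V hV hind hid n q hq1'
    have hconc : ∫⁻ ω, S ω ^ (q - 1) ∂μ ≤ ((n:ℝ≥0∞) * m) ^ (q - 1) := by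
      rw [← hES]
      exact lintegral_rpow_le S hSmeas (q - 1) (by linarith) (by linarith)
    have hfuse : (n:ℝ≥0∞) * m * ((n:ℝ≥0∞) * m) ^ (q - 1) = ((n:ℝ≥0∞) * m) ^ q := by
      rw [self_mul_rpow _ _ (by linarith : (0:ℝ) < q - 1)]
      norm_num
    calc ∫⁻ ω, S ω ^ q ∂μ
        ≤ 2 ^ (q - 1) * ((n:ℝ≥0∞) * m * ∫⁻ ω, S ω ^ (q - 1) ∂μ
            + (n:ℝ≥0∞) * ∫⁻ ω, (V 0 ω) ^ q ∂μ) := hstep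
      _ ≤ 2 ^ (q - 1) * ((n:ℝ≥0∞) * m * (((n:ℝ≥0∞) * m) ^ (q - 1))
            + (n:ℝ≥0∞) * ∫⁻ ω, (V 0 ω) ^ q ∂μ) := by gcongr
      _ = 2 ^ (q - 1) * ((((n:ℝ≥0∞) * m) ^ q)
            + (n:ℝ≥0∞) * ∫⁻ ω, (V 0 ω) ^ q ∂μ) := by rw [hfuse]
      _ ≤ 2 ^ q * ((((n:ℝ≥0∞) * m) ^ q)
            + (n:ℝ≥0∞) * ∫⁻ ω, (V 0 ω) ^ q ∂μ) :=
          mul_le_mul_left (two_rpow_le (by linarith)) _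

end Rosenthal2
end St19

namespace St19
open MeasureTheory ProbabilityTheory Finset
open scoped ENNReal

lemma rosenthal_upper_aux (k : ℕ) : ∀ q : ℝ, 1 ≤ q → q ≤ (k:ℝ) + 1 →
    ∃ D : ℝ≥0∞, 1 ≤ D ∧ D ≠ ⊤ ∧
      ∀ (Ω : Type) [MeasurableSpace Ω] (μ : Measure Ω) [IsProbabilityMeasure μ]
        (V : ℕ → Ω → ℝ≥0∞), (∀ i, Measurable (V i)) →
        iIndepFun V μ →
        (∀ i, IdentDistrib (V i) (V 0) μ μ) → ∀ n : ℕ,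
        ∫⁻ ω, (∑ i ∈ range n, V i ω) ^ q ∂μ
          ≤ D * (((n:ℝ≥0∞) * ∫⁻ ω, V 0 ω ∂μ) ^ q
              + (n:ℝ≥0∞) * ∫⁻ ω, (V 0 ω) ^ q ∂μ) := by
  induction k with
  | zero =>
      intro q hq1 hq2
      refine ⟨2 ^ q, one_le_two_rpow (by linarith), two_rpow_ne_top (by linarith), ?_⟩
      intro Ω _ μ _ V hV hind hid n
      exact rosenthal_base V hV hind hid n q hq1 (by norm_num at hq2 ⊢; linarith)
  | succ k IH =>
      intro q hq1 hqk
      by_cases hq2 : q ≤ 2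
      · refine ⟨2 ^ q, one_le_two_rpow (by linarith), two_rpow_ne_top (by linarith), ?_⟩
        intro Ω _ μ _ V hV hind hid n
        exact rosenthal_base V hV hind hid n q hq1 hq2
      push_neg at hq2
      obtain ⟨D', hD'1, hD't, hbound'⟩ := IH (q - 1) (by linarith)
        (by push_cast at hqk ⊢; linarith)
      have hq0 : (0:ℝ) < q - 1 := by linarith
      refine ⟨2 ^ (q - 1) * (2 * D' + 1), ?_, ?_, ?_⟩
      · calc (1:ℝ≥0∞) = 1 * 1 := (one_mul 1).symm
          _ ≤ 2 ^ (q - 1) * (2 * D' + 1) :=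
              mul_le_mul' (one_le_two_rpow hq0.le) (le_add_left le_rfl)
      · exact ENNReal.mul_ne_top (two_rpow_ne_top hq0.le)
          (by
            refine ENNReal.add_ne_top.2 ⟨ENNReal.mul_ne_top ?_ hD't, ENNReal.one_ne_top⟩
            norm_num)
      intro Ω mΩ μ hμ V hV hind hid n
      set N : ℝ≥0∞ := (n : ℝ≥0∞) with hN
      set m : ℝ≥0∞ := ∫⁻ ω, V 0 ω ∂μ with hm
      set vq : ℝ≥0∞ := ∫⁻ ω, (V 0 ω) ^ q ∂μ with hvq
      by_cases hn : n = 0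
      · rw [lint_S_zero V hV hid n q (by linarith) (Or.inl hn)]
        exact zero_le
      by_cases hm0 : m = 0
      · rw [lint_S_zero V hV hid n q (by linarith) (Or.inr hm0)]
        exact zero_le
      have hN0 : N ≠ 0 := by
        rw [hN]; exact_mod_cast Nat.cast_ne_zero.2 hn
      have hNt : N ≠ ⊤ := ENNReal.natCast_ne_top n
      have hD : (1:ℝ≥0∞) ≤ 2 ^ (q - 1) * (2 * D' + 1) := by
        calc (1:ℝ≥0∞) = 1 * 1 := (one_mul 1).symm
          _ ≤ 2 ^ (q - 1) * (2 * D' + 1) :=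
              mul_le_mul' (one_le_two_rpow hq0.le) (le_add_left le_rfl)
      by_cases hmt : m = ⊤
      · have h1 : (N * m) ^ q = ⊤ := by
          rw [hmt, ENNReal.mul_top hN0, ENNReal.top_rpow_of_pos (by linarith)]
        calc ∫⁻ ω, (∑ i ∈ range n, V i ω) ^ q ∂μ ≤ ⊤ := le_top
          _ = (N * m) ^ q := h1.symm
          _ ≤ (N * m) ^ q + N * vq := le_add_right le_rfl
          _ ≤ 2 ^ (q - 1) * (2 * D' + 1) * ((N * m) ^ q + N * vq) := by
              nth_rewrite 1 [← one_mul ((N * m) ^ q + N * vq)]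
              exact mul_le_mul_left hD _
      by_cases hvt : vq = ⊤
      · have h1 : N * vq = ⊤ := by rw [hvt, ENNReal.mul_top hN0]
        calc ∫⁻ ω, (∑ i ∈ range n, V i ω) ^ q ∂μ ≤ ⊤ := le_top
          _ = N * vq := h1.symm
          _ ≤ (N * m) ^ q + N * vq := le_add_left le_rfl
          _ ≤ 2 ^ (q - 1) * (2 * D' + 1) * ((N * m) ^ q + N * vq) := by
              nth_rewrite 1 [← one_mul ((N * m) ^ q + N * vq)]
              exact mul_le_mul_left hD _
      -- main case
      set θ : ℝ := 1 / (q - 1) with hθ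
      have hθ0 : 0 < θ := by positivity
      have hθ1 : θ < 1 := by rw [hθ, div_lt_one (by linarith)]; linarith
      have hstep := rosenthal_step V hV hind hid n q (by linarith)
      have hIH := hbound' Ω μ V hV hind hid n
      have hinterp := lintegral_rpow_interp (μ := μ) (V 0) (hV 0) q hq2
      have hcross : N * m * (N * ∫⁻ ω, (V 0 ω) ^ (q - 1) ∂μ) ≤ (N * m) ^ q + N * vq := by
        have halg : ((N * m) ^ q) ^ ((1 + θ) / q) * (N * vq) ^ (1 - θ)
            = N * m * (N * (m ^ θ * vq ^ (1 - θ))) := by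
          have hqα : q * ((1 + θ) / q) = 1 + θ := by field_simp
          have e1 : N ^ (1 + θ) * N ^ (1 - θ) = N * N := by
            rw [rpow_fuse hN0 hNt]
            rw [show (1 + θ) + (1 - θ) = (2:ℝ) by ring]
            rw [show (2:ℝ) = ((2:ℕ):ℝ) by norm_num, ENNReal.rpow_natCast, sq]
          have e3 : m * m ^ θ = m ^ (1 + θ) := self_mul_rpow m θ hθ0
          calc ((N * m) ^ q) ^ ((1 + θ) / q) * (N * vq) ^ (1 - θ)
              = (N * m) ^ (1 + θ) * (N * vq) ^ (1 - θ) := by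
                rw [← ENNReal.rpow_mul, hqα]
            _ = (N ^ (1 + θ) * m ^ (1 + θ)) * (N ^ (1 - θ) * vq ^ (1 - θ)) := by
                rw [ENNReal.mul_rpow_of_nonneg _ _ (by linarith : (0:ℝ) ≤ 1 + θ),
                  ENNReal.mul_rpow_of_nonneg _ _ (by linarith : (0:ℝ) ≤ 1 - θ)]
            _ = (N ^ (1 + θ) * N ^ (1 - θ)) * m ^ (1 + θ) * vq ^ (1 - θ) := by ring
            _ = (N * N) * (m * m ^ θ) * vq ^ (1 - θ) := by rw [e1, e3]
            _ = N * m * (N * (m ^ θ * vq ^ (1 - θ))) := by ring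
        have hsum1 : (1 + θ) / q + (1 - θ) = 1 := by
          rw [hθ]; field_simp; ring
        calc N * m * (N * ∫⁻ ω, (V 0 ω) ^ (q - 1) ∂μ)
            ≤ N * m * (N * (m ^ θ * vq ^ (1 - θ))) := by gcongr
          _ = ((N * m) ^ q) ^ ((1 + θ) / q) * (N * vq) ^ (1 - θ) := halg.symm
          _ ≤ (N * m) ^ q + N * vq :=
              geom_le_add _ _ _ _ (by positivity) (by linarith) hsum1
      have hfuse : N * m * (N * m) ^ (q - 1) = (N * m) ^ q := by
        rw [self_mul_rpow _ _ hq0]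
        norm_num
      set X : ℝ≥0∞ := (N * m) ^ q with hX
      set Y : ℝ≥0∞ := N * vq with hY
      calc ∫⁻ ω, (∑ i ∈ range n, V i ω) ^ q ∂μ
          ≤ 2 ^ (q - 1) * (N * m * ∫⁻ ω, (∑ i ∈ range n, V i ω) ^ (q - 1) ∂μ + Y) := hstep
        _ ≤ 2 ^ (q - 1) * (N * m * (D' * ((N * m) ^ (q - 1)
              + N * ∫⁻ ω, (V 0 ω) ^ (q - 1) ∂μ)) + Y) := by gcongr
        _ = 2 ^ (q - 1) * (D' * (N * m * (N * m) ^ (q - 1))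
              + D' * (N * m * (N * ∫⁻ ω, (V 0 ω) ^ (q - 1) ∂μ)) + Y) := by ring
        _ = 2 ^ (q - 1) * (D' * X
              + D' * (N * m * (N * ∫⁻ ω, (V 0 ω) ^ (q - 1) ∂μ)) + Y) := by rw [hfuse]
        _ ≤ 2 ^ (q - 1) * (D' * X + D' * (X + Y) + Y) := by gcongr
        _ ≤ 2 ^ (q - 1) * (D' * (X + Y) + D' * (X + Y) + (X + Y)) := by
            gcongr
            · exact le_add_right le_rfl
            · exact le_add_left le_rfl
        _ = 2 ^ (q - 1) * (2 * D' + 1) * (X + Y) := by ring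

lemma rosenthal_upper (q : ℝ) (hq : 1 ≤ q) :
    ∃ D : ℝ≥0∞, 1 ≤ D ∧ D ≠ ⊤ ∧
      ∀ (Ω : Type) [MeasurableSpace Ω] (μ : Measure Ω) [IsProbabilityMeasure μ]
        (V : ℕ → Ω → ℝ≥0∞), (∀ i, Measurable (V i)) →
        iIndepFun V μ →
        (∀ i, IdentDistrib (V i) (V 0) μ μ) → ∀ n : ℕ,
        ∫⁻ ω, (∑ i ∈ range n, V i ω) ^ q ∂μ
          ≤ D * (((n:ℝ≥0∞) * ∫⁻ ω, V 0 ω ∂μ) ^ q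
              + (n:ℝ≥0∞) * ∫⁻ ω, (V 0 ω) ^ q ∂μ) :=
  rosenthal_upper_aux ⌈q⌉₊ q hq (by
    have := Nat.le_ceil q
    linarith)

lemma rosenthal_lower {Ω : Type} [MeasurableSpace Ω] {μ : Measure Ω} [IsProbabilityMeasure μ]
    (V : ℕ → Ω → ℝ≥0∞) (hV : ∀ i, Measurable (V i))
    (hid : ∀ i, IdentDistrib (V i) (V 0) μ μ) (n : ℕ) (q : ℝ) (hq : 1 ≤ q) :
    ((n:ℝ≥0∞) * ∫⁻ ω, V 0 ω ∂μ) ^ q + (n:ℝ≥0∞) * ∫⁻ ω, (V 0 ω) ^ q ∂μ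
      ≤ 2 * ∫⁻ ω, (∑ i ∈ range n, V i ω) ^ q ∂μ := by
  have hSmeas : Measurable fun ω => ∑ i ∈ range n, V i ω :=
    Finset.measurable_sum _ fun i _ => hV i
  have hES : ∫⁻ ω, (∑ i ∈ range n, V i ω) ∂μ = (n:ℝ≥0∞) * ∫⁻ ω, V 0 ω ∂μ := by
    rw [lintegral_finset_sum _ fun i _ => hV i,
      Finset.sum_congr rfl fun i _ => (hid i).lintegral_eq,
      Finset.sum_const, Finset.card_range, nsmul_eq_mul]
  have h1 : ((n:ℝ≥0∞) * ∫⁻ ω, V 0 ω ∂μ) ^ q ≤ ∫⁻ ω, (∑ i ∈ range n, V i ω) ^ q ∂μ := by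
    rw [← hES]
    exact le_lintegral_rpow _ hSmeas q hq
  have h2 : (n:ℝ≥0∞) * ∫⁻ ω, (V 0 ω) ^ q ∂μ ≤ ∫⁻ ω, (∑ i ∈ range n, V i ω) ^ q ∂μ := by
    have hVq : ∀ i, ∫⁻ ω, (V i ω) ^ q ∂μ = ∫⁻ ω, (V 0 ω) ^ q ∂μ := fun i =>
      ((hid i).comp (u := fun x : ℝ≥0∞ => x ^ q) (measurable_id'.pow_const _)).lintegral_eq
    calc (n:ℝ≥0∞) * ∫⁻ ω, (V 0 ω) ^ q ∂μ
        = ∑ i ∈ range n, ∫⁻ ω, (V i ω) ^ q ∂μ := by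
          rw [Finset.sum_congr rfl fun i _ => hVq i, Finset.sum_const,
            Finset.card_range, nsmul_eq_mul]
      _ = ∫⁻ ω, ∑ i ∈ range n, (V i ω) ^ q ∂μ :=
          (lintegral_finset_sum _ fun i _ => (hV i).pow_const _).symm
      _ ≤ ∫⁻ ω, (∑ i ∈ range n, V i ω) ^ q ∂μ :=
          lintegral_mono fun ω => sum_rpow_le_rpow_sum _ _ q hq
  calc ((n:ℝ≥0∞) * ∫⁻ ω, V 0 ω ∂μ) ^ q + (n:ℝ≥0∞) * ∫⁻ ω, (V 0 ω) ^ q ∂μ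
      ≤ ∫⁻ ω, (∑ i ∈ range n, V i ω) ^ q ∂μ + ∫⁻ ω, (∑ i ∈ range n, V i ω) ^ q ∂μ :=
        add_le_add h1 h2
    _ = 2 * ∫⁻ ω, (∑ i ∈ range n, V i ω) ^ q ∂μ := (two_mul _).symm

end St19

namespace St19
open MeasureTheory ProbabilityTheory Finset
open scoped ENNReal

section lpFacts
variable {p : ℝ} [Fact (1 ≤ ENNReal.ofReal p)]

lemma eval_measurable (hp : 0 < p)
    [MeasurableSpace (lp (fun _ : ℕ => ℝ) (ENNReal.ofReal p))]
    [BorelSpace (lp (fun _ : ℕ => ℝ) (ENNReal.ofReal p))] (j : ℕ) :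
    Measurable fun x : lp (fun _ : ℕ => ℝ) (ENNReal.ofReal p) => (x : ℕ → ℝ) j := by
  have hne : (ENNReal.ofReal p) ≠ 0 := (ENNReal.ofReal_pos.2 hp).ne'
  have hlip : LipschitzWith 1 fun x : lp (fun _ : ℕ => ℝ) (ENNReal.ofReal p) =>
      (x : ℕ → ℝ) j := by
    refine LipschitzWith.of_dist_le_mul fun f g => ?_
    rw [Real.dist_eq, NNReal.coe_one, one_mul, dist_eq_norm]
    have h := lp.norm_apply_le_norm hne (f - g) j
    have h2 : (((f - g : lp _ _) : ℕ → ℝ) j) = (f : ℕ → ℝ) j - (g : ℕ → ℝ) j := by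
      rw [lp.coeFn_sub]; rfl
    rw [h2] at h
    simpa [Real.norm_eq_abs] using h
  exact hlip.continuous.measurable

lemma norm_ofReal_eq_tsum (hp : 0 < p) (f : lp (fun _ : ℕ => ℝ) (ENNReal.ofReal p)) :
    ENNReal.ofReal (‖f‖ ^ p) = ∑' j, ENNReal.ofReal (|(f : ℕ → ℝ) j| ^ p) := by
  have htr : (ENNReal.ofReal p).toReal = p := ENNReal.toReal_ofReal hp.le
  have h1 : ‖f‖ ^ p = ∑' j, ‖(f : ℕ → ℝ) j‖ ^ p := by
    have := lp.norm_rpow_eq_tsum (by rw [htr]; exact hp) f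
    rwa [htr] at this
  have hsummable : Summable fun j => ‖(f : ℕ → ℝ) j‖ ^ p := by
    have := (lp.memℓp f).summable (by rw [htr]; exact hp)
    rwa [htr] at this
  rw [h1, ENNReal.ofReal_tsum_of_nonneg (fun j => Real.rpow_nonneg (norm_nonneg _) p)
    hsummable]
  exact tsum_congr fun j => by rw [Real.norm_eq_abs]

end lpFacts
end St19

namespace St19
open MeasureTheory ProbabilityTheory Finset
open scoped ENNReal

variable {Ω : Type} [MeasurableSpace Ω] {μ : Measure Ω} [IsProbabilityMeasure μ]

lemma coord_khintchine (p : ℝ) (hp : 2 ≤ p)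
    (Y : ℕ → Ω → ℝ) (hY : ∀ i, Measurable (Y i))
    (hind : iIndepFun Y μ)
    (hsym : ∀ i, IdentDistrib (Y i) (fun ω => -(Y i ω)) μ μ) (n : ℕ) :
    (∫⁻ ω, ENNReal.ofReal ((∑ i ∈ range n, (Y i ω) ^ 2) ^ (p / 2)) ∂μ)
        ≤ (∫⁻ ω, ENNReal.ofReal (|∑ i ∈ range n, Y i ω| ^ p) ∂μ) ∧
      (∫⁻ ω, ENNReal.ofReal (|∑ i ∈ range n, Y i ω| ^ p) ∂μ)
        ≤ ENNReal.ofReal (Bconst p)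
          * ∫⁻ ω, ENNReal.ofReal ((∑ i ∈ range n, (Y i ω) ^ 2) ^ (p / 2)) ∂μ := by
  have hp0 : (0:ℝ) < p := by linarith
  set G : ℝ → ℝ≥0∞ := fun t => ENNReal.ofReal (|t| ^ p) with hG
  have hGalt : G = fun t => (ENNReal.ofReal |t|) ^ p :=
    funext fun t => (ENNReal.ofReal_rpow_of_nonneg (abs_nonneg t) hp0.le).symm
  have hGmeas : Measurable G := by
    rw [hGalt]
    exact (measurable_abs.ennreal_ofReal).pow_const p
  have hsum_meas : Measurable fun ω => ∑ i ∈ range n, (Y i ω) ^ 2 :=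
    Finset.measurable_sum _ fun i _ => (hY i).pow_const 2
  have hsum_nonneg : ∀ ω, (0:ℝ) ≤ ∑ i ∈ range n, (Y i ω) ^ 2 :=
    fun ω => Finset.sum_nonneg fun i _ => sq_nonneg _
  have hQint_meas : Measurable fun ω =>
      ENNReal.ofReal ((∑ i ∈ range n, (Y i ω) ^ 2) ^ (p / 2)) := by
    have heq : (fun ω => ENNReal.ofReal ((∑ i ∈ range n, (Y i ω) ^ 2) ^ (p / 2)))
        = fun ω => (ENNReal.ofReal (∑ i ∈ range n, (Y i ω) ^ 2)) ^ (p / 2) :=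
      funext fun ω => (ENNReal.ofReal_rpow_of_nonneg (hsum_nonneg ω) (by linarith)).symm
    rw [heq]
    exact (hsum_meas.ennreal_ofReal).pow_const _
  -- the sign functions
  set ε : (Fin n → Bool) → ℕ → ℝ :=
    fun σ i => if h : i < n then sg (σ ⟨i, h⟩) else 1 with hε
  have hεpm : ∀ σ i, ε σ i = 1 ∨ ε σ i = -1 := by
    intro σ i
    simp only [hε]
    by_cases h : i < n
    · rw [dif_pos h]
      cases σ ⟨i, h⟩ <;> simp [sg]
    · rw [dif_neg h]; left; rfl
  have hfin : ∀ (σ : Fin n → Bool) (ω : Ω),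
      ∑ i ∈ range n, ε σ i * Y i ω = Zs (fun i : Fin n => Y i.val ω) σ := by
    intro σ ω
    rw [Zs, ← Fin.sum_univ_eq_sum_range (fun i => ε σ i * Y i ω) n]
    refine Finset.sum_congr rfl fun i _ => ?_
    simp only [hε, i.isLt, dif_pos, Fin.eta]
  have hσint : ∀ σ : Fin n → Bool,
      ∫⁻ ω, G (∑ i ∈ range n, ε σ i * Y i ω) ∂μ
        = ∫⁻ ω, G (∑ i ∈ range n, Y i ω) ∂μ :=
    fun σ => lintegral_signed_sum_eq Y hY hind hsym (ε σ) (hεpm σ) n G hGmeas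
  have hinner_meas : ∀ σ : Fin n → Bool,
      Measurable fun ω => G (∑ i ∈ range n, ε σ i * Y i ω) :=
    fun σ => hGmeas.comp (Finset.measurable_sum _ fun i _ => (hY i).const_mul _)
  have h2n0 : ((2:ℝ≥0∞) ^ n) ≠ 0 := pow_ne_zero n two_ne_zero
  have h2nt : ((2:ℝ≥0∞) ^ n) ≠ ⊤ := ENNReal.pow_ne_top ENNReal.ofNat_ne_top
  have hofReal2n : ENNReal.ofReal ((2:ℝ) ^ n) = (2:ℝ≥0∞) ^ n := by
    rw [ENNReal.ofReal_pow (by norm_num : (0:ℝ) ≤ 2)]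
    norm_num
  -- key identity
  have hkey : (2:ℝ≥0∞) ^ n * ∫⁻ ω, G (∑ i ∈ range n, Y i ω) ∂μ
      = ∫⁻ ω, ∑ σ : Fin n → Bool, G (∑ i ∈ range n, ε σ i * Y i ω) ∂μ := by
    rw [lintegral_finset_sum _ fun σ _ => hinner_meas σ]
    rw [Finset.sum_congr rfl fun σ _ => hσint σ]
    rw [Finset.sum_const, card_pi_bool, nsmul_eq_mul]
    push_cast
    ring
  -- pointwise rewrite of inner sum
  have hptsum : ∀ ω, ∑ σ : Fin n → Bool, G (∑ i ∈ range n, ε σ i * Y i ω)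
      = ENNReal.ofReal (∑ σ : Fin n → Bool, |Zs (fun i : Fin n => Y i.val ω) σ| ^ p) := by
    intro ω
    rw [ENNReal.ofReal_sum_of_nonneg fun σ _ => Real.rpow_nonneg (abs_nonneg _) p]
    exact Finset.sum_congr rfl fun σ _ => by rw [hfin σ ω]
  have hsq_eq : ∀ ω, ∑ i : Fin n, (Y i.val ω) ^ 2 = ∑ i ∈ range n, (Y i ω) ^ 2 :=
    fun ω => Fin.sum_univ_eq_sum_range (fun i => (Y i ω) ^ 2) n
  -- pointwise bounds
  have hlow : ∀ ω, (2:ℝ≥0∞) ^ n * ENNReal.ofReal ((∑ i ∈ range n, (Y i ω) ^ 2) ^ (p / 2))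
      ≤ ∑ σ : Fin n → Bool, G (∑ i ∈ range n, ε σ i * Y i ω) := by
    intro ω
    rw [hptsum ω]
    have h := khintchine_lower hp (fun i : Fin n => Y i.val ω)
    rw [hsq_eq ω] at h
    calc (2:ℝ≥0∞) ^ n * ENNReal.ofReal ((∑ i ∈ range n, (Y i ω) ^ 2) ^ (p / 2))
        = ENNReal.ofReal ((2:ℝ) ^ n * (∑ i ∈ range n, (Y i ω) ^ 2) ^ (p / 2)) := by
          rw [ENNReal.ofReal_mul (by positivity), hofReal2n]
      _ ≤ _ := ENNReal.ofReal_le_ofReal h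
  have hup : ∀ ω, ∑ σ : Fin n → Bool, G (∑ i ∈ range n, ε σ i * Y i ω)
      ≤ (2:ℝ≥0∞) ^ n * (ENNReal.ofReal (Bconst p)
          * ENNReal.ofReal ((∑ i ∈ range n, (Y i ω) ^ 2) ^ (p / 2))) := by
    intro ω
    rw [hptsum ω]
    have h := khintchine_upper hp (fun i : Fin n => Y i.val ω)
    rw [hsq_eq ω] at h
    calc ENNReal.ofReal (∑ σ : Fin n → Bool, |Zs (fun i : Fin n => Y i.val ω) σ| ^ p)
        ≤ ENNReal.ofReal ((2:ℝ) ^ n * Bconst p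
            * (∑ i ∈ range n, (Y i ω) ^ 2) ^ (p / 2)) := ENNReal.ofReal_le_ofReal h
      _ = (2:ℝ≥0∞) ^ n * (ENNReal.ofReal (Bconst p)
            * ENNReal.ofReal ((∑ i ∈ range n, (Y i ω) ^ 2) ^ (p / 2))) := by
          rw [mul_assoc, ENNReal.ofReal_mul (by positivity), hofReal2n,
            ENNReal.ofReal_mul (by linarith [one_le_Bconst p])]
  constructor
  · -- lower bound
    have hchain : (2:ℝ≥0∞) ^ n * ∫⁻ ω,
        ENNReal.ofReal ((∑ i ∈ range n, (Y i ω) ^ 2) ^ (p / 2)) ∂μ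
        ≤ (2:ℝ≥0∞) ^ n * ∫⁻ ω, G (∑ i ∈ range n, Y i ω) ∂μ := by
      rw [← lintegral_const_mul _ hQint_meas, hkey]
      exact lintegral_mono hlow
    exact (ENNReal.mul_le_mul_iff_right h2n0 h2nt).1 hchain
  · -- upper bound
    have hchain : (2:ℝ≥0∞) ^ n * ∫⁻ ω, G (∑ i ∈ range n, Y i ω) ∂μ
        ≤ (2:ℝ≥0∞) ^ n * (ENNReal.ofReal (Bconst p)
            * ∫⁻ ω, ENNReal.ofReal ((∑ i ∈ range n, (Y i ω) ^ 2) ^ (p / 2)) ∂μ) := by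
      rw [hkey]
      calc ∫⁻ ω, ∑ σ : Fin n → Bool, G (∑ i ∈ range n, ε σ i * Y i ω) ∂μ
          ≤ ∫⁻ ω, (2:ℝ≥0∞) ^ n * (ENNReal.ofReal (Bconst p)
              * ENNReal.ofReal ((∑ i ∈ range n, (Y i ω) ^ 2) ^ (p / 2))) ∂μ :=
            lintegral_mono hup
        _ = (2:ℝ≥0∞) ^ n * (ENNReal.ofReal (Bconst p)
              * ∫⁻ ω, ENNReal.ofReal ((∑ i ∈ range n, (Y i ω) ^ 2) ^ (p / 2)) ∂μ) := by
            rw [lintegral_const_mul _ (hQint_meas.const_mul _),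
              lintegral_const_mul _ hQint_meas]
    exact (ENNReal.mul_le_mul_iff_right h2n0 h2nt).1 hchain

end St19

end St19Dev

/-- in `ℓ^p` with `2 ≤ p < ∞`, for i.i.d. symmetric steps `Xᵢ`
with coordinates `X_{i,j}`, there are constants depending only on `p` such that
`E‖Sₙ‖^p ≍ ∑_j E(∑_{i<n} X_{i,j}²)^{p/2}` and (via Rosenthal's inequality)
`E‖Sₙ‖^p ≍ n^{p/2} ∑_j (E X_{0,j}²)^{p/2} + n ∑_j E|X_{0,j}|^p`
(all quantities possibly infinite, interpreted in `ℝ≥0∞`). -/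
theorem stmt19 (p : ℝ) (hp : 2 ≤ p) [Fact (1 ≤ ENNReal.ofReal p)]
    [MeasurableSpace (lp (fun _ : ℕ => ℝ) (ENNReal.ofReal p))]
    [BorelSpace (lp (fun _ : ℕ => ℝ) (ENNReal.ofReal p))] :
    ∃ c₁ C₁ c₂ C₂ : ℝ≥0∞, 0 < c₁ ∧ C₁ < ∞ ∧ 0 < c₂ ∧ C₂ < ∞ ∧
      ∀ (Ω : Type) [MeasureSpace Ω] [IsProbabilityMeasure (ℙ : Measure Ω)]
        (X : ℕ → Ω → lp (fun _ : ℕ => ℝ) (ENNReal.ofReal p)),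
        (∀ i, Measurable (X i)) →
        iIndepFun X ℙ →
        (∀ i, IdentDistrib (X i) (X 0) ℙ ℙ) →
        (∀ i, IdentDistrib (X i) (fun ω => -(X i ω)) ℙ ℙ) →
        ∀ n : ℕ,
          (c₁ * ∑' j : ℕ, ∫⁻ ω, ENNReal.ofReal
                ((∑ i ∈ Finset.range n, ((X i ω : ℕ → ℝ) j) ^ 2) ^ (p / 2))
              ≤ (∫⁻ ω, ENNReal.ofReal (‖∑ i ∈ Finset.range n, X i ω‖ ^ p)) ∧
            (∫⁻ ω, ENNReal.ofReal (‖∑ i ∈ Finset.range n, X i ω‖ ^ p))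
              ≤ C₁ * ∑' j : ℕ, ∫⁻ ω, ENNReal.ofReal
                ((∑ i ∈ Finset.range n, ((X i ω : ℕ → ℝ) j) ^ 2) ^ (p / 2)))
          ∧
          (c₂ * ((n : ℝ≥0∞) ^ (p / 2) *
                ∑' j : ℕ, (∫⁻ ω, ENNReal.ofReal (((X 0 ω : ℕ → ℝ) j) ^ 2)) ^ (p / 2)
              + (n : ℝ≥0∞) *
                ∑' j : ℕ, ∫⁻ ω, ENNReal.ofReal (|(X 0 ω : ℕ → ℝ) j| ^ p))
              ≤ (∫⁻ ω, ENNReal.ofReal (‖∑ i ∈ Finset.range n, X i ω‖ ^ p)) ∧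
            (∫⁻ ω, ENNReal.ofReal (‖∑ i ∈ Finset.range n, X i ω‖ ^ p))
              ≤ C₂ * ((n : ℝ≥0∞) ^ (p / 2) *
                ∑' j : ℕ, (∫⁻ ω, ENNReal.ofReal (((X 0 ω : ℕ → ℝ) j) ^ 2)) ^ (p / 2)
              + (n : ℝ≥0∞) *
                ∑' j : ℕ, ∫⁻ ω, ENNReal.ofReal (|(X 0 ω : ℕ → ℝ) j| ^ p))) := by
  classical
  have hp0 : (0:ℝ) < p := by linarith
  have hq1 : (1:ℝ) ≤ p / 2 := by linarith
  have hq0 : (0:ℝ) ≤ p / 2 := by linarith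
  obtain ⟨D, hD1, hDt, hDbound⟩ := St19.rosenthal_upper (p / 2) hq1
  set Bp : ℝ≥0∞ := ENNReal.ofReal (St19.Bconst p) with hBp
  refine ⟨1, Bp, 2⁻¹, Bp * D, one_pos, ENNReal.ofReal_lt_top, ?_, ?_, ?_⟩
  · simp
  · exact ENNReal.mul_lt_top ENNReal.ofReal_lt_top (lt_top_iff_ne_top.2 hDt)
  intro Ω mΩ hP X hXm hXi hXid hXsym n
  -- coordinate processes
  have hev : ∀ j : ℕ, Measurable fun x : lp (fun _ : ℕ => ℝ) (ENNReal.ofReal p) =>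
      (x : ℕ → ℝ) j := fun j => St19.eval_measurable hp0 j
  have hYmeas : ∀ j i, Measurable fun ω => (X i ω : ℕ → ℝ) j :=
    fun j i => (hev j).comp (hXm i)
  have hYind : ∀ j, iIndepFun
      (fun i ω => (X i ω : ℕ → ℝ) j) ℙ :=
    fun j => hXi.comp (fun _i x => (x : ℕ → ℝ) j) fun _i => hev j
  have hYid : ∀ j i, IdentDistrib (fun ω => (X i ω : ℕ → ℝ) j)
      (fun ω => (X 0 ω : ℕ → ℝ) j) ℙ ℙ :=
    fun j i => (hXid i).comp (hev j)
  have hYsym : ∀ j i, IdentDistrib (fun ω => (X i ω : ℕ → ℝ) j)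
      (fun ω => -((X i ω : ℕ → ℝ) j)) ℙ ℙ := by
    intro j i
    have h := (hXsym i).comp (hev j)
    have heq : ((fun x : lp (fun _ : ℕ => ℝ) (ENNReal.ofReal p) => (x : ℕ → ℝ) j)
        ∘ fun ω => -(X i ω)) = fun ω => -((X i ω : ℕ → ℝ) j) := by
      funext ω
      simp only [Function.comp_apply]
      rw [lp.coeFn_neg]
      rfl
    rwa [heq] at h
  -- coordinates of the sum
  have hcoord : ∀ (ω : Ω) (j : ℕ), ((∑ i ∈ Finset.range n, X i ω : lp _ _) : ℕ → ℝ) j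
      = ∑ i ∈ Finset.range n, (X i ω : ℕ → ℝ) j := by
    intro ω j
    rw [lp.coeFn_sum]
    exact Finset.sum_apply j _ _
  -- measurability of coordinate integrands
  have hTmeas : ∀ j, Measurable fun ω => ∑ i ∈ Finset.range n, (X i ω : ℕ → ℝ) j :=
    fun j => Finset.measurable_sum _ fun i _ => hYmeas j i
  have hImeas : ∀ j, Measurable fun ω =>
      ENNReal.ofReal (|∑ i ∈ Finset.range n, (X i ω : ℕ → ℝ) j| ^ p) := by
    intro j
    have heq : (fun ω => ENNReal.ofReal (|∑ i ∈ Finset.range n, (X i ω : ℕ → ℝ) j| ^ p))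
        = fun ω => (ENNReal.ofReal |∑ i ∈ Finset.range n, (X i ω : ℕ → ℝ) j|) ^ p :=
      funext fun ω => (ENNReal.ofReal_rpow_of_nonneg (abs_nonneg _) hp0.le).symm
    rw [heq]
    exact (((hTmeas j).abs).ennreal_ofReal).pow_const p
  -- expansion of the norm
  have hEnorm : (∫⁻ ω, ENNReal.ofReal (‖∑ i ∈ Finset.range n, X i ω‖ ^ p))
      = ∑' j : ℕ, ∫⁻ ω, ENNReal.ofReal
          (|∑ i ∈ Finset.range n, (X i ω : ℕ → ℝ) j| ^ p) := by
    have hpt : ∀ ω, ENNReal.ofReal (‖∑ i ∈ Finset.range n, X i ω‖ ^ p)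
        = ∑' j : ℕ, ENNReal.ofReal
            (|∑ i ∈ Finset.range n, (X i ω : ℕ → ℝ) j| ^ p) := by
      intro ω
      rw [St19.norm_ofReal_eq_tsum hp0 (∑ i ∈ Finset.range n, X i ω)]
      exact tsum_congr fun j => by rw [hcoord ω j]
    rw [lintegral_congr hpt]
    exact lintegral_tsum fun j => (hImeas j).aemeasurable
  -- Khintchine per coordinate
  have hKh := fun j : ℕ => St19.coord_khintchine p hp (fun i ω => (X i ω : ℕ → ℝ) j)
    (hYmeas j) (hYind j) (hYsym j) n
  -- Rosenthal per coordinate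
  have hVmeas : ∀ j i, Measurable fun ω => ENNReal.ofReal (((X i ω : ℕ → ℝ) j) ^ 2) :=
    fun j i => ((hYmeas j i).pow_const 2).ennreal_ofReal
  have hVind : ∀ j, iIndepFun
      (fun i ω => ENNReal.ofReal (((X i ω : ℕ → ℝ) j) ^ 2)) ℙ :=
    fun j => hXi.comp (fun _i x => ENNReal.ofReal (((x : ℕ → ℝ) j) ^ 2))
      fun _i => ((hev j).pow_const 2).ennreal_ofReal
  have hVid : ∀ j i, IdentDistrib (fun ω => ENNReal.ofReal (((X i ω : ℕ → ℝ) j) ^ 2))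
      (fun ω => ENNReal.ofReal (((X 0 ω : ℕ → ℝ) j) ^ 2)) ℙ ℙ :=
    fun j i => (hXid i).comp (((hev j).pow_const 2).ennreal_ofReal)
  -- identification of the square-function integral
  have hQR : ∀ j, (∫⁻ ω, ENNReal.ofReal
        ((∑ i ∈ Finset.range n, ((X i ω : ℕ → ℝ) j) ^ 2) ^ (p / 2)))
      = ∫⁻ ω, (∑ i ∈ Finset.range n,
          ENNReal.ofReal (((X i ω : ℕ → ℝ) j) ^ 2)) ^ (p / 2) := by
    intro j
    refine lintegral_congr fun ω => ?_
    rw [← ENNReal.ofReal_sum_of_nonneg fun i _ => sq_nonneg _,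
      ENNReal.ofReal_rpow_of_nonneg (Finset.sum_nonneg fun i _ => sq_nonneg _) hq0]
  have hvq : ∀ j, (∫⁻ ω, (ENNReal.ofReal (((X 0 ω : ℕ → ℝ) j) ^ 2)) ^ (p / 2))
      = ∫⁻ ω, ENNReal.ofReal (|(X 0 ω : ℕ → ℝ) j| ^ p) := by
    intro j
    refine lintegral_congr fun ω => ?_
    rw [ENNReal.ofReal_rpow_of_nonneg (sq_nonneg _) hq0,
      St19.sq_rpow_half p hp0.le]
  have hros_up : ∀ j, (∫⁻ ω, (∑ i ∈ Finset.range n,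
        ENNReal.ofReal (((X i ω : ℕ → ℝ) j) ^ 2)) ^ (p / 2))
      ≤ D * ((n : ℝ≥0∞) ^ (p / 2)
            * (∫⁻ ω, ENNReal.ofReal (((X 0 ω : ℕ → ℝ) j) ^ 2)) ^ (p / 2)
          + (n : ℝ≥0∞) * ∫⁻ ω, ENNReal.ofReal (|(X 0 ω : ℕ → ℝ) j| ^ p)) := by
    intro j
    have h := hDbound Ω ℙ (fun i ω => ENNReal.ofReal (((X i ω : ℕ → ℝ) j) ^ 2))
      (hVmeas j) (hVind j) (hVid j) n
    rwa [ENNReal.mul_rpow_of_nonneg _ _ hq0, hvq j] at h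
  have hros_low : ∀ j, (n : ℝ≥0∞) ^ (p / 2)
        * (∫⁻ ω, ENNReal.ofReal (((X 0 ω : ℕ → ℝ) j) ^ 2)) ^ (p / 2)
      + (n : ℝ≥0∞) * ∫⁻ ω, ENNReal.ofReal (|(X 0 ω : ℕ → ℝ) j| ^ p)
      ≤ 2 * ∫⁻ ω, (∑ i ∈ Finset.range n,
          ENNReal.ofReal (((X i ω : ℕ → ℝ) j) ^ 2)) ^ (p / 2) := by
    intro j
    have h := St19.rosenthal_lower (μ := (ℙ : Measure Ω))
      (fun i ω => ENNReal.ofReal (((X i ω : ℕ → ℝ) j) ^ 2))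
      (hVmeas j) (hVid j) n (p / 2) hq1
    rwa [ENNReal.mul_rpow_of_nonneg _ _ hq0, hvq j] at h
  constructor
  · -- Part 1 (Khintchine)
    constructor
    · rw [hEnorm, one_mul]
      exact ENNReal.tsum_le_tsum fun j => (hKh j).1
    · rw [hEnorm]
      calc (∑' j : ℕ, ∫⁻ ω, ENNReal.ofReal
              (|∑ i ∈ Finset.range n, (X i ω : ℕ → ℝ) j| ^ p))
          ≤ ∑' j : ℕ, Bp * ∫⁻ ω, ENNReal.ofReal
              ((∑ i ∈ Finset.range n, ((X i ω : ℕ → ℝ) j) ^ 2) ^ (p / 2)) :=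
            ENNReal.tsum_le_tsum fun j => (hKh j).2
        _ = Bp * ∑' j : ℕ, ∫⁻ ω, ENNReal.ofReal
              ((∑ i ∈ Finset.range n, ((X i ω : ℕ → ℝ) j) ^ 2) ^ (p / 2)) :=
            ENNReal.tsum_mul_left
  · -- Part 2 (Rosenthal)
    constructor
    · -- lower
      have hsum : (n : ℝ≥0∞) ^ (p / 2) *
            (∑' j : ℕ, (∫⁻ ω, ENNReal.ofReal (((X 0 ω : ℕ → ℝ) j) ^ 2)) ^ (p / 2))
          + (n : ℝ≥0∞) *
            ∑' j : ℕ, ∫⁻ ω, ENNReal.ofReal (|(X 0 ω : ℕ → ℝ) j| ^ p)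
          ≤ 2 * ∑' j : ℕ, ∫⁻ ω, ENNReal.ofReal
              ((∑ i ∈ Finset.range n, ((X i ω : ℕ → ℝ) j) ^ 2) ^ (p / 2)) := by
        calc (n : ℝ≥0∞) ^ (p / 2) *
              (∑' j : ℕ, (∫⁻ ω, ENNReal.ofReal (((X 0 ω : ℕ → ℝ) j) ^ 2)) ^ (p / 2))
            + (n : ℝ≥0∞) *
              ∑' j : ℕ, ∫⁻ ω, ENNReal.ofReal (|(X 0 ω : ℕ → ℝ) j| ^ p)
            = ∑' j : ℕ, ((n : ℝ≥0∞) ^ (p / 2)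
                * (∫⁻ ω, ENNReal.ofReal (((X 0 ω : ℕ → ℝ) j) ^ 2)) ^ (p / 2)
              + (n : ℝ≥0∞) * ∫⁻ ω, ENNReal.ofReal (|(X 0 ω : ℕ → ℝ) j| ^ p)) := by
              rw [ENNReal.tsum_add, ENNReal.tsum_mul_left, ENNReal.tsum_mul_left]
          _ ≤ ∑' j : ℕ, 2 * ∫⁻ ω, (∑ i ∈ Finset.range n,
                ENNReal.ofReal (((X i ω : ℕ → ℝ) j) ^ 2)) ^ (p / 2) :=
              ENNReal.tsum_le_tsum fun j => hros_low j
          _ = 2 * ∑' j : ℕ, ∫⁻ ω, ENNReal.ofReal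
                ((∑ i ∈ Finset.range n, ((X i ω : ℕ → ℝ) j) ^ 2) ^ (p / 2)) := by
              rw [ENNReal.tsum_mul_left]
              congr 1
              exact tsum_congr fun j => (hQR j).symm
      rw [hEnorm]
      calc 2⁻¹ * ((n : ℝ≥0∞) ^ (p / 2) *
              (∑' j : ℕ, (∫⁻ ω, ENNReal.ofReal (((X 0 ω : ℕ → ℝ) j) ^ 2)) ^ (p / 2))
            + (n : ℝ≥0∞) *
              ∑' j : ℕ, ∫⁻ ω, ENNReal.ofReal (|(X 0 ω : ℕ → ℝ) j| ^ p))
          ≤ 2⁻¹ * (2 * ∑' j : ℕ, ∫⁻ ω, ENNReal.ofReal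
              ((∑ i ∈ Finset.range n, ((X i ω : ℕ → ℝ) j) ^ 2) ^ (p / 2))) :=
            mul_le_mul_right hsum _
        _ = ∑' j : ℕ, ∫⁻ ω, ENNReal.ofReal
              ((∑ i ∈ Finset.range n, ((X i ω : ℕ → ℝ) j) ^ 2) ^ (p / 2)) := by
            rw [← mul_assoc, ENNReal.inv_mul_cancel two_ne_zero ENNReal.ofNat_ne_top,
              one_mul]
        _ ≤ ∑' j : ℕ, ∫⁻ ω, ENNReal.ofReal
              (|∑ i ∈ Finset.range n, (X i ω : ℕ → ℝ) j| ^ p) :=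
            ENNReal.tsum_le_tsum fun j => (hKh j).1
    · -- upper
      rw [hEnorm]
      calc (∑' j : ℕ, ∫⁻ ω, ENNReal.ofReal
              (|∑ i ∈ Finset.range n, (X i ω : ℕ → ℝ) j| ^ p))
          ≤ ∑' j : ℕ, Bp * ∫⁻ ω, ENNReal.ofReal
              ((∑ i ∈ Finset.range n, ((X i ω : ℕ → ℝ) j) ^ 2) ^ (p / 2)) :=
            ENNReal.tsum_le_tsum fun j => (hKh j).2
        _ ≤ ∑' j : ℕ, Bp * (D * ((n : ℝ≥0∞) ^ (p / 2)
              * (∫⁻ ω, ENNReal.ofReal (((X 0 ω : ℕ → ℝ) j) ^ 2)) ^ (p / 2)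
            + (n : ℝ≥0∞) * ∫⁻ ω, ENNReal.ofReal (|(X 0 ω : ℕ → ℝ) j| ^ p))) := by
            refine ENNReal.tsum_le_tsum fun j => mul_le_mul_right ?_ Bp
            rw [hQR j]
            exact hros_up j
        _ = Bp * D * ((n : ℝ≥0∞) ^ (p / 2) *
              ∑' j : ℕ, (∫⁻ ω, ENNReal.ofReal (((X 0 ω : ℕ → ℝ) j) ^ 2)) ^ (p / 2)
            + (n : ℝ≥0∞) *
              ∑' j : ℕ, ∫⁻ ω, ENNReal.ofReal (|(X 0 ω : ℕ → ℝ) j| ^ p)) := by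
            rw [ENNReal.tsum_mul_left (a := Bp)]
            rw [ENNReal.tsum_mul_left (a := D)]
            rw [ENNReal.tsum_add, ENNReal.tsum_mul_left, ENNReal.tsum_mul_left,
              mul_assoc]
end
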